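/- arXiv:0901.4628 — 9 statements merged into one kernel-verified Lean document; each statement's English description precedes it below -/
import Mathlib

section
/- As n → ∞, s_n^{−2} Σ_{i=1}^n Z_i² converges to 1 in probability; that is, for every ε > 0, P(| s_n^{−2} Σ_{i=1}^n Z_i² − 1 | ≥ ε) → 0. -/
open MeasureTheory ProbabilityTheory Filter
open scoped Classical

lemma raikov_key
    {Ω : Type*} [MeasurableSpace Ω] (P : Measure Ω) [IsProbabilityMeasure P]
    (Z : ℕ → Ω → ℝ) (σ2 : ℕ → ℝ)
    (hmeas : ∀ i, Measurable (Z i))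
    (hindep : iIndepFun Z P)
    (hL2 : ∀ i, MemLp (Z i) 2 P)
    (hvar : ∀ i, ∫ ω, (Z i ω) ^ 2 ∂P = σ2 i)
    (n : ℕ) (ε δ : ℝ) (hε : 0 < ε) (hδ : 0 < δ)
    (hspos : 0 < ∑ i ∈ Finset.range n, σ2 i)
    (hLsmall : (∑ i ∈ Finset.range n, σ2 i)⁻¹ *
        ∑ i ∈ Finset.range n,
          ∫ ω in {ω | δ * Real.sqrt (∑ j ∈ Finset.range n, σ2 j) ≤ |Z i ω|}, (Z i ω) ^ 2 ∂P
        ≤ ε / 4) :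
    P {ω | ε ≤ |(∑ i ∈ Finset.range n, σ2 i)⁻¹ * ∑ i ∈ Finset.range n, (Z i ω) ^ 2 - 1|}
      ≤ ENNReal.ofReal ((4 / ε) * ((∑ i ∈ Finset.range n, σ2 i)⁻¹ *
          ∑ i ∈ Finset.range n,
            ∫ ω in {ω | δ * Real.sqrt (∑ j ∈ Finset.range n, σ2 j) ≤ |Z i ω|}, (Z i ω) ^ 2 ∂P))
        + ENNReal.ofReal (4 * δ ^ 2 / ε ^ 2) := by
  set s : ℝ := ∑ i ∈ Finset.range n, σ2 i with hs_def
  set t : ℝ := δ * Real.sqrt s with ht_def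
  have ht : 0 < t := mul_pos hδ (Real.sqrt_pos.2 hspos)
  have ht2 : t ^ 2 = δ ^ 2 * s := by
    rw [ht_def, mul_pow, Real.sq_sqrt hspos.le]
  -- truncation function
  set f : ℝ → ℝ := fun x => if t ≤ |x| then 0 else x ^ 2 with hf_def
  have hfmeas : Measurable f := by
    apply Measurable.ite (measurableSet_le measurable_const measurable_abs)
      measurable_const (measurable_id.pow_const 2)
  set W : ℕ → Ω → ℝ := fun i => f ∘ Z i with hW_def
  set A : ℕ → Ω → ℝ := fun i ω => if t ≤ |Z i ω| then (Z i ω) ^ 2 else 0 with hA_def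
  set S : ℕ → Set Ω := fun i => {ω | t ≤ |Z i ω|} with hS_def
  have hSmeas : ∀ i, MeasurableSet (S i) :=
    fun i => measurableSet_le measurable_const (hmeas i).abs
  have hWA : ∀ i ω, W i ω + A i ω = (Z i ω) ^ 2 := by
    intro i ω
    simp only [hW_def, hA_def, hf_def, Function.comp_apply]
    split <;> ring
  have hWnonneg : ∀ i ω, 0 ≤ W i ω := by
    intro i ω
    simp only [hW_def, hf_def, Function.comp_apply]
    split
    · exact le_rfl
    · positivity
  have hAnonneg : ∀ i ω, 0 ≤ A i ω := by
    intro i ω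
    simp only [hA_def]
    split
    · positivity
    · exact le_rfl
  have hWle : ∀ i ω, W i ω ≤ t ^ 2 := by
    intro i ω
    simp only [hW_def, hf_def, Function.comp_apply]
    split_ifs with h
    · positivity
    · push_neg at h
      calc (Z i ω) ^ 2 = |Z i ω| ^ 2 := (sq_abs _).symm
        _ ≤ t ^ 2 := pow_le_pow_left₀ (abs_nonneg _) h.le 2
  have hWmeas : ∀ i, Measurable (W i) := fun i => hfmeas.comp (hmeas i)
  have hWmem : ∀ i, MemLp (W i) 2 P := by
    intro i
    refine (memLp_top_of_bound (hWmeas i).aestronglyMeasurable (t ^ 2)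
      (Filter.Eventually.of_forall fun ω => ?_)).mono_exponent le_top
    rw [Real.norm_eq_abs, abs_of_nonneg (hWnonneg i ω)]
    exact hWle i ω
  have hWint : ∀ i, Integrable (W i) P := fun i => (hWmem i).integrable one_le_two
  have hAint : ∀ i, Integrable (A i) P := by
    intro i
    have : A i = fun ω => (Z i ω) ^ 2 - W i ω := by
      funext ω
      rw [← hWA i ω]; ring
    rw [this]
    exact (hL2 i).integrable_sq.sub (hWint i)
  have hEA : ∀ i, ∫ ω, A i ω ∂P = ∫ ω in S i, (Z i ω) ^ 2 ∂P := by
    intro i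
    have : A i = (S i).indicator (fun ω => (Z i ω) ^ 2) := by
      funext ω
      simp only [hA_def, Set.indicator_apply, hS_def, Set.mem_setOf_eq]
    rw [this, integral_indicator (hSmeas i)]
  have hAintnonneg : ∀ i, 0 ≤ ∫ ω, A i ω ∂P :=
    fun i => integral_nonneg (hAnonneg i)
  have hEWA : ∀ i, (∫ ω, W i ω ∂P) + (∫ ω, A i ω ∂P) = σ2 i := by
    intro i
    rw [← integral_add (hWint i) (hAint i)]
    rw [← hvar i]
    congr 1
    funext ω
    exact hWA i ω
  have hEWle : ∀ i, ∫ ω, W i ω ∂P ≤ σ2 i := by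
    intro i
    have := hEWA i
    have := hAintnonneg i
    linarith
  have hEWnonneg : ∀ i, 0 ≤ ∫ ω, W i ω ∂P :=
    fun i => integral_nonneg (hWnonneg i)
  -- independence of truncated variables
  have hindepW : iIndepFun W P :=
    hindep.comp (fun _ => f) (fun _ => hfmeas)
  -- variance of each truncated variable
  have hvarW : ∀ i, variance (W i) P ≤ t ^ 2 * ∫ ω, W i ω ∂P := by
    intro i
    refine (variance_le_expectation_sq (hWmeas i).aestronglyMeasurable).trans ?_
    have h1 : Integrable (fun ω => (W i ω) ^ 2) P := (hWmem i).integrable_sq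
    have h2 : Integrable (fun ω => t ^ 2 * W i ω) P := (hWint i).const_mul _
    have key : ∫ ω, (W i ω) ^ 2 ∂P ≤ ∫ ω, t ^ 2 * W i ω ∂P := by
      refine integral_mono h1 h2 fun ω => ?_
      calc (W i ω) ^ 2 = W i ω * W i ω := pow_two _
        _ ≤ t ^ 2 * W i ω := mul_le_mul_of_nonneg_right (hWle i ω) (hWnonneg i ω)
    calc ∫ ω, (W i ^ 2) ω ∂P = ∫ ω, (W i ω) ^ 2 ∂P := by simp
      _ ≤ ∫ ω, t ^ 2 * W i ω ∂P := key
      _ = t ^ 2 * ∫ ω, W i ω ∂P := MeasureTheory.integral_const_mul _ _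
  -- the centered truncated sum
  set X : Ω → ℝ := fun ω => s⁻¹ * ∑ i ∈ Finset.range n, W i ω with hX_def
  have hsum_eq : (fun ω => ∑ i ∈ Finset.range n, W i ω) = ∑ i ∈ Finset.range n, W i := by
    funext ω; simp [Finset.sum_apply]
  have hsummem : MemLp (∑ i ∈ Finset.range n, W i) 2 P :=
    memLp_finset_sum' (Finset.range n) (fun i _ => hWmem i)
  have hXmem : MemLp X 2 P := by
    have : MemLp (fun ω => ∑ i ∈ Finset.range n, W i ω) 2 P := hsum_eq ▸ hsummem
    exact this.const_mul _
  -- variance of X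
  have hvarsum : variance (∑ i ∈ Finset.range n, W i) P
      = ∑ i ∈ Finset.range n, variance (W i) P := by
    refine IndepFun.variance_sum (fun i _ => hWmem i) ?_
    intro i hi j hj hij
    exact hindepW.indepFun hij
  have hvarX : variance X P ≤ δ ^ 2 := by
    have hXsmul : X = s⁻¹ • (∑ i ∈ Finset.range n, W i) := by
      funext ω; simp [hX_def, Finset.sum_apply, smul_eq_mul]
    rw [hXsmul, variance_smul, hvarsum]
    have hsum_le : ∑ i ∈ Finset.range n, variance (W i) P ≤ t ^ 2 * s := by
      calc ∑ i ∈ Finset.range n, variance (W i) P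
          ≤ ∑ i ∈ Finset.range n, t ^ 2 * ∫ ω, W i ω ∂P :=
            Finset.sum_le_sum fun i _ => hvarW i
        _ = t ^ 2 * ∑ i ∈ Finset.range n, ∫ ω, W i ω ∂P := by rw [Finset.mul_sum]
        _ ≤ t ^ 2 * s := by
            refine mul_le_mul_of_nonneg_left ?_ (by positivity)
            exact Finset.sum_le_sum fun i _ => hEWle i
    calc s⁻¹ ^ 2 * ∑ i ∈ Finset.range n, variance (W i) P
        ≤ s⁻¹ ^ 2 * (t ^ 2 * s) := by
          refine mul_le_mul_of_nonneg_left hsum_le (by positivity)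
      _ = δ ^ 2 := by
          rw [ht2]
          field_simp [hspos.ne']
  -- Chebyshev bound for X
  have hCheb : P {ω | ε / 2 ≤ |X ω - ∫ ω, X ω ∂P|}
      ≤ ENNReal.ofReal (4 * δ ^ 2 / ε ^ 2) := by
    refine (meas_ge_le_variance_div_sq hXmem (by positivity : (0:ℝ) < ε / 2)).trans ?_
    refine ENNReal.ofReal_le_ofReal ?_
    rw [div_pow]
    rw [div_le_div_iff₀ (by positivity) (by positivity)]
    calc variance X P * ε ^ 2 ≤ δ ^ 2 * ε ^ 2 :=
          mul_le_mul_of_nonneg_right hvarX (by positivity)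
      _ = 4 * δ ^ 2 * (ε ^ 2 / 2 ^ 2) := by ring
  -- the expectation of X
  set L : ℝ := s⁻¹ * ∑ i ∈ Finset.range n, ∫ ω, A i ω ∂P with hL_def
  have hLnonneg : 0 ≤ L := by
    refine mul_nonneg (by positivity) ?_
    exact Finset.sum_nonneg fun i _ => hAintnonneg i
  have hL_eq : L = s⁻¹ * ∑ i ∈ Finset.range n, ∫ ω in S i, (Z i ω) ^ 2 ∂P := by
    rw [hL_def]
    congr 1
    exact Finset.sum_congr rfl fun i _ => hEA i
  have hLsmall' : L ≤ ε / 4 := by rw [hL_eq]; exact hLsmall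
  have hEX : ∫ ω, X ω ∂P = 1 - L := by
    rw [hX_def]
    rw [MeasureTheory.integral_const_mul]
    rw [integral_finset_sum _ (fun i _ => hWint i)]
    have hsum : ∑ i ∈ Finset.range n, ∫ ω, W i ω ∂P
        = s - ∑ i ∈ Finset.range n, ∫ ω, A i ω ∂P := by
      rw [hs_def, eq_sub_iff_add_eq, ← Finset.sum_add_distrib]
      exact Finset.sum_congr rfl fun i _ => hEWA i
    rw [hsum, hL_def, mul_sub, inv_mul_cancel₀ hspos.ne']
  -- the tail sum and Markov's inequality
  set g : Ω → ℝ := fun ω => s⁻¹ * ∑ i ∈ Finset.range n, A i ω with hg_def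
  have hgnonneg : ∀ ω, 0 ≤ g ω := by
    intro ω
    refine mul_nonneg (by positivity) (Finset.sum_nonneg fun i _ => hAnonneg i ω)
  have hgint : Integrable g P := by
    refine Integrable.const_mul ?_ _
    exact integrable_finset_sum _ (fun i _ => hAint i)
  have hEg : ∫ ω, g ω ∂P = L := by
    rw [hg_def, MeasureTheory.integral_const_mul,
      integral_finset_sum _ (fun i _ => hAint i), hL_def]
  have hMarkov : P {ω | ε / 4 ≤ g ω} ≤ ENNReal.ofReal ((4 / ε) * L) := by
    have h1 := mul_meas_ge_le_integral_of_nonneg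
      (Filter.Eventually.of_forall hgnonneg) hgint (ε / 4)
    rw [hEg] at h1
    have hne : P {ω | ε / 4 ≤ g ω} ≠ ⊤ := measure_ne_top _ _
    rw [← ENNReal.ofReal_toReal hne]
    refine ENNReal.ofReal_le_ofReal ?_
    have hε4 : (0:ℝ) < ε / 4 := by positivity
    rw [mul_comm, ← le_div_iff₀ hε4] at h1
    calc (P {ω | ε / 4 ≤ g ω}).toReal ≤ L / (ε / 4) := h1
      _ = (4 / ε) * L := by field_simp
  -- the inclusion of events
  have hsub : {ω | ε ≤ |s⁻¹ * ∑ i ∈ Finset.range n, (Z i ω) ^ 2 - 1|}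
      ⊆ {ω | ε / 4 ≤ g ω} ∪ {ω | ε / 2 ≤ |X ω - ∫ ω, X ω ∂P|} := by
    intro ω hω
    simp only [Set.mem_setOf_eq] at hω
    by_contra hcon
    simp only [Set.mem_union, Set.mem_setOf_eq, not_or, not_le] at hcon
    obtain ⟨h1, h2⟩ := hcon
    rw [hEX] at h2
    have hdecomp : s⁻¹ * ∑ i ∈ Finset.range n, (Z i ω) ^ 2
        = g ω + X ω := by
      rw [hg_def, hX_def, ← mul_add, ← Finset.sum_add_distrib]
      congr 1
      refine Finset.sum_congr rfl fun i _ => ?_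
      rw [add_comm]
      exact (hWA i ω).symm
    have habs : |s⁻¹ * ∑ i ∈ Finset.range n, (Z i ω) ^ 2 - 1|
        ≤ g ω + |X ω - (1 - L)| + L := by
      rw [hdecomp]
      have : g ω + X ω - 1 = g ω + (X ω - (1 - L)) + (-L) := by ring
      rw [this]
      calc |g ω + (X ω - (1 - L)) + (-L)|
          ≤ |g ω + (X ω - (1 - L))| + |(-L)| := abs_add_le _ _
        _ ≤ (|g ω| + |X ω - (1 - L)|) + |(-L)| := by
            exact add_le_add (abs_add_le _ _) le_rfl
        _ = g ω + |X ω - (1 - L)| + L := by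
            rw [abs_of_nonneg (hgnonneg ω), abs_neg, abs_of_nonneg hLnonneg]
    have : |s⁻¹ * ∑ i ∈ Finset.range n, (Z i ω) ^ 2 - 1| < ε := by
      calc |s⁻¹ * ∑ i ∈ Finset.range n, (Z i ω) ^ 2 - 1|
          ≤ g ω + |X ω - (1 - L)| + L := habs
        _ < ε / 4 + ε / 2 + ε / 4 := by
            have := hLsmall'
            linarith
        _ = ε := by ring
    linarith [hω, this]
  -- put everything together
  calc P {ω | ε ≤ |s⁻¹ * ∑ i ∈ Finset.range n, (Z i ω) ^ 2 - 1|}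
      ≤ P ({ω | ε / 4 ≤ g ω} ∪ {ω | ε / 2 ≤ |X ω - ∫ ω, X ω ∂P|}) := measure_mono hsub
    _ ≤ P {ω | ε / 4 ≤ g ω} + P {ω | ε / 2 ≤ |X ω - ∫ ω, X ω ∂P|} := measure_union_le _ _
    _ ≤ ENNReal.ofReal ((4 / ε) * L) + ENNReal.ofReal (4 * δ ^ 2 / ε ^ 2) :=
        add_le_add hMarkov hCheb
    _ = ENNReal.ofReal ((4 / ε) * (s⁻¹ *
          ∑ i ∈ Finset.range n,
            ∫ ω in {ω | δ * Real.sqrt s ≤ |Z i ω|}, (Z i ω) ^ 2 ∂P))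
        + ENNReal.ofReal (4 * δ ^ 2 / ε ^ 2) := by
        rw [hL_eq]

/-- Lemma 3 (Raikov-type theorem): under Lindeberg's condition,
`s_n^{-2} ∑_{i=1}^n Z_i²` converges to `1` in probability. -/
theorem raikov_sum_of_squares
    {Ω : Type*} [MeasurableSpace Ω] (P : Measure Ω) [IsProbabilityMeasure P]
    (Z : ℕ → Ω → ℝ) (σ2 : ℕ → ℝ)
    (hmeas : ∀ i, Measurable (Z i))
    (hindep : iIndepFun Z P)
    (hL2 : ∀ i, MemLp (Z i) 2 P)
    (hmean : ∀ i, ∫ ω, Z i ω ∂P = 0)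
    (hvar : ∀ i, ∫ ω, (Z i ω) ^ 2 ∂P = σ2 i)
    (hpos : ∀ i, 0 < σ2 i)
    (hLind : ∀ ε > (0 : ℝ), Tendsto (fun n =>
      (∑ i ∈ Finset.range n, σ2 i)⁻¹ *
        ∑ i ∈ Finset.range n,
          ∫ ω in {ω | ε * Real.sqrt (∑ j ∈ Finset.range n, σ2 j) ≤ |Z i ω|}, (Z i ω) ^ 2 ∂P)
      atTop (nhds 0)) :
    ∀ ε > (0 : ℝ), Tendsto (fun n =>
      P {ω | ε ≤ |(∑ i ∈ Finset.range n, σ2 i)⁻¹ * ∑ i ∈ Finset.range n, (Z i ω) ^ 2 - 1|})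
      atTop (nhds 0) := by
  intro ε hε
  rw [ENNReal.tendsto_atTop_zero]
  intro η hη
  have hη2 : (0 : ENNReal) < η / 2 := ENNReal.div_pos hη.ne' (by norm_num)
  set c : ℝ := (min 1 (η / 2)).toReal with hc_def
  have hmin_ne_top : min 1 (η / 2) ≠ ⊤ :=
    ne_top_of_le_ne_top ENNReal.one_ne_top (min_le_left _ _)
  have hmin_pos : 0 < min 1 (η / 2) := lt_min (by norm_num) hη2
  have hc_pos : 0 < c := ENNReal.toReal_pos hmin_pos.ne' hmin_ne_top
  have hc_le : ENNReal.ofReal c ≤ η / 2 := by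
    rw [hc_def, ENNReal.ofReal_toReal hmin_ne_top]
    exact min_le_right _ _
  set δ : ℝ := ε / 2 * Real.sqrt c with hδ_def
  have hδ : 0 < δ := by positivity
  have hδc : 4 * δ ^ 2 / ε ^ 2 = c := by
    rw [hδ_def, mul_pow, div_pow, Real.sq_sqrt hc_pos.le]
    field_simp
    ring
  have hev1 := (hLind δ hδ).eventually
    (gt_mem_nhds (lt_min (show (0:ℝ) < ε / 4 by positivity)
      (show (0:ℝ) < c * ε / 4 by positivity)))
  have hev2 : ∀ᶠ n in atTop, 1 ≤ n := eventually_ge_atTop 1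
  obtain ⟨N, hN⟩ := Filter.eventually_atTop.mp (hev1.and hev2)
  refine ⟨N, fun n hn => ?_⟩
  obtain ⟨hLn, hn1⟩ := hN n hn
  have hspos : 0 < ∑ i ∈ Finset.range n, σ2 i :=
    Finset.sum_pos (fun i _ => hpos i) (Finset.nonempty_range_iff.2 (by omega))
  have hkey := raikov_key P Z σ2 hmeas hindep hL2 hvar n ε δ hε hδ hspos
    (le_of_lt (lt_of_lt_of_le hLn (min_le_left _ _)))
  refine hkey.trans ?_
  have hb1 : ENNReal.ofReal ((4 / ε) * ((∑ i ∈ Finset.range n, σ2 i)⁻¹ *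
      ∑ i ∈ Finset.range n,
        ∫ ω in {ω | δ * Real.sqrt (∑ j ∈ Finset.range n, σ2 j) ≤ |Z i ω|}, (Z i ω) ^ 2 ∂P))
      ≤ η / 2 := by
    refine le_trans (ENNReal.ofReal_le_ofReal ?_) hc_le
    have h := (lt_of_lt_of_le hLn (min_le_right _ _)).le
    calc (4 / ε) * ((∑ i ∈ Finset.range n, σ2 i)⁻¹ *
        ∑ i ∈ Finset.range n,
          ∫ ω in {ω | δ * Real.sqrt (∑ j ∈ Finset.range n, σ2 j) ≤ |Z i ω|}, (Z i ω) ^ 2 ∂P)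
        ≤ (4 / ε) * (c * ε / 4) := mul_le_mul_of_nonneg_left h (by positivity)
      _ = c := by field_simp
  have hb2 : ENNReal.ofReal (4 * δ ^ 2 / ε ^ 2) ≤ η / 2 := by
    rw [hδc]; exact hc_le
  calc ENNReal.ofReal ((4 / ε) * ((∑ i ∈ Finset.range n, σ2 i)⁻¹ *
        ∑ i ∈ Finset.range n,
          ∫ ω in {ω | δ * Real.sqrt (∑ j ∈ Finset.range n, σ2 j) ≤ |Z i ω|}, (Z i ω) ^ 2 ∂P))
      + ENNReal.ofReal (4 * δ ^ 2 / ε ^ 2)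
      ≤ η / 2 + η / 2 := add_le_add hb1 hb2
    _ = η := ENNReal.add_halves η
end

section
/- As n → ∞, max_{1 ≤ i ≤ n} |Z_i| / (Σ_{i=1}^n Z_i²)^{1/2} converges to 0 in probability; that is, for every ε > 0, P( max_{1 ≤ i ≤ n} |Z_i| / (Σ_{i=1}^n Z_i²)^{1/2} ≥ ε ) → 0. -/
open MeasureTheory ProbabilityTheory Filter
open scoped Classical

-- Markov-type: c² P(c ≤ |X|) ≤ ∫_{c≤|X|} X²
lemma markov_sq {Ω : Type*} [MeasurableSpace Ω] (P : Measure Ω) [IsProbabilityMeasure P]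
    {X : Ω → ℝ} (hX : Measurable X) (hint : Integrable (fun ω => X ω ^ 2) P)
    {c : ℝ} (hc : 0 < c) :
    P {ω | c ≤ |X ω|} ≤ ENNReal.ofReal (c⁻¹ ^ 2 * ∫ ω in {ω | c ≤ |X ω|}, X ω ^ 2 ∂P) := by
  set A : Set Ω := {ω | c ≤ |X ω|} with hA
  have hAm : MeasurableSet A := measurableSet_le measurable_const hX.abs
  have h1 : c ^ 2 * (P A).toReal ≤ ∫ ω in A, X ω ^ 2 ∂P := by
    have := setIntegral_mono_on (integrableOn_const (C := c ^ 2) (measure_ne_top P A))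
      hint.integrableOn hAm (fun ω hω => by
        have : c ≤ |X ω| := hω
        calc c ^ 2 ≤ |X ω| ^ 2 := by nlinarith [abs_nonneg (X ω)]
        _ = X ω ^ 2 := sq_abs _)
    exact (by simpa [mul_comm] using this : c ^ 2 * P.real A ≤ _)
  have h2 : (P A).toReal ≤ c⁻¹ ^ 2 * ∫ ω in A, X ω ^ 2 ∂P := by
    have hc2 : (0:ℝ) < c ^ 2 := by positivity
    rw [inv_pow, inv_mul_eq_div, le_div_iff₀ hc2]
    linarith [h1]
  calc P A = ENNReal.ofReal (P A).toReal := (ENNReal.ofReal_toReal (measure_ne_top P A)).symm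
  _ ≤ _ := ENNReal.ofReal_le_ofReal h2

lemma markov_sq_union {Ω : Type*} [MeasurableSpace Ω] (P : Measure Ω) [IsProbabilityMeasure P]
    {Z : ℕ → Ω → ℝ} (hmeas : ∀ i, Measurable (Z i)) (hint : ∀ i, Integrable (fun ω => Z i ω ^ 2) P)
    {c : ℝ} (hc : 0 < c) (n : ℕ) :
    P {ω | ∃ i ∈ Finset.range n, c ≤ |Z i ω|} ≤
      ENNReal.ofReal (c⁻¹ ^ 2 * ∑ i ∈ Finset.range n, ∫ ω in {ω | c ≤ |Z i ω|}, Z i ω ^ 2 ∂P) := by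
  have hset : {ω | ∃ i ∈ Finset.range n, c ≤ |Z i ω|} =
      ⋃ i ∈ Finset.range n, {ω | c ≤ |Z i ω|} := by
    ext ω; simp
  rw [hset]
  calc P (⋃ i ∈ Finset.range n, {ω | c ≤ |Z i ω|})
      ≤ ∑ i ∈ Finset.range n, P {ω | c ≤ |Z i ω|} := measure_biUnion_finset_le _ _
    _ ≤ ∑ i ∈ Finset.range n,
        ENNReal.ofReal (c⁻¹ ^ 2 * ∫ ω in {ω | c ≤ |Z i ω|}, Z i ω ^ 2 ∂P) :=
        Finset.sum_le_sum fun i _ => markov_sq P (hmeas i) (hint i) hc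
    _ = ENNReal.ofReal (∑ i ∈ Finset.range n, c⁻¹ ^ 2 * ∫ ω in {ω | c ≤ |Z i ω|}, Z i ω ^ 2 ∂P) := by
        rw [ENNReal.ofReal_sum_of_nonneg]
        intro i _
        have : 0 ≤ ∫ ω in {ω | c ≤ |Z i ω|}, Z i ω ^ 2 ∂P :=
          setIntegral_nonneg (measurableSet_le measurable_const (hmeas i).abs)
            (fun ω _ => sq_nonneg _)
        positivity
    _ = _ := by rw [← Finset.mul_sum]

lemma trunc_bound {Ω : Type*} [MeasurableSpace Ω] (P : Measure Ω) [IsProbabilityMeasure P]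
    (Z : ℕ → Ω → ℝ) (σ2 : ℕ → ℝ)
    (hmeas : ∀ i, Measurable (Z i))
    (hindep : iIndepFun Z P)
    (hL2 : ∀ i, MemLp (Z i) 2 P)
    (hvar : ∀ i, ∫ ω, (Z i ω) ^ 2 ∂P = σ2 i)
    {n : ℕ} {δ : ℝ} (hδ : 0 < δ)
    (hs : 0 < ∑ i ∈ Finset.range n, σ2 i)
    (hLn : ∑ i ∈ Finset.range n,
        ∫ ω in {ω | δ * Real.sqrt (∑ j ∈ Finset.range n, σ2 j) ≤ |Z i ω|}, Z i ω ^ 2 ∂P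
        ≤ (∑ i ∈ Finset.range n, σ2 i) / 4) :
    P {ω | ∑ j ∈ Finset.range n, Z j ω ^ 2 < (∑ i ∈ Finset.range n, σ2 i) / 2} ≤
      ENNReal.ofReal (16 * δ ^ 2) := by
  set s : ℝ := ∑ i ∈ Finset.range n, σ2 i with hs_def
  set c : ℝ := δ * Real.sqrt s with hc_def
  have hc : 0 < c := mul_pos hδ (Real.sqrt_pos.2 hs)
  have hc2 : c ^ 2 = δ ^ 2 * s := by
    rw [hc_def, mul_pow, Real.sq_sqrt hs.le]
  set g : ℝ → ℝ := fun x => if c ≤ |x| then 0 else x ^ 2 with hg_def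
  have hg : Measurable g :=
    Measurable.ite (measurableSet_le measurable_const measurable_abs) measurable_const
      (measurable_id.pow_const 2)
  set Y : ℕ → Ω → ℝ := fun i ω => g (Z i ω) with hY_def
  have hY0 : ∀ i ω, 0 ≤ Y i ω := by
    intro i ω; simp only [hY_def, hg_def]; split <;> [rfl; positivity]
  have hYc : ∀ i ω, Y i ω ≤ c ^ 2 := by
    intro i ω; simp only [hY_def, hg_def]
    split
    · positivity
    · rename_i h
      push_neg at h
      calc Z i ω ^ 2 = |Z i ω| ^ 2 := (sq_abs _).symm
      _ ≤ c ^ 2 := by nlinarith [abs_nonneg (Z i ω)]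
  have hYZ : ∀ i ω, Y i ω ≤ Z i ω ^ 2 := by
    intro i ω; simp only [hY_def, hg_def]; split <;> [positivity; rfl]
  have hYmeas : ∀ i, Measurable (Y i) := fun i => hg.comp (hmeas i)
  have hYmem : ∀ i, MemLp (Y i) 2 P := fun i =>
    MemLp.of_bound (hYmeas i).aestronglyMeasurable (c ^ 2)
      (ae_of_all _ fun ω => by
        rw [Real.norm_eq_abs, abs_of_nonneg (hY0 i ω)]; exact hYc i ω)
  have hYint : ∀ i, Integrable (Y i) P := fun i => (hYmem i).integrable one_le_two
  have hZ2int : ∀ i, Integrable (fun ω => Z i ω ^ 2) P := fun i => by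
    simpa using (hL2 i).integrable_sq
  -- expectation of Y i
  set A : ℕ → Set Ω := fun i => {ω | c ≤ |Z i ω|} with hA_def
  have hAm : ∀ i, MeasurableSet (A i) := fun i =>
    measurableSet_le measurable_const (hmeas i).abs
  set L : ℕ → ℝ := fun i => ∫ ω in A i, Z i ω ^ 2 ∂P with hL_def
  have hEY : ∀ i, ∫ ω, Y i ω ∂P = σ2 i - L i := by
    intro i
    have hind : Y i = Set.indicator (A i)ᶜ (fun ω => Z i ω ^ 2) := by
      funext ω
      simp only [hY_def, hg_def, Set.indicator_apply, Set.mem_compl_iff, hA_def,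
        Set.mem_setOf_eq]
      by_cases h : c ≤ |Z i ω| <;> simp [h]
    rw [hind, integral_indicator (hAm i).compl]
    have := integral_add_compl (hAm i) (hZ2int i)
    rw [hvar i] at this
    linarith [this]
  have hL0 : ∀ i, 0 ≤ L i := fun i =>
    setIntegral_nonneg (hAm i) fun ω _ => sq_nonneg _
  have hEY0 : ∀ i, 0 ≤ ∫ ω, Y i ω ∂P := fun i =>
    integral_nonneg (hY0 i)
  have hEYle : ∀ i, ∫ ω, Y i ω ∂P ≤ σ2 i := fun i => by
    have := hL0 i; rw [hEY i]; linarith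
  -- variance bound
  have hVarY : ∀ i, variance (Y i) P ≤ c ^ 2 * σ2 i := by
    intro i
    calc variance (Y i) P ≤ ∫ ω, (Y i ω) ^ 2 ∂P := by
          simpa using variance_le_expectation_sq (hYmeas i).aestronglyMeasurable
    _ ≤ ∫ ω, c ^ 2 * Y i ω ∂P := by
          apply integral_mono ((hYmem i).integrable_sq) ((hYint i).const_mul _)
          intro ω
          have h0 := hY0 i ω; have h1 := hYc i ω
          show Y i ω ^ 2 ≤ c ^ 2 * Y i ω
          nlinarith [mul_le_mul_of_nonneg_right h1 h0]
    _ = c ^ 2 * ∫ ω, Y i ω ∂P := integral_const_mul _ _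
    _ ≤ c ^ 2 * σ2 i := by
          have := hEYle i; nlinarith [sq_nonneg c]
  -- sum
  set T : Ω → ℝ := ∑ i ∈ Finset.range n, Y i with hT_def
  have hTmem : MemLp T 2 P := memLp_finset_sum' _ fun i _ => hYmem i
  have hVarT : variance T P ≤ δ ^ 2 * s ^ 2 := by
    rw [hT_def, IndepFun.variance_sum (fun i _ => hYmem i)
      (fun i _ j _ hij => (hindep.indepFun hij).comp hg hg)]
    calc ∑ i ∈ Finset.range n, variance (Y i) P ≤ ∑ i ∈ Finset.range n, c ^ 2 * σ2 i :=
          Finset.sum_le_sum fun i _ => hVarY i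
    _ = c ^ 2 * s := by rw [← Finset.mul_sum]
    _ = δ ^ 2 * s ^ 2 := by rw [hc2]; ring
  have hET : ∫ ω, T ω ∂P = s - ∑ i ∈ Finset.range n, L i := by
    rw [hT_def]
    simp only [Finset.sum_apply]
    rw [integral_finset_sum _ fun i _ => hYint i]
    simp_rw [hEY]
    rw [Finset.sum_sub_distrib]
  have hETge : (3 / 4 : ℝ) * s ≤ ∫ ω, T ω ∂P := by
    rw [hET]; linarith [hLn]
  -- Chebyshev
  have hcheb := meas_ge_le_variance_div_sq (μ := P) hTmem (c := s / 4) (by linarith)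
  have hsub : {ω | ∑ j ∈ Finset.range n, Z j ω ^ 2 < s / 2} ⊆
      {ω | s / 4 ≤ |T ω - ∫ ω, T ω ∂P|} := by
    intro ω hω
    simp only [Set.mem_setOf_eq] at hω ⊢
    have hTle : T ω ≤ ∑ j ∈ Finset.range n, Z j ω ^ 2 := by
      rw [hT_def, Finset.sum_apply]
      exact Finset.sum_le_sum fun i _ => hYZ i ω
    have : s / 4 ≤ (∫ ω, T ω ∂P) - T ω := by linarith
    calc s / 4 ≤ (∫ ω, T ω ∂P) - T ω := this
    _ ≤ |T ω - ∫ ω, T ω ∂P| := by rw [abs_sub_comm]; exact le_abs_self _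
  calc P {ω | ∑ j ∈ Finset.range n, Z j ω ^ 2 < s / 2} ≤
        P {ω | s / 4 ≤ |T ω - ∫ ω, T ω ∂P|} := measure_mono hsub
  _ ≤ ENNReal.ofReal (variance T P / (s / 4) ^ 2) := hcheb
  _ ≤ ENNReal.ofReal (16 * δ ^ 2) := by
        apply ENNReal.ofReal_le_ofReal
        rw [div_le_iff₀ (by positivity)]
        nlinarith [hVarT]

/-- Under Lindeberg's condition, `max_{1≤i≤n} |Z_i| / (∑_{i=1}^n Z_i²)^{1/2}`
converges to 0 in probability. -/
theorem max_abs_over_self_norm_negligible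
    {Ω : Type*} [MeasurableSpace Ω] (P : Measure Ω) [IsProbabilityMeasure P]
    (Z : ℕ → Ω → ℝ) (σ2 : ℕ → ℝ)
    (hmeas : ∀ i, Measurable (Z i))
    (hindep : iIndepFun Z P)
    (hL2 : ∀ i, MemLp (Z i) 2 P)
    (hmean : ∀ i, ∫ ω, Z i ω ∂P = 0)
    (hvar : ∀ i, ∫ ω, (Z i ω) ^ 2 ∂P = σ2 i)
    (hpos : ∀ i, 0 < σ2 i)
    (hLind : ∀ ε > (0 : ℝ), Tendsto (fun n =>
      (∑ i ∈ Finset.range n, σ2 i)⁻¹ *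
        ∑ i ∈ Finset.range n,
          ∫ ω in {ω | ε * Real.sqrt (∑ j ∈ Finset.range n, σ2 j) ≤ |Z i ω|}, (Z i ω) ^ 2 ∂P)
      atTop (nhds 0)) :
    ∀ ε > (0 : ℝ), Tendsto (fun n =>
      P {ω | ∃ i ∈ Finset.range n,
        ε ≤ |Z i ω| / Real.sqrt (∑ j ∈ Finset.range n, (Z j ω) ^ 2)})
      atTop (nhds 0) := by
  intro ε hε
  have hZ2int : ∀ i, Integrable (fun ω => Z i ω ^ 2) P := fun i => by
    simpa using (hL2 i).integrable_sq
  rw [ENNReal.tendsto_atTop_zero]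
  intro η hη
  suffices h : ∀ r : ℝ, 0 < r → ∀ᶠ n in atTop, P {ω | ∃ i ∈ Finset.range n,
        ε ≤ |Z i ω| / Real.sqrt (∑ j ∈ Finset.range n, (Z j ω) ^ 2)} ≤ ENNReal.ofReal r by
    by_cases hη' : η = ⊤
    · exact ⟨0, fun n _ => hη' ▸ le_top⟩
    · obtain ⟨N, hN⟩ := (eventually_atTop).1 (h η.toReal (ENNReal.toReal_pos hη.ne' hη'))
      exact ⟨N, fun n hn => by simpa [ENNReal.ofReal_toReal hη'] using hN n hn⟩
  intro r hr
  set s : ℕ → ℝ := fun n => ∑ i ∈ Finset.range n, σ2 i with hs_def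
  have hs : ∀ n, 1 ≤ n → 0 < s n := fun n hn =>
    Finset.sum_pos (fun i _ => hpos i) (Finset.nonempty_range_iff.2 (by omega))
  set δ : ℝ := Real.sqrt (r / 32) with hδ_def
  have hδ : 0 < δ := Real.sqrt_pos.2 (by linarith)
  have hδ2 : 16 * δ ^ 2 = r / 2 := by
    rw [hδ_def, Real.sq_sqrt (by linarith : (0:ℝ) ≤ r / 32)]; ring
  set δB : ℝ := ε / Real.sqrt 2 with hδB_def
  have hδB : 0 < δB := div_pos hε (Real.sqrt_pos.2 two_pos)
  -- B part: eventually small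
  have hBt : Tendsto (fun n => δB⁻¹ ^ 2 * ((s n)⁻¹ *
      ∑ i ∈ Finset.range n,
        ∫ ω in {ω | δB * Real.sqrt (s n) ≤ |Z i ω|}, (Z i ω) ^ 2 ∂P)) atTop (nhds 0) := by
    have := (hLind δB hδB).const_mul (δB⁻¹ ^ 2)
    simpa using this
  have hBev : ∀ᶠ n in atTop, δB⁻¹ ^ 2 * ((s n)⁻¹ *
      ∑ i ∈ Finset.range n,
        ∫ ω in {ω | δB * Real.sqrt (s n) ≤ |Z i ω|}, (Z i ω) ^ 2 ∂P) ≤ r / 2 :=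
    hBt.eventually (eventually_le_nhds (by linarith))
  -- A part: Lindeberg sum eventually ≤ s n / 4
  have hAev : ∀ᶠ n in atTop, (s n)⁻¹ *
      ∑ i ∈ Finset.range n,
        ∫ ω in {ω | δ * Real.sqrt (s n) ≤ |Z i ω|}, (Z i ω) ^ 2 ∂P ≤ 1 / 4 :=
    (hLind δ hδ).eventually (eventually_le_nhds (by norm_num))
  filter_upwards [hBev, hAev, eventually_ge_atTop 1] with n hB hA hn
  have hsn : 0 < s n := hs n hn
  have hcB : 0 < δB * Real.sqrt (s n) := mul_pos hδB (Real.sqrt_pos.2 hsn)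
  -- inclusion into A ∪ B
  have hsub : {ω | ∃ i ∈ Finset.range n,
        ε ≤ |Z i ω| / Real.sqrt (∑ j ∈ Finset.range n, (Z j ω) ^ 2)} ⊆
      {ω | ∑ j ∈ Finset.range n, Z j ω ^ 2 < s n / 2} ∪
      {ω | ∃ i ∈ Finset.range n, δB * Real.sqrt (s n) ≤ |Z i ω|} := by
    intro ω hω
    obtain ⟨i, hi, hiω⟩ := hω
    by_cases hS : ∑ j ∈ Finset.range n, Z j ω ^ 2 < s n / 2
    · exact Or.inl hS
    · push_neg at hS
      refine Or.inr ⟨i, hi, ?_⟩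
      have hSpos : 0 < ∑ j ∈ Finset.range n, Z j ω ^ 2 := by linarith
      have hsqrt : 0 < Real.sqrt (∑ j ∈ Finset.range n, Z j ω ^ 2) := Real.sqrt_pos.2 hSpos
      have h1 : ε * Real.sqrt (∑ j ∈ Finset.range n, Z j ω ^ 2) ≤ |Z i ω| :=
        (le_div_iff₀ hsqrt).1 hiω
      have h2 : Real.sqrt (s n / 2) ≤ Real.sqrt (∑ j ∈ Finset.range n, Z j ω ^ 2) :=
        Real.sqrt_le_sqrt (by linarith)
      have h3 : δB * Real.sqrt (s n) = ε * Real.sqrt (s n / 2) := by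
        rw [Real.sqrt_div hsn.le, hδB_def]; ring
      rw [h3]
      calc ε * Real.sqrt (s n / 2) ≤ ε * Real.sqrt (∑ j ∈ Finset.range n, Z j ω ^ 2) := by
            exact mul_le_mul_of_nonneg_left h2 hε.le
      _ ≤ |Z i ω| := h1
  calc P {ω | ∃ i ∈ Finset.range n,
        ε ≤ |Z i ω| / Real.sqrt (∑ j ∈ Finset.range n, (Z j ω) ^ 2)}
      ≤ P ({ω | ∑ j ∈ Finset.range n, Z j ω ^ 2 < s n / 2} ∪
          {ω | ∃ i ∈ Finset.range n, δB * Real.sqrt (s n) ≤ |Z i ω|}) := measure_mono hsub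
    _ ≤ P {ω | ∑ j ∈ Finset.range n, Z j ω ^ 2 < s n / 2} +
        P {ω | ∃ i ∈ Finset.range n, δB * Real.sqrt (s n) ≤ |Z i ω|} := measure_union_le _ _
    _ ≤ ENNReal.ofReal (r / 2) + ENNReal.ofReal (r / 2) := by
        gcongr
        · calc P {ω | ∑ j ∈ Finset.range n, Z j ω ^ 2 < s n / 2}
              ≤ ENNReal.ofReal (16 * δ ^ 2) := by
                apply trunc_bound P Z σ2 hmeas hindep hL2 hvar hδ hsn
                have := hA
                rw [inv_mul_le_iff₀ hsn] at this
                linarith [this]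
          _ = ENNReal.ofReal (r / 2) := by rw [hδ2]
        · calc P {ω | ∃ i ∈ Finset.range n, δB * Real.sqrt (s n) ≤ |Z i ω|}
              ≤ ENNReal.ofReal ((δB * Real.sqrt (s n))⁻¹ ^ 2 *
                ∑ i ∈ Finset.range n,
                  ∫ ω in {ω | δB * Real.sqrt (s n) ≤ |Z i ω|}, Z i ω ^ 2 ∂P) :=
                markov_sq_union P hmeas hZ2int hcB n
          _ ≤ ENNReal.ofReal (r / 2) := by
                apply ENNReal.ofReal_le_ofReal
                have heq : (δB * Real.sqrt (s n))⁻¹ ^ 2 = δB⁻¹ ^ 2 * (s n)⁻¹ := by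
                  rw [mul_inv, mul_pow, inv_pow (Real.sqrt (s n)), Real.sq_sqrt hsn.le]
                rw [heq, mul_assoc]
                exact hB
    _ = ENNReal.ofReal r := by
        rw [← ENNReal.ofReal_add (by linarith) (by linarith)]
        norm_num
end

section
/- As n → ∞, s_n^{−2} Σ_{i=1}^n (Z_i − Z̄_n)² converges to 1 in probability; that is, for every ε > 0, P( | s_n^{−2} Σ_{i=1}^n (Z_i − Z̄_n)² − 1 | ≥ ε ) → 0, where Z̄_n := n^{−1} Σ_{i=1}^n Z_i. -/
open MeasureTheory ProbabilityTheory Filter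
open scoped Classical

lemma markov_aux {Ω : Type*} [MeasurableSpace Ω] (P : Measure Ω) [IsProbabilityMeasure P]
    {f : Ω → ℝ} (hf : 0 ≤ᵐ[P] f) (hint : Integrable f P) {c : ℝ} (hc : 0 < c) :
    P {ω | c ≤ f ω} ≤ ENNReal.ofReal ((∫ ω, f ω ∂P) / c) := by
  have h := mul_meas_ge_le_integral_of_nonneg hf hint c
  have hfin : P {ω | c ≤ f ω} ≠ ⊤ := measure_ne_top _ _
  rw [← ENNReal.ofReal_toReal hfin]
  apply ENNReal.ofReal_le_ofReal
  rw [le_div_iff₀ hc]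
  rw [measureReal_def] at h
  linarith [h]

set_option maxHeartbeats 1000000 in
/-- Under Lindeberg's condition, `s_n^{-2} ∑_{i=1}^n (Z_i − Z̄_n)²` converges to `1`
in probability. -/
theorem centered_sum_of_squares_to_one
    {Ω : Type*} [MeasurableSpace Ω] (P : Measure Ω) [IsProbabilityMeasure P]
    (Z : ℕ → Ω → ℝ) (σ2 : ℕ → ℝ)
    (hmeas : ∀ i, Measurable (Z i))
    (hindep : iIndepFun Z P)
    (hL2 : ∀ i, MemLp (Z i) 2 P)
    (hmean : ∀ i, ∫ ω, Z i ω ∂P = 0)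
    (hvar : ∀ i, ∫ ω, (Z i ω) ^ 2 ∂P = σ2 i)
    (hpos : ∀ i, 0 < σ2 i)
    (hLind : ∀ ε > (0 : ℝ), Tendsto (fun n =>
      (∑ i ∈ Finset.range n, σ2 i)⁻¹ *
        ∑ i ∈ Finset.range n,
          ∫ ω in {ω | ε * Real.sqrt (∑ j ∈ Finset.range n, σ2 j) ≤ |Z i ω|}, (Z i ω) ^ 2 ∂P)
      atTop (nhds 0)) :
    ∀ ε > (0 : ℝ), Tendsto (fun n =>
      P {ω | ε ≤ |(∑ i ∈ Finset.range n, σ2 i)⁻¹ *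
        ∑ i ∈ Finset.range n, (Z i ω - (∑ j ∈ Finset.range n, Z j ω) / n) ^ 2 - 1|})
      atTop (nhds 0) := by
  intro ε hε
  -- basic facts
  have hZsq_int : ∀ i, Integrable (fun ω => Z i ω ^ 2) P := fun i => (hL2 i).integrable_sq
  have hs2pos : ∀ n : ℕ, 1 ≤ n → 0 < ∑ i ∈ Finset.range n, σ2 i := fun n hn =>
    Finset.sum_pos (fun i _ => hpos i) (Finset.nonempty_range_iff.mpr (by omega))
  have hvarZ : ∀ i, variance (Z i) P = σ2 i := by
    intro i
    have h1 : variance (Z i) P = (∫ ω, (Z i ω) ^ 2 ∂P) - (∫ ω, Z i ω ∂P) ^ 2 :=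
      variance_eq_sub (hL2 i)
    rw [h1, hvar i, hmean i]; ring
  have hES2 : ∀ n : ℕ, ∫ ω, (∑ j ∈ Finset.range n, Z j ω) ^ 2 ∂P
      = ∑ i ∈ Finset.range n, σ2 i := by
    intro n
    have hfun : (∑ j ∈ Finset.range n, Z j) = fun ω => ∑ j ∈ Finset.range n, Z j ω := by
      funext ω; simp
    have hmem : MemLp (fun ω => ∑ j ∈ Finset.range n, Z j ω) 2 P := by
      rw [← hfun]; exact memLp_finset_sum' _ fun i _ => hL2 i
    have h1 : variance (fun ω => ∑ j ∈ Finset.range n, Z j ω) P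
        = (∫ ω, (∑ j ∈ Finset.range n, Z j ω) ^ 2 ∂P)
          - (∫ ω, (∑ j ∈ Finset.range n, Z j ω) ∂P) ^ 2 := variance_eq_sub hmem
    have hmeanS : (∫ ω, (∑ j ∈ Finset.range n, Z j ω) ∂P) = 0 := by
      rw [integral_finset_sum _ fun i _ => (hL2 i).integrable one_le_two]
      simp [hmean]
    have h2 : variance (fun ω => ∑ j ∈ Finset.range n, Z j ω) P
        = ∑ i ∈ Finset.range n, σ2 i := by
      rw [← hfun, IndepFun.variance_sum (fun i _ => hL2 i)
        (fun i _ j _ hij => hindep.indepFun hij)]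
      exact Finset.sum_congr rfl fun i _ => hvarZ i
    rw [h1, hmeanS] at h2
    linarith [h2]
  rw [ENNReal.tendsto_atTop_zero]
  intro η hη
  obtain ⟨r, hr0, hrη⟩ : ∃ r : ℝ, 0 < r ∧ ENNReal.ofReal r ≤ η := by
    rcases lt_or_ge η 1 with h | h
    · refine ⟨η.toReal, ENNReal.toReal_pos hη.ne' h.ne_top, ?_⟩
      rw [ENNReal.ofReal_toReal h.ne_top]
    · exact ⟨1, one_pos, by simpa using h⟩
  -- choose the truncation level
  set δ : ℝ := Real.sqrt (r * ε ^ 2 / 32) with hδdef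
  have hδ : 0 < δ := Real.sqrt_pos.mpr (by positivity)
  have hδsq : δ ^ 2 = r * ε ^ 2 / 32 := Real.sq_sqrt (by positivity)
  have hLd := hLind δ hδ
  have hLev : ∀ᶠ n in atTop,
      (∑ i ∈ Finset.range n, σ2 i)⁻¹ *
        ∑ i ∈ Finset.range n,
          ∫ ω in {ω | δ * Real.sqrt (∑ j ∈ Finset.range n, σ2 j) ≤ |Z i ω|}, (Z i ω) ^ 2 ∂P
      < min (ε / 4) (ε * r / 32) :=
    hLd.eventually (eventually_lt_nhds (by positivity))
  have hNev : ∀ᶠ n : ℕ in atTop, 1 ≤ n ∧ 4 / (n * ε) ≤ r / 4 := by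
    filter_upwards [eventually_ge_atTop (max 1 ⌈16 / (r * ε)⌉₊)] with n hn
    have h1 : 1 ≤ n := le_trans (le_max_left _ _) hn
    have h2 : (16 : ℝ) / (r * ε) ≤ n := by
      calc (16 : ℝ) / (r * ε) ≤ ⌈16 / (r * ε)⌉₊ := Nat.le_ceil _
      _ ≤ n := by exact_mod_cast le_trans (le_max_right _ _) hn
    refine ⟨h1, ?_⟩
    rw [div_le_div_iff₀ (by positivity) (by norm_num)]
    rw [div_le_iff₀ (by positivity)] at h2
    nlinarith [hr0, hε]
  rw [eventually_atTop] at hLev hNev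
  obtain ⟨N1, hN1⟩ := hLev
  obtain ⟨N2, hN2⟩ := hNev
  refine ⟨max N1 N2, fun n hn => ?_⟩
  obtain ⟨hn1, hn2⟩ := hN2 n (le_trans (le_max_right _ _) hn)
  have hLn := hN1 n (le_trans (le_max_left _ _) hn)
  -- now the core estimate for a fixed n

  beta_reduce
  set s : ℝ := ∑ i ∈ Finset.range n, σ2 i with hsdef
  have hs : 0 < s := hs2pos n hn1
  set c : ℝ := δ * Real.sqrt s with hcdef
  have hcpos : 0 < c := by positivity
  have hc2 : c ^ 2 = δ ^ 2 * s := by rw [hcdef, mul_pow, Real.sq_sqrt hs.le]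
  set K : ℕ → Set Ω := fun i => {ω | c ≤ |Z i ω|} with hKdef
  have hKmeas : ∀ i, MeasurableSet (K i) := fun i =>
    measurableSet_le measurable_const (hmeas i).abs
  set T : ℕ → Ω → ℝ := fun i => (K i).indicator (fun ω => Z i ω ^ 2) with hTdef
  set W : ℕ → Ω → ℝ := fun i ω => Z i ω ^ 2 - T i ω with hWdef
  have hTval_mem : ∀ i ω, ω ∈ K i → T i ω = Z i ω ^ 2 := by
    intro i ω h; simp only [hTdef]; exact Set.indicator_of_mem h _
  have hTval_nmem : ∀ i ω, ω ∉ K i → T i ω = 0 := by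
    intro i ω h; simp only [hTdef]; exact Set.indicator_of_notMem h _
  have hTnn : ∀ i ω, 0 ≤ T i ω := by
    intro i ω
    by_cases h : ω ∈ K i
    · rw [hTval_mem i ω h]; positivity
    · rw [hTval_nmem i ω h]
  have hWnn : ∀ i ω, 0 ≤ W i ω := by
    intro i ω
    by_cases h : ω ∈ K i
    · simp only [hWdef]; rw [hTval_mem i ω h]; simp
    · simp only [hWdef]; rw [hTval_nmem i ω h, sub_zero]; exact sq_nonneg _
  have hWlec : ∀ i ω, W i ω ≤ c ^ 2 := by
    intro i ω
    by_cases h : ω ∈ K i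
    · simp only [hWdef]; rw [hTval_mem i ω h, sub_self]; positivity
    · simp only [hWdef]; rw [hTval_nmem i ω h, sub_zero]
      have h' : |Z i ω| < c := not_le.mp h
      calc Z i ω ^ 2 = |Z i ω| ^ 2 := (sq_abs _).symm
      _ ≤ c ^ 2 := by nlinarith [abs_nonneg (Z i ω)]
  have hWleZ : ∀ i ω, W i ω ≤ Z i ω ^ 2 := by
    intro i ω; simp only [hWdef]; linarith [hTnn i ω]
  have hTint : ∀ i, Integrable (T i) P := by
    intro i
    simp only [hTdef]
    exact (hZsq_int i).indicator (hKmeas i)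
  have hWint : ∀ i, Integrable (W i) P := fun i => (hZsq_int i).sub (hTint i)
  have hWmeas : ∀ i, Measurable (W i) := by
    intro i
    simp only [hWdef, hTdef]
    exact ((hmeas i).pow_const 2).sub
      (Measurable.indicator ((hmeas i).pow_const 2) (hKmeas i))
  have hWmem : ∀ i, MemLp (W i) 2 P := by
    intro i
    refine MemLp.of_bound (hWmeas i).aestronglyMeasurable (c ^ 2) (ae_of_all _ fun ω => ?_)
    rw [Real.norm_eq_abs, abs_of_nonneg (hWnn i ω)]
    exact hWlec i ω
  have hWindep : iIndepFun W P := by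
    have hg : Measurable (fun x : ℝ => if c ≤ |x| then 0 else x ^ 2) :=
      Measurable.ite (measurableSet_le measurable_const measurable_abs) measurable_const
        (measurable_id.pow_const 2)
    have hWeq : W = fun i => (fun x : ℝ => if c ≤ |x| then 0 else x ^ 2) ∘ Z i := by
      funext i ω
      simp only [Function.comp_apply]
      by_cases h : ω ∈ K i
      · have hc' : c ≤ |Z i ω| := h
        simp only [hWdef]; rw [hTval_mem i ω h, if_pos hc']; ring
      · have hc' : ¬ c ≤ |Z i ω| := h
        simp only [hWdef]; rw [hTval_nmem i ω h, if_neg hc']; ring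
    rw [hWeq]
    exact hindep.comp _ fun _ => hg
  -- variance bound for each W i
  have hvarW : ∀ i, variance (W i) P ≤ δ ^ 2 * s * σ2 i := by
    intro i
    have h1 : variance (W i) P ≤ ∫ ω, W i ω ^ 2 ∂P :=
      variance_le_expectation_sq (hWmeas i).aestronglyMeasurable
    have h2 : (∫ ω, W i ω ^ 2 ∂P) ≤ ∫ ω, c ^ 2 * W i ω ∂P := by
      refine integral_mono (hWmem i).integrable_sq ((hWint i).const_mul _) fun ω => ?_
      have h3 := hWnn i ω; have h4 := hWlec i ω; nlinarith
    have h3 : (∫ ω, c ^ 2 * W i ω ∂P) = c ^ 2 * ∫ ω, W i ω ∂P := integral_const_mul _ _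
    have h4 : (∫ ω, W i ω ∂P) ≤ ∫ ω, Z i ω ^ 2 ∂P :=
      integral_mono (hWint i) (hZsq_int i) (hWleZ i)
    have h5 : c ^ 2 * (∫ ω, W i ω ∂P) ≤ c ^ 2 * σ2 i := by
      rw [← hvar i]; exact mul_le_mul_of_nonneg_left h4 (by positivity)
    calc variance (W i) P ≤ c ^ 2 * σ2 i := by linarith [h1, h2, h3.le, h5]
    _ = δ ^ 2 * s * σ2 i := by rw [hc2]
  have hvarWsum : variance (fun ω => ∑ i ∈ Finset.range n, W i ω) P ≤ δ ^ 2 * s ^ 2 := by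
    have hf : (fun ω => ∑ i ∈ Finset.range n, W i ω) = ∑ i ∈ Finset.range n, W i := by
      funext ω; simp
    rw [hf, IndepFun.variance_sum (fun i _ => hWmem i)
      (fun i _ j _ hij => hWindep.indepFun hij)]
    calc ∑ i ∈ Finset.range n, variance (W i) P
        ≤ ∑ i ∈ Finset.range n, δ ^ 2 * s * σ2 i := Finset.sum_le_sum fun i _ => hvarW i
    _ = δ ^ 2 * s ^ 2 := by rw [← Finset.mul_sum, ← hsdef]; ring
  set X : Ω → ℝ := fun ω => s⁻¹ * ∑ i ∈ Finset.range n, W i ω with hXdef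
  have hXmem : MemLp X 2 P := by
    have hf : (fun ω => ∑ i ∈ Finset.range n, W i ω) = ∑ i ∈ Finset.range n, W i := by
      funext ω; simp
    have h1 : MemLp (fun ω => ∑ i ∈ Finset.range n, W i ω) 2 P := by
      rw [hf]; exact memLp_finset_sum' _ fun i _ => hWmem i
    exact h1.const_mul _
  set EX : ℝ := ∫ ω', X ω' ∂P with hEXdef
  have hvarX : variance X P ≤ δ ^ 2 := by
    rw [hXdef, variance_const_mul]
    have h1 : s⁻¹ ^ 2 * variance (fun ω => ∑ i ∈ Finset.range n, W i ω) P
        ≤ s⁻¹ ^ 2 * (δ ^ 2 * s ^ 2) := mul_le_mul_of_nonneg_left hvarWsum (by positivity)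
    calc s⁻¹ ^ 2 * variance (fun ω => ∑ i ∈ Finset.range n, W i ω) P
        ≤ s⁻¹ ^ 2 * (δ ^ 2 * s ^ 2) := h1
    _ = δ ^ 2 := by field_simp
  have hEU : P {ω | ε / 4 ≤ |X ω - EX|} ≤ ENNReal.ofReal (r / 2) := by
    rw [hEXdef]
    have h := meas_ge_le_variance_div_sq (μ := P) hXmem (show (0:ℝ) < ε / 4 by positivity)
    refine h.trans (ENNReal.ofReal_le_ofReal ?_)
    rw [div_le_iff₀ (by positivity)]
    calc variance X P ≤ δ ^ 2 := hvarX
    _ = r / 2 * (ε / 4) ^ 2 := by rw [hδsq]; ring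
  -- the tail term
  set V : Ω → ℝ := fun ω => s⁻¹ * ∑ i ∈ Finset.range n, T i ω with hVdef
  set Ln : ℝ := s⁻¹ * ∑ i ∈ Finset.range n, ∫ ω in K i, Z i ω ^ 2 ∂P with hLndef
  have hLn' : Ln < min (ε / 4) (ε * r / 32) := hLn
  have hTintegral : ∀ i, ∫ ω, T i ω ∂P = ∫ ω in K i, Z i ω ^ 2 ∂P := by
    intro i
    simp only [hTdef]
    exact integral_indicator (hKmeas i)
  have hLnn : 0 ≤ Ln := by
    rw [hLndef]
    refine mul_nonneg (by positivity) (Finset.sum_nonneg fun i _ => ?_)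
    exact setIntegral_nonneg (hKmeas i) fun ω _ => sq_nonneg _
  have hVnn : ∀ ω, 0 ≤ V ω := by
    intro ω
    simp only [hVdef]
    exact mul_nonneg (by positivity) (Finset.sum_nonneg fun i _ => hTnn i ω)
  have hVint : Integrable V P := by
    simp only [hVdef]
    exact (integrable_finset_sum _ fun i _ => hTint i).const_mul _
  have hVvalue : ∫ ω, V ω ∂P = Ln := by
    simp only [hVdef]
    rw [integral_const_mul, integral_finset_sum _ fun i _ => hTint i, hLndef]
    congr 1
    exact Finset.sum_congr rfl fun i _ => hTintegral i
  have hEV : P {ω | ε / 4 ≤ V ω} ≤ ENNReal.ofReal (r / 8) := by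
    have h := markov_aux P (ae_of_all _ hVnn) hVint (show (0:ℝ) < ε / 4 by positivity)
    refine h.trans (ENNReal.ofReal_le_ofReal ?_)
    rw [hVvalue, div_le_iff₀ (by positivity)]
    have := min_le_right (ε / 4) (ε * r / 32)
    nlinarith [hLn', hr0, hε]
  -- the sample-mean term
  set C : Ω → ℝ := fun ω => s⁻¹ * ((∑ j ∈ Finset.range n, Z j ω) ^ 2 / n) with hCdef
  have hn0 : (0:ℝ) < n := by exact_mod_cast hn1
  have hSsqint : Integrable (fun ω => (∑ j ∈ Finset.range n, Z j ω) ^ 2) P := by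
    have hf : (fun ω => ∑ j ∈ Finset.range n, Z j ω) = ∑ j ∈ Finset.range n, Z j := by
      funext ω; simp
    have hmem : MemLp (fun ω => ∑ j ∈ Finset.range n, Z j ω) 2 P := by
      rw [hf]; exact memLp_finset_sum' _ fun i _ => hL2 i
    exact hmem.integrable_sq
  have hCnn : ∀ ω, 0 ≤ C ω := by
    intro ω; simp only [hCdef]; positivity
  have hCint : Integrable C P := by
    simp only [hCdef, div_eq_mul_inv]
    exact (hSsqint.mul_const _).const_mul _
  have hCvalue : ∫ ω, C ω ∂P = 1 / n := by
    simp only [hCdef, div_eq_mul_inv]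
    rw [integral_const_mul, integral_mul_const, hES2 n, ← hsdef]
    field_simp
  have hEC : P {ω | ε / 4 ≤ C ω} ≤ ENNReal.ofReal (r / 4) := by
    have h := markov_aux P (ae_of_all _ hCnn) hCint (show (0:ℝ) < ε / 4 by positivity)
    refine h.trans (ENNReal.ofReal_le_ofReal ?_)
    rw [hCvalue]
    have heq : (1 / (n:ℝ)) / (ε / 4) = 4 / (n * ε) := by
      field_simp
    rw [heq]; exact hn2
  -- the deterministic term
  set D : ℝ := s⁻¹ * (∑ i ∈ Finset.range n, ∫ ω, W i ω ∂P) - 1 with hDdef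
  have hDeq : D = -Ln := by
    have h1 : ∀ i, (∫ ω, W i ω ∂P) = σ2 i - ∫ ω in K i, Z i ω ^ 2 ∂P := by
      intro i
      simp only [hWdef]
      rw [integral_sub (hZsq_int i) (hTint i), hvar i, hTintegral i]
    rw [hDdef, Finset.sum_congr rfl fun i _ => h1 i, Finset.sum_sub_distrib, ← hsdef,
      mul_sub, inv_mul_cancel₀ hs.ne', hLndef]
    ring
  have habsD : |D| < ε / 4 := by
    rw [hDeq, abs_neg, abs_of_nonneg hLnn]
    exact lt_of_lt_of_le hLn' (min_le_left _ _)
  have hED : P {ω : Ω | ε / 4 ≤ |D|} = 0 := by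
    have h : {ω : Ω | ε / 4 ≤ |D|} = ∅ :=
      Set.eq_empty_iff_forall_notMem.mpr fun ω h => absurd h (not_le.mpr habsD)
    rw [h, measure_empty]
  -- the decomposition
  have hkey : ∀ ω, s⁻¹ * (∑ i ∈ Finset.range n, (Z i ω - (∑ j ∈ Finset.range n, Z j ω) / n) ^ 2) - 1
      = (X ω - EX) + V ω - C ω + D := by
    intro ω
    have hnne : (n:ℝ) ≠ 0 := hn0.ne'
    have hsq : ∑ i ∈ Finset.range n, (Z i ω - (∑ j ∈ Finset.range n, Z j ω) / n) ^ 2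
        = (∑ i ∈ Finset.range n, Z i ω ^ 2) - (∑ j ∈ Finset.range n, Z j ω) ^ 2 / n := by
      have expand : ∀ i ∈ Finset.range n, (Z i ω - (∑ j ∈ Finset.range n, Z j ω) / n) ^ 2
          = Z i ω ^ 2 - 2 * ((∑ j ∈ Finset.range n, Z j ω) / n) * Z i ω
            + ((∑ j ∈ Finset.range n, Z j ω) / n) ^ 2 := fun i _ => by ring
      rw [Finset.sum_congr rfl expand, Finset.sum_add_distrib, Finset.sum_sub_distrib,
        ← Finset.mul_sum, Finset.sum_const, Finset.card_range, nsmul_eq_mul]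
      field_simp
      ring
    have hWT : ∀ i ∈ Finset.range n, Z i ω ^ 2 = W i ω + T i ω := fun i _ => by
      simp only [hWdef]; ring
    have hEX : EX = s⁻¹ * ∑ i ∈ Finset.range n, ∫ ω', W i ω' ∂P := by
      rw [hEXdef]; simp only [hXdef]
      rw [integral_const_mul, integral_finset_sum _ fun i _ => hWint i]
    rw [hsq, Finset.sum_congr rfl hWT, Finset.sum_add_distrib, hEX]
    simp only [hXdef, hVdef, hCdef, hDdef]
    ring
  -- combine
  have hsub : {ω | ε ≤ |s⁻¹ *
        (∑ i ∈ Finset.range n, (Z i ω - (∑ j ∈ Finset.range n, Z j ω) / n) ^ 2) - 1|}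
      ⊆ {ω | ε / 4 ≤ |X ω - EX|} ∪ {ω | ε / 4 ≤ V ω} ∪ {ω | ε / 4 ≤ C ω}
        ∪ {ω : Ω | ε / 4 ≤ |D|} := by
    intro ω hω
    simp only [Set.mem_setOf_eq] at hω
    by_contra hcon
    simp only [Set.mem_union, Set.mem_setOf_eq, not_or, not_le] at hcon
    obtain ⟨⟨⟨h1, h2⟩, h3⟩, h4⟩ := hcon
    have h5 := hkey ω
    rw [h5] at hω
    rcases abs_lt.mp h1 with ⟨h1a, h1b⟩
    rcases abs_lt.mp h4 with ⟨h4a, h4b⟩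
    have hVnn' := hVnn ω
    have hCnn' := hCnn ω
    rcases abs_cases ((X ω - EX) + V ω - C ω + D) with ⟨he, _⟩ | ⟨he, _⟩ <;>
      rw [he] at hω <;>
      [(clear_value X EX V C D; linarith only [hω, h1a, h1b, h2, h3, h4a, h4b, hVnn', hCnn', hε]);
       (clear_value X EX V C D; linarith only [hω, h1a, h1b, h2, h3, h4a, h4b, hVnn', hCnn', hε])]
  calc P {ω | ε ≤ |s⁻¹ *
        (∑ i ∈ Finset.range n, (Z i ω - (∑ j ∈ Finset.range n, Z j ω) / n) ^ 2) - 1|}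
      ≤ P ({ω | ε / 4 ≤ |X ω - EX|} ∪ {ω | ε / 4 ≤ V ω} ∪ {ω | ε / 4 ≤ C ω}
        ∪ {ω : Ω | ε / 4 ≤ |D|}) := measure_mono hsub
  _ ≤ P ({ω | ε / 4 ≤ |X ω - EX|} ∪ {ω | ε / 4 ≤ V ω} ∪ {ω | ε / 4 ≤ C ω})
      + P {ω : Ω | ε / 4 ≤ |D|} := measure_union_le _ _
  _ ≤ (P ({ω | ε / 4 ≤ |X ω - EX|} ∪ {ω | ε / 4 ≤ V ω}) + P {ω | ε / 4 ≤ C ω})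
      + P {ω : Ω | ε / 4 ≤ |D|} := add_le_add_left (measure_union_le _ _) _
  _ ≤ ((P {ω | ε / 4 ≤ |X ω - EX|} + P {ω | ε / 4 ≤ V ω}) + P {ω | ε / 4 ≤ C ω})
      + P {ω : Ω | ε / 4 ≤ |D|} :=
        add_le_add_left (add_le_add_left (measure_union_le _ _) _) _
  _ ≤ ((ENNReal.ofReal (r / 2) + ENNReal.ofReal (r / 8)) + ENNReal.ofReal (r / 4)) + 0 :=
        add_le_add (add_le_add (add_le_add hEU hEV) hEC) hED.le
  _ ≤ ENNReal.ofReal r := by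
      rw [add_zero, ← ENNReal.ofReal_add (by positivity) (by positivity),
        ← ENNReal.ofReal_add (by positivity) (by positivity)]
      exact ENNReal.ofReal_le_ofReal (by linarith)
  _ ≤ η := hrη
end

section
/- As n → ∞, max_{1 ≤ i ≤ n} (Z_i − Z̄_n)² / Σ_{i=1}^n (Z_i − Z̄_n)² converges to 0 in probability; that is, for every ε > 0, P( max_{1 ≤ i ≤ n} (Z_i − Z̄_n)² / Σ_{i=1}^n (Z_i − Z̄_n)² ≥ ε ) → 0, where Z̄_n := n^{−1} Σ_{i=1}^n Z_i. -/
open MeasureTheory ProbabilityTheory Filter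
open scoped Classical ENNReal



/-- squeeze to zero in `ℝ≥0∞`. -/
lemma aux_tendsto_zero_of_le {f g : ℕ → ℝ≥0∞} (hg : Tendsto g atTop (nhds 0))
    (h : ∀ᶠ n in atTop, f n ≤ g n) : Tendsto f atTop (nhds 0) :=
  tendsto_of_tendsto_of_tendsto_of_le_of_le' tendsto_const_nhds hg
    (.of_forall fun _ => zero_le) h

lemma aux_tendsto_zero_of_forall_bound {f : ℕ → ℝ≥0∞}
    (h : ∀ η : ℝ, 0 < η → ∀ᶠ n in atTop, f n ≤ ENNReal.ofReal η) :
    Tendsto f atTop (nhds 0) := by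
  rw [ENNReal.tendsto_atTop_zero]
  intro ε hε
  rcases eq_or_ne ε ⊤ with rfl | hne
  · exact ⟨0, fun n _ => le_top⟩
  · have hpos : 0 < ε.toReal := ENNReal.toReal_pos hε.ne' hne
    obtain ⟨N, hN⟩ := (h ε.toReal hpos).exists_forall_of_atTop
    exact ⟨N, fun n hn => (hN n hn).trans (by rw [ENNReal.ofReal_toReal hne])⟩

lemma aux_sqrt_le_abs_iff {a x : ℝ} (ha : 0 ≤ a) : a ≤ x ^ 2 ↔ Real.sqrt a ≤ |x| := by
  constructor
  · intro h
    have := Real.sqrt_le_sqrt h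
    rwa [Real.sqrt_sq_eq_abs] at this
  · intro h
    have h2 : Real.sqrt a ^ 2 ≤ |x| ^ 2 := pow_le_pow_left₀ (Real.sqrt_nonneg a) h 2
    rwa [Real.sq_sqrt ha, sq_abs] at h2

lemma aux_ofReal_tendsto_zero {f : ℕ → ℝ} (h : Tendsto f atTop (nhds 0)) :
    Tendsto (fun n => ENNReal.ofReal (f n)) atTop (nhds 0) := by
  simpa using ENNReal.tendsto_ofReal h

/-- Lindeberg implies the max term is negligible. -/
lemma aux_maxterm
    {Ω : Type*} [MeasurableSpace Ω] (P : Measure Ω) [IsProbabilityMeasure P]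
    (Z : ℕ → Ω → ℝ) (σ2 : ℕ → ℝ)
    (hmeas : ∀ i, Measurable (Z i))
    (hL2 : ∀ i, MemLp (Z i) 2 P)
    (hpos : ∀ i, 0 < σ2 i)
    (hLind : ∀ ε > (0 : ℝ), Tendsto (fun n =>
      (∑ i ∈ Finset.range n, σ2 i)⁻¹ *
        ∑ i ∈ Finset.range n,
          ∫ ω in {ω | ε * Real.sqrt (∑ j ∈ Finset.range n, σ2 j) ≤ |Z i ω|}, (Z i ω) ^ 2 ∂P)
      atTop (nhds 0))
    (δ : ℝ) (hδ : 0 < δ) :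
    Tendsto (fun n => P {ω | ∃ i ∈ Finset.range n,
      δ * (∑ j ∈ Finset.range n, σ2 j) ≤ (Z i ω) ^ 2}) atTop (nhds 0) := by
  set s : ℕ → ℝ := fun n => ∑ j ∈ Finset.range n, σ2 j with hs
  have hδ' : (0:ℝ) < Real.sqrt δ := Real.sqrt_pos.mpr hδ
  set L : ℕ → ℝ := fun n => (s n)⁻¹ *
      ∑ i ∈ Finset.range n,
        ∫ ω in {ω | Real.sqrt δ * Real.sqrt (s n) ≤ |Z i ω|}, (Z i ω) ^ 2 ∂P with hL
  have hLt : Tendsto L atTop (nhds 0) := hLind _ hδ'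
  have hbd : Tendsto (fun n => ENNReal.ofReal (L n / δ)) atTop (nhds 0) := by
    apply aux_ofReal_tendsto_zero
    simpa using hLt.div_const δ
  apply aux_tendsto_zero_of_le hbd
  filter_upwards [eventually_ge_atTop 1] with n hn
  have hspos : 0 < s n := Finset.sum_pos (fun i _ => hpos i) (by simp [Finset.nonempty_range_iff]; omega)
  -- the bad sets
  set S : ℕ → Set Ω := fun i => {ω | Real.sqrt δ * Real.sqrt (s n) ≤ |Z i ω|} with hS
  have hSmeas : ∀ i, MeasurableSet (S i) := fun i =>
    measurableSet_le measurable_const (hmeas i).abs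
  have hsetEq : ∀ i ω, (δ * s n ≤ (Z i ω) ^ 2) ↔ ω ∈ S i := by
    intro i ω
    rw [aux_sqrt_le_abs_iff (by positivity)]
    rw [Real.sqrt_mul hδ.le]
    rfl
  have hsub : {ω | ∃ i ∈ Finset.range n, δ * s n ≤ (Z i ω) ^ 2}
      ⊆ ⋃ i ∈ Finset.range n, S i := by
    intro ω hω
    obtain ⟨i, hi, h⟩ := hω
    exact Set.mem_biUnion hi ((hsetEq i ω).mp h)
  have hPi : ∀ i, (P (S i)).toReal ≤ (∫ ω in S i, (Z i ω) ^ 2 ∂P) / (δ * s n) := by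
    intro i
    have hint : IntegrableOn (fun ω => (Z i ω) ^ 2) (S i) P :=
      ((hL2 i).integrable_sq).integrableOn
    have := setIntegral_ge_of_const_le_real (hSmeas i) (measure_ne_top P _)
      (fun ω hω => (hsetEq i ω).mpr hω) hint
    rw [le_div_iff₀ (by positivity)]
    rw [show P.real (S i) = (P (S i)).toReal from rfl] at this
    linarith [this]
  calc P {ω | ∃ i ∈ Finset.range n, δ * s n ≤ (Z i ω) ^ 2}
      ≤ P (⋃ i ∈ Finset.range n, S i) := measure_mono hsub
    _ ≤ ∑ i ∈ Finset.range n, P (S i) := measure_biUnion_finset_le _ _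
    _ ≤ ENNReal.ofReal (L n / δ) := by
        rw [← ENNReal.ofReal_toReal (a := ∑ i ∈ Finset.range n, P (S i))
          (by simp [measure_ne_top])]
        apply ENNReal.ofReal_le_ofReal
        rw [ENNReal.toReal_sum (fun i _ => measure_ne_top P _)]
        calc ∑ i ∈ Finset.range n, (P (S i)).toReal
            ≤ ∑ i ∈ Finset.range n, (∫ ω in S i, (Z i ω) ^ 2 ∂P) / (δ * s n) :=
              Finset.sum_le_sum fun i _ => hPi i
          _ = L n / δ := by
              rw [← Finset.sum_div, hL]
              simp only []
              rw [inv_mul_eq_div, div_div, mul_comm (s n) δ]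

/-- variance of each `Z i` is `σ2 i`. -/
lemma aux_variance_eq
    {Ω : Type*} [MeasurableSpace Ω] (P : Measure Ω) [IsProbabilityMeasure P]
    (Z : ℕ → Ω → ℝ) (σ2 : ℕ → ℝ)
    (hL2 : ∀ i, MemLp (Z i) 2 P)
    (hmean : ∀ i, ∫ ω, Z i ω ∂P = 0)
    (hvar : ∀ i, ∫ ω, (Z i ω) ^ 2 ∂P = σ2 i) (i : ℕ) :
    variance (Z i) P = σ2 i := by
  rw [variance_eq_sub (hL2 i)]
  have h1 : (P[(Z i) ^ 2] : ℝ) = σ2 i := by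
    rw [← hvar i]; rfl
  have h2 : (P[Z i] : ℝ) = 0 := hmean i
  rw [h1, h2]
  ring

/-- the mean term is negligible. -/
lemma aux_meanterm
    {Ω : Type*} [MeasurableSpace Ω] (P : Measure Ω) [IsProbabilityMeasure P]
    (Z : ℕ → Ω → ℝ) (σ2 : ℕ → ℝ)
    (hmeas : ∀ i, Measurable (Z i))
    (hindep : iIndepFun Z P)
    (hL2 : ∀ i, MemLp (Z i) 2 P)
    (hmean : ∀ i, ∫ ω, Z i ω ∂P = 0)
    (hvar : ∀ i, ∫ ω, (Z i ω) ^ 2 ∂P = σ2 i)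
    (hpos : ∀ i, 0 < σ2 i)
    (δ : ℝ) (hδ : 0 < δ) :
    Tendsto (fun n => P {ω | δ * (∑ j ∈ Finset.range n, σ2 j) ≤
      (∑ j ∈ Finset.range n, Z j ω) ^ 2 / n}) atTop (nhds 0) := by
  set s : ℕ → ℝ := fun n => ∑ j ∈ Finset.range n, σ2 j with hs
  have hbd : Tendsto (fun n : ℕ => ENNReal.ofReal (δ⁻¹ * (1 / n))) atTop (nhds 0) := by
    apply aux_ofReal_tendsto_zero
    simpa using tendsto_one_div_atTop_nhds_zero_nat.const_mul δ⁻¹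
  apply aux_tendsto_zero_of_le hbd
  filter_upwards [eventually_ge_atTop 1] with n hn
  have hspos : 0 < s n := Finset.sum_pos (fun i _ => hpos i)
    (by simp [Finset.nonempty_range_iff]; omega)
  have hnpos : (0:ℝ) < n := by exact_mod_cast hn
  set X : Ω → ℝ := ∑ j ∈ Finset.range n, Z j with hX
  have hXL2 : MemLp X 2 P := memLp_finset_sum' _ fun j _ => hL2 j
  have hXmean : (P[X] : ℝ) = 0 := by
    show ∫ ω, X ω ∂P = 0
    simp only [hX, Finset.sum_apply]
    rw [integral_finset_sum _ fun j _ => (hL2 j).integrable one_le_two]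
    simp [hmean]
  have hXvar : variance X P = s n := by
    rw [hX, IndepFun.variance_sum (fun i _ => hL2 i)
      (fun i _ j _ hij => hindep.indepFun hij)]
    exact Finset.sum_congr rfl fun i _ =>
      aux_variance_eq P Z σ2 hL2 hmean hvar i
  set c : ℝ := Real.sqrt (δ * s n * n) with hc
  have hcpos : 0 < c := Real.sqrt_pos.mpr (by positivity)
  have hsub : {ω | δ * s n ≤ (∑ j ∈ Finset.range n, Z j ω) ^ 2 / (n:ℝ)}
      ⊆ {ω | c ≤ |X ω - P[X]|} := by
    intro ω hω
    simp only [Set.mem_setOf_eq] at hω ⊢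
    rw [hXmean, sub_zero]
    have hXω : X ω = ∑ j ∈ Finset.range n, Z j ω := by
      rw [hX]; simp
    rw [hXω] at *
    have h1 : δ * s n * n ≤ (∑ j ∈ Finset.range n, Z j ω) ^ 2 := by
      rw [← le_div_iff₀ hnpos] at *
      calc δ * s n ≤ _ := hω
        _ ≤ _ := le_refl _
    rw [hc, hXω]
    exact (aux_sqrt_le_abs_iff (by positivity)).mp h1
  calc P {ω | δ * s n ≤ (∑ j ∈ Finset.range n, Z j ω) ^ 2 / (n:ℝ)}
      ≤ P {ω | c ≤ |X ω - P[X]|} := measure_mono hsub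
    _ ≤ ENNReal.ofReal (variance X P / c ^ 2) := meas_ge_le_variance_div_sq hXL2 hcpos
    _ ≤ ENNReal.ofReal (δ⁻¹ * (1 / n)) := by
        apply ENNReal.ofReal_le_ofReal
        rw [hXvar, hc, Real.sq_sqrt (by positivity)]
        have h1 : δ ≠ 0 := hδ.ne'
        have h2 : s n ≠ 0 := hspos.ne'
        have h3 : (n:ℝ) ≠ 0 := hnpos.ne'
        apply le_of_eq
        field_simp

/-- lower weak LLN for the squares, under Lindeberg. -/
lemma aux_wlln
    {Ω : Type*} [MeasurableSpace Ω] (P : Measure Ω) [IsProbabilityMeasure P]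
    (Z : ℕ → Ω → ℝ) (σ2 : ℕ → ℝ)
    (hmeas : ∀ i, Measurable (Z i))
    (hindep : iIndepFun Z P)
    (hL2 : ∀ i, MemLp (Z i) 2 P)
    (hvar : ∀ i, ∫ ω, (Z i ω) ^ 2 ∂P = σ2 i)
    (hpos : ∀ i, 0 < σ2 i)
    (hLind : ∀ ε > (0 : ℝ), Tendsto (fun n =>
      (∑ i ∈ Finset.range n, σ2 i)⁻¹ *
        ∑ i ∈ Finset.range n,
          ∫ ω in {ω | ε * Real.sqrt (∑ j ∈ Finset.range n, σ2 j) ≤ |Z i ω|}, (Z i ω) ^ 2 ∂P)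
      atTop (nhds 0))
    (δ : ℝ) (hδ : 0 < δ) :
    Tendsto (fun n => P {ω | ∑ i ∈ Finset.range n, (Z i ω) ^ 2 ≤
      (1 - δ) * ∑ j ∈ Finset.range n, σ2 j}) atTop (nhds 0) := by
  set s : ℕ → ℝ := fun n => ∑ j ∈ Finset.range n, σ2 j with hs
  apply aux_tendsto_zero_of_forall_bound
  intro η hη
  set c : ℝ := δ * Real.sqrt η / 2 with hc
  have hcpos : 0 < c := by positivity
  have hc2 : 4 * c ^ 2 / δ ^ 2 = η := by
    rw [hc, div_pow, mul_pow, Real.sq_sqrt hη.le]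
    field_simp
    ring
  -- eventually the Lindeberg sum at level c is at most δ/2
  have hev : ∀ᶠ n in atTop, (s n)⁻¹ *
      (∑ i ∈ Finset.range n,
        ∫ ω in {ω | c * Real.sqrt (s n) ≤ |Z i ω|}, (Z i ω) ^ 2 ∂P) ≤ δ / 2 :=
    (hLind c hcpos).eventually (eventually_le_nhds (by linarith))
  filter_upwards [hev, eventually_ge_atTop 1] with n hLn hn
  have hspos : 0 < s n := Finset.sum_pos (fun i _ => hpos i)
    (by simp [Finset.nonempty_range_iff]; omega)
  -- truncated variables
  set Y : ℕ → Ω → ℝ := fun i ω =>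
    if c * Real.sqrt (s n) ≤ |Z i ω| then 0 else (Z i ω) ^ 2 with hY
  have hYmeas : ∀ i, Measurable (Y i) := fun i =>
    Measurable.ite (measurableSet_le measurable_const (hmeas i).abs)
      measurable_const ((hmeas i).pow_const 2)
  have hYnonneg : ∀ i ω, 0 ≤ Y i ω := by
    intro i ω; rw [hY]; dsimp only; split_ifs <;> positivity
  have hYle : ∀ i ω, Y i ω ≤ (Z i ω) ^ 2 := by
    intro i ω; rw [hY]; dsimp only; split_ifs with h
    · positivity
    · exact le_rfl
  have hYbd : ∀ i ω, Y i ω ≤ c ^ 2 * s n := by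
    intro i ω
    rw [hY]; dsimp only
    split_ifs with h
    · positivity
    · push_neg at h
      have h' : |Z i ω| ^ 2 ≤ (c * Real.sqrt (s n)) ^ 2 := by
        apply pow_le_pow_left₀ (abs_nonneg _) h.le
      rw [sq_abs, mul_pow, Real.sq_sqrt hspos.le] at h'
      exact h'
  have hYL2 : ∀ i, MemLp (Y i) 2 P := by
    intro i
    apply MemLp.of_bound ((hYmeas i).aestronglyMeasurable) (c ^ 2 * s n)
    filter_upwards with ω
    rw [Real.norm_eq_abs, abs_of_nonneg (hYnonneg i ω)]
    exact hYbd i ω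
  set T : Ω → ℝ := ∑ i ∈ Finset.range n, Y i with hT
  have hTL2 : MemLp T 2 P := memLp_finset_sum' _ fun i _ => hYL2 i
  -- variance bound
  have hvarYi : ∀ i, variance (Y i) P ≤ c ^ 2 * s n * σ2 i := by
    intro i
    refine (variance_le_expectation_sq (hYL2 i).aestronglyMeasurable).trans ?_
    have hint1 : Integrable (fun ω => (Y i ω) ^ 2) P := (hYL2 i).integrable_sq
    have hint2 : Integrable (fun ω => c ^ 2 * s n * (Z i ω) ^ 2) P :=
      ((hL2 i).integrable_sq).const_mul _
    have hptw : ∀ ω, (Y i ω) ^ 2 ≤ c ^ 2 * s n * (Z i ω) ^ 2 := by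
      intro ω
      have h1 := hYbd i ω
      have h2 := hYnonneg i ω
      have h3 := hYle i ω
      nlinarith
    calc (P[(Y i) ^ 2] : ℝ) = ∫ ω, (Y i ω) ^ 2 ∂P := rfl
      _ ≤ ∫ ω, c ^ 2 * s n * (Z i ω) ^ 2 ∂P := integral_mono hint1 hint2 hptw
      _ = c ^ 2 * s n * σ2 i := by rw [integral_const_mul, hvar i]
  have hvarT : variance T P ≤ c ^ 2 * (s n) ^ 2 := by
    rw [hT, IndepFun.variance_sum (fun i _ => hYL2 i) ?_]
    · calc ∑ i ∈ Finset.range n, variance (Y i) P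
          ≤ ∑ i ∈ Finset.range n, c ^ 2 * s n * σ2 i :=
            Finset.sum_le_sum fun i _ => hvarYi i
        _ = c ^ 2 * (s n) ^ 2 := by rw [← Finset.mul_sum]; ring
    · intro i _ j _ hij
      have h := (hindep.indepFun hij)
      have : Y i = (fun x : ℝ => if c * Real.sqrt (s n) ≤ |x| then 0 else x ^ 2) ∘ Z i := rfl
      have hf : Measurable (fun x : ℝ => if c * Real.sqrt (s n) ≤ |x| then 0 else x ^ 2) :=
        Measurable.ite (measurableSet_le measurable_const measurable_abs)
          measurable_const (measurable_id.pow_const 2)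
      exact h.comp hf hf
  -- expectation of T
  have hEY : ∀ i, ∫ ω, Y i ω ∂P =
      σ2 i - ∫ ω in {ω | c * Real.sqrt (s n) ≤ |Z i ω|}, (Z i ω) ^ 2 ∂P := by
    intro i
    have hSmeas : MeasurableSet {ω | c * Real.sqrt (s n) ≤ |Z i ω|} :=
      measurableSet_le measurable_const (hmeas i).abs
    have heq : ∀ ω, Y i ω = (Z i ω) ^ 2 -
        Set.indicator {ω | c * Real.sqrt (s n) ≤ |Z i ω|} (fun ω => (Z i ω) ^ 2) ω := by
      intro ω
      rw [hY]; dsimp only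
      by_cases h : c * Real.sqrt (s n) ≤ |Z i ω|
      · rw [if_pos h, Set.indicator_of_mem (show ω ∈ {ω | c * Real.sqrt (s n) ≤ |Z i ω|} from h)]; ring
      · rw [if_neg h, Set.indicator_of_notMem (show ω ∉ {ω | c * Real.sqrt (s n) ≤ |Z i ω|} from h)]; ring
    simp_rw [heq]
    rw [integral_sub ((hL2 i).integrable_sq)
      (((hL2 i).integrable_sq).indicator hSmeas), hvar i, integral_indicator hSmeas]
  have hET : ∫ ω, T ω ∂P ≥ (1 - δ / 2) * s n := by
    have : ∫ ω, T ω ∂P = ∑ i ∈ Finset.range n, ∫ ω, Y i ω ∂P := by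
      simp only [hT, Finset.sum_apply]
      exact integral_finset_sum _ fun i _ => (hYL2 i).integrable one_le_two
    rw [this]
    have hLn' : ∑ i ∈ Finset.range n,
        ∫ ω in {ω | c * Real.sqrt (s n) ≤ |Z i ω|}, (Z i ω) ^ 2 ∂P ≤ δ / 2 * s n := by
      rw [inv_mul_le_iff₀ hspos] at hLn
      linarith [hLn]
    calc ∑ i ∈ Finset.range n, ∫ ω, Y i ω ∂P
        = s n - ∑ i ∈ Finset.range n,
            ∫ ω in {ω | c * Real.sqrt (s n) ≤ |Z i ω|}, (Z i ω) ^ 2 ∂P := by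
          rw [Finset.sum_congr rfl fun i _ => hEY i, Finset.sum_sub_distrib]
      _ ≥ (1 - δ / 2) * s n := by nlinarith
  -- inclusion in the Chebyshev event
  have hsub : {ω | ∑ i ∈ Finset.range n, (Z i ω) ^ 2 ≤ (1 - δ) * s n}
      ⊆ {ω | δ / 2 * s n ≤ |T ω - P[T]|} := by
    intro ω hω
    simp only [Set.mem_setOf_eq] at hω ⊢
    have hTω : T ω = ∑ i ∈ Finset.range n, Y i ω := by
      simp only [hT, Finset.sum_apply]
    have h1 : T ω ≤ ∑ i ∈ Finset.range n, (Z i ω) ^ 2 := by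
      rw [hTω]; exact Finset.sum_le_sum fun i _ => hYle i ω
    have h2 : T ω ≤ (1 - δ) * s n := h1.trans hω
    have h3 : (P[T] : ℝ) - T ω ≥ δ / 2 * s n := by
      have := hET
      nlinarith
    calc δ / 2 * s n ≤ P[T] - T ω := h3
      _ ≤ |T ω - P[T]| := by rw [abs_sub_comm]; exact le_abs_self _
  calc P {ω | ∑ i ∈ Finset.range n, (Z i ω) ^ 2 ≤ (1 - δ) * s n}
      ≤ P {ω | δ / 2 * s n ≤ |T ω - P[T]|} := measure_mono hsub
    _ ≤ ENNReal.ofReal (variance T P / (δ / 2 * s n) ^ 2) :=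
        meas_ge_le_variance_div_sq hTL2 (by positivity)
    _ ≤ ENNReal.ofReal η := by
        apply ENNReal.ofReal_le_ofReal
        rw [← hc2]
        rw [div_le_div_iff₀ (by positivity) (by positivity)]
        nlinarith [hvarT, sq_nonneg (s n), hspos]

lemma aux_subset {Ω : Type*} [MeasurableSpace Ω] (P : Measure Ω) [IsProbabilityMeasure P] (Z : ℕ → Ω → ℝ) (σ2 : ℕ → ℝ) (n : ℕ)
    (hn : 1 ≤ n) (ε : ℝ) (hε : 0 < ε) (hspos : 0 < ∑ j ∈ Finset.range n, σ2 j) :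
    {ω | ∃ i ∈ Finset.range n,
        ε ≤ (Z i ω - (∑ j ∈ Finset.range n, Z j ω) / n) ^ 2 /
          ∑ j ∈ Finset.range n, (Z j ω - (∑ l ∈ Finset.range n, Z l ω) / n) ^ 2}
      ⊆ ({ω | ∃ i ∈ Finset.range n, ε / 8 * (∑ j ∈ Finset.range n, σ2 j) ≤ (Z i ω) ^ 2}
        ∪ {ω | ε / 8 * (∑ j ∈ Finset.range n, σ2 j) ≤ (∑ j ∈ Finset.range n, Z j ω) ^ 2 / n}
        ∪ {ω | 1 / 4 * (∑ j ∈ Finset.range n, σ2 j) ≤ (∑ j ∈ Finset.range n, Z j ω) ^ 2 / n})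
        ∪ {ω | ∑ i ∈ Finset.range n, (Z i ω) ^ 2 ≤ (1 - 1 / 4) * ∑ j ∈ Finset.range n, σ2 j} := by
  intro ω hω
  obtain ⟨i, hi, hεle⟩ := hω
  set s : ℝ := ∑ j ∈ Finset.range n, σ2 j with hsdef
  set S : ℝ := ∑ j ∈ Finset.range n, Z j ω with hS
  set D : ℝ := ∑ j ∈ Finset.range n, (Z j ω - S / n) ^ 2 with hD
  have hnR : (1:ℝ) ≤ n := by exact_mod_cast hn
  have hnpos : (0:ℝ) < n := by linarith
  have hDnn : 0 ≤ D := Finset.sum_nonneg fun _ _ => sq_nonneg _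
  have hDpos : 0 < D := by
    rcases hDnn.lt_or_eq with h | h
    · exact h
    · exfalso; rw [← h, div_zero] at hεle; linarith
  have hN : ε * D ≤ (Z i ω - S / n) ^ 2 := (le_div_iff₀ hDpos).mp hεle
  have hid : D = (∑ j ∈ Finset.range n, (Z j ω) ^ 2) - S ^ 2 / n := by
    have hexp : ∀ j ∈ Finset.range n, (Z j ω - S / n) ^ 2 =
        (Z j ω) ^ 2 - 2 * (S / n) * Z j ω + (S / n) ^ 2 := fun j _ => by ring
    calc D = ∑ j ∈ Finset.range n,
          ((Z j ω) ^ 2 - 2 * (S / n) * Z j ω + (S / n) ^ 2) := Finset.sum_congr rfl hexp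
      _ = (∑ j ∈ Finset.range n, (Z j ω) ^ 2) - 2 * (S / n) * S + n * (S / n) ^ 2 := by
          rw [Finset.sum_add_distrib, Finset.sum_sub_distrib, ← Finset.mul_sum,
            Finset.sum_const, Finset.card_range, nsmul_eq_mul, ← hS]
      _ = (∑ j ∈ Finset.range n, (Z j ω) ^ 2) - S ^ 2 / n := by
          field_simp
          ring
  by_cases hhalf : s / 2 < D
  · have h1 : ε * (s / 2) ≤ (Z i ω - S / n) ^ 2 := by nlinarith
    have h2 : (Z i ω - S / n) ^ 2 ≤ 2 * (Z i ω) ^ 2 + 2 * (S / n) ^ 2 := by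
      nlinarith [sq_nonneg (Z i ω + S / n)]
    by_cases hZ : ε / 8 * s ≤ (Z i ω) ^ 2
    · exact Or.inl (Or.inl (Or.inl ⟨i, hi, hZ⟩))
    · push_neg at hZ
      have h3 : ε / 8 * s ≤ (S / n) ^ 2 := by nlinarith
      have h4 : ε / 8 * s ≤ S ^ 2 / n := by
        have heq : (S / n) ^ 2 * n = S ^ 2 / n := by field_simp
        nlinarith [sq_nonneg (S / n)]
      exact Or.inl (Or.inl (Or.inr h4))
  · push_neg at hhalf
    by_cases hCc : 1 / 4 * s ≤ S ^ 2 / n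
    · exact Or.inl (Or.inr hCc)
    · push_neg at hCc
      refine Or.inr ?_
      show ∑ i ∈ Finset.range n, (Z i ω) ^ 2 ≤ (1 - 1 / 4) * s
      have : ∑ j ∈ Finset.range n, (Z j ω) ^ 2 = D + S ^ 2 / n := by linarith [hid]
      linarith

/-- Under Lindeberg's condition,
`max_{1≤i≤n} (Z_i − Z̄_n)² / ∑_{i=1}^n (Z_i − Z̄_n)²` converges to 0 in probability. -/
theorem max_centered_square_ratio_negligible
    {Ω : Type*} [MeasurableSpace Ω] (P : Measure Ω) [IsProbabilityMeasure P]
    (Z : ℕ → Ω → ℝ) (σ2 : ℕ → ℝ)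
    (hmeas : ∀ i, Measurable (Z i))
    (hindep : iIndepFun Z P)
    (hL2 : ∀ i, MemLp (Z i) 2 P)
    (hmean : ∀ i, ∫ ω, Z i ω ∂P = 0)
    (hvar : ∀ i, ∫ ω, (Z i ω) ^ 2 ∂P = σ2 i)
    (hpos : ∀ i, 0 < σ2 i)
    (hLind : ∀ ε > (0 : ℝ), Tendsto (fun n =>
      (∑ i ∈ Finset.range n, σ2 i)⁻¹ *
        ∑ i ∈ Finset.range n,
          ∫ ω in {ω | ε * Real.sqrt (∑ j ∈ Finset.range n, σ2 j) ≤ |Z i ω|}, (Z i ω) ^ 2 ∂P)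
      atTop (nhds 0)) :
    ∀ ε > (0 : ℝ), Tendsto (fun n =>
      P {ω | ∃ i ∈ Finset.range n,
        ε ≤ (Z i ω - (∑ j ∈ Finset.range n, Z j ω) / n) ^ 2 /
          ∑ j ∈ Finset.range n, (Z j ω - (∑ l ∈ Finset.range n, Z l ω) / n) ^ 2})
      atTop (nhds 0) := by
  intro ε hε
  have hA := aux_maxterm P Z σ2 hmeas hL2 hpos hLind (ε / 8) (by positivity)
  have hB := aux_meanterm P Z σ2 hmeas hindep hL2 hmean hvar hpos (ε / 8) (by positivity)
  have hC := aux_meanterm P Z σ2 hmeas hindep hL2 hmean hvar hpos (1 / 4) (by norm_num)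
  have hM := aux_wlln P Z σ2 hmeas hindep hL2 hvar hpos hLind (1 / 4) (by norm_num)
  have hsum := ((hA.add hB).add hC).add hM
  rw [show ((0:ℝ≥0∞) + 0 + 0 + 0) = 0 by simp] at hsum
  apply aux_tendsto_zero_of_le hsum
  filter_upwards [eventually_ge_atTop 1] with n hn
  have hspos : 0 < ∑ j ∈ Finset.range n, σ2 j := Finset.sum_pos (fun i _ => hpos i)
    (by simp [Finset.nonempty_range_iff]; omega)
  have hsub := aux_subset P Z σ2 n hn ε hε hspos
  refine (measure_mono hsub).trans ?_
  refine (measure_union_le _ _).trans ?_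
  refine add_le_add (le_trans (measure_union_le _ _)
    (add_le_add (measure_union_le _ _) le_rfl)) le_rfl
end

section
/- As n → ∞, max_{0 ≤ k ≤ n} | Σ_{i=1}^k (Z_i² − σ_i²) | / s_n² converges to 0 in probability; that is, for every ε > 0, P( max_{0 ≤ k ≤ n} | Σ_{i=1}^k (Z_i² − σ_i²) | ≥ ε s_n² ) → 0. -/
open MeasureTheory ProbabilityTheory Filter
open scoped Classical

-- basic facts about truncation
section trunc
variable (t : ℝ)

noncomputable def gtr (x : ℝ) : ℝ := if t ≤ |x| then 0 else x ^ 2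
noncomputable def rtr (x : ℝ) : ℝ := if t ≤ |x| then x ^ 2 else 0

lemma gtr_meas : Measurable (gtr t) :=
  Measurable.ite (measurableSet_le measurable_const measurable_abs) measurable_const
    (measurable_id.pow_const 2)

lemma rtr_meas : Measurable (rtr t) :=
  Measurable.ite (measurableSet_le measurable_const measurable_abs)
    (measurable_id.pow_const 2) measurable_const

lemma gtr_nonneg (x : ℝ) : 0 ≤ gtr t x := by
  unfold gtr; split_ifs <;> positivity

lemma rtr_nonneg (x : ℝ) : 0 ≤ rtr t x := by
  unfold rtr; split_ifs <;> positivity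

lemma gtr_add_rtr (x : ℝ) : gtr t x + rtr t x = x ^ 2 := by
  unfold gtr rtr; split_ifs <;> ring

lemma gtr_le_sq (x : ℝ) : gtr t x ≤ x ^ 2 := by
  unfold gtr
  split_ifs with h
  · positivity
  · exact le_rfl

lemma rtr_le_sq (x : ℝ) : rtr t x ≤ x ^ 2 := by
  unfold rtr
  split_ifs with h
  · exact le_rfl
  · positivity

lemma gtr_le_const (ht : 0 ≤ t) (x : ℝ) : gtr t x ≤ t ^ 2 := by
  unfold gtr; split_ifs with h
  · positivity
  · push_neg at h
    calc x ^ 2 = |x| ^ 2 := (sq_abs x).symm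
    _ ≤ t ^ 2 := by nlinarith [abs_nonneg x]

lemma gtr_sq_le (ht : 0 ≤ t) (x : ℝ) : (gtr t x) ^ 2 ≤ t ^ 2 * gtr t x := by
  have h1 := gtr_le_const t ht x
  have h2 := gtr_nonneg t x
  nlinarith

end trunc

lemma rtr_integral {Ω : Type*} [MeasurableSpace Ω] (P : Measure Ω)
    {Z : Ω → ℝ} (hZ : Measurable Z) (t : ℝ) :
    ∫ ω, rtr t (Z ω) ∂P = ∫ ω in {ω | t ≤ |Z ω|}, (Z ω) ^ 2 ∂P := by
  rw [← integral_indicator (measurableSet_le measurable_const hZ.abs)]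
  refine integral_congr_ae (Filter.Eventually.of_forall fun ω => ?_)
  simp only [Set.indicator_apply, Set.mem_setOf_eq, rtr]

lemma lindeberg_event
    {Ω : Type*} [MeasurableSpace Ω] (P : Measure Ω) [IsProbabilityMeasure P]
    (Z : ℕ → Ω → ℝ) (σ2 : ℕ → ℝ)
    (hmeas : ∀ i, Measurable (Z i))
    (hpos : ∀ i, 0 < σ2 i)
    (hLind : ∀ ε > (0 : ℝ), Tendsto (fun n =>
      (∑ i ∈ Finset.range n, σ2 i)⁻¹ *
        ∑ i ∈ Finset.range n,
          ∫ ω in {ω | ε * Real.sqrt (∑ j ∈ Finset.range n, σ2 j) ≤ |Z i ω|}, (Z i ω) ^ 2 ∂P)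
      atTop (nhds 0))
    (δ a : ℝ) (hδ : 0 < δ) (ha : 0 < a) :
    ∃ N, ∀ n ≥ N, 1 ≤ n ∧
      (∑ i ∈ Finset.range n, ∫ ω, rtr (δ * Real.sqrt (∑ j ∈ Finset.range n, σ2 j)) (Z i ω) ∂P)
        ≤ a * ∑ i ∈ Finset.range n, σ2 i := by
  have hev := ((hLind δ hδ).eventually (gt_mem_nhds ha)).and (eventually_ge_atTop 1)
  obtain ⟨N, hN⟩ := eventually_atTop.mp hev
  refine ⟨N, fun n hn => ?_⟩
  obtain ⟨hq, hn1⟩ := hN n hn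
  refine ⟨hn1, ?_⟩
  set s := ∑ i ∈ Finset.range n, σ2 i with hsdef
  have hs : 0 < s := Finset.sum_pos (fun i _ => hpos i) (by simp; omega)
  have hrw : (∑ i ∈ Finset.range n, ∫ ω, rtr (δ * Real.sqrt s) (Z i ω) ∂P)
      = ∑ i ∈ Finset.range n,
          ∫ ω in {ω | δ * Real.sqrt s ≤ |Z i ω|}, (Z i ω) ^ 2 ∂P :=
    Finset.sum_congr rfl fun i _ => rtr_integral P (hmeas i) _
  rw [hrw]
  set Sn := ∑ i ∈ Finset.range n,
      ∫ ω in {ω | δ * Real.sqrt s ≤ |Z i ω|}, (Z i ω) ^ 2 ∂P with hSndef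
  have h1 : s⁻¹ * Sn < a := hq
  have h2 : Sn = s * (s⁻¹ * Sn) := by field_simp
  calc Sn = s * (s⁻¹ * Sn) := h2
  _ ≤ s * a := mul_le_mul_of_nonneg_left h1.le hs.le
  _ = a * s := mul_comm _ _

lemma aux_single
    {Ω : Type*} [MeasurableSpace Ω] (P : Measure Ω) [IsProbabilityMeasure P]
    (Z : ℕ → Ω → ℝ) (σ2 : ℕ → ℝ)
    (hmeas : ∀ i, Measurable (Z i))
    (hindep : iIndepFun Z P)
    (hL2 : ∀ i, MemLp (Z i) 2 P)
    (hvar : ∀ i, ∫ ω, (Z i ω) ^ 2 ∂P = σ2 i)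
    (hpos : ∀ i, 0 < σ2 i)
    (hLind : ∀ ε > (0 : ℝ), Tendsto (fun n =>
      (∑ i ∈ Finset.range n, σ2 i)⁻¹ *
        ∑ i ∈ Finset.range n,
          ∫ ω in {ω | ε * Real.sqrt (∑ j ∈ Finset.range n, σ2 j) ≤ |Z i ω|}, (Z i ω) ^ 2 ∂P)
      atTop (nhds 0))
    (c ρ : ℝ) (hc : 0 < c) (hρ : 0 < ρ) :
    ∃ N, ∀ n ≥ N, ∀ k ≤ n,
      P {ω | c * ∑ i ∈ Finset.range n, σ2 i ≤ |∑ i ∈ Finset.range k, ((Z i ω) ^ 2 - σ2 i)|}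
        ≤ ENNReal.ofReal ρ := by
  set δ := Real.sqrt (ρ * c ^ 2 / 8) with hδdef
  have hδ : 0 < δ := Real.sqrt_pos.2 (by positivity)
  have hδ2 : δ ^ 2 = ρ * c ^ 2 / 8 := Real.sq_sqrt (by positivity)
  have ha : 0 < min (c / 4) (ρ * c / 8) := by positivity
  obtain ⟨N, hN⟩ := lindeberg_event P Z σ2 hmeas hpos hLind δ _ hδ ha
  refine ⟨N, fun n hn k hk => ?_⟩
  obtain ⟨hn1, hΛle⟩ := hN n hn
  set s := ∑ i ∈ Finset.range n, σ2 i with hsdef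
  have hs : 0 < s := Finset.sum_pos (fun i _ => hpos i) (by simp; omega)
  have hcs : 0 < c * s := mul_pos hc hs
  set t := δ * Real.sqrt s with htdef
  have ht : 0 < t := by positivity
  have ht2 : t ^ 2 = δ ^ 2 * s := by rw [mul_pow, Real.sq_sqrt hs.le]
  set Y : ℕ → Ω → ℝ := fun i => gtr t ∘ Z i with hYdef
  set R : ℕ → Ω → ℝ := fun i ω => rtr t (Z i ω) with hRdef
  have hYapp : ∀ i ω, Y i ω = gtr t (Z i ω) := fun i ω => rfl
  have hZint : ∀ i, Integrable (fun ω => (Z i ω) ^ 2) P := fun i => (hL2 i).integrable_sq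
  have hRint : ∀ i, Integrable (R i) P := fun i =>
    (hZint i).mono' ((rtr_meas t).comp (hmeas i)).aestronglyMeasurable
      (Filter.Eventually.of_forall fun ω => by
        rw [Real.norm_eq_abs, abs_of_nonneg (rtr_nonneg t _)]; exact rtr_le_sq t _)
  have hYint : ∀ i, Integrable (Y i) P := fun i =>
    (hZint i).mono' ((gtr_meas t).comp (hmeas i)).aestronglyMeasurable
      (Filter.Eventually.of_forall fun ω => by
        rw [hYapp, Real.norm_eq_abs, abs_of_nonneg (gtr_nonneg t _)]; exact gtr_le_sq t _)
  have hY2 : ∀ i, MemLp (Y i) 2 P := fun i =>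
    MemLp.of_bound ((gtr_meas t).comp (hmeas i)).aestronglyMeasurable (t ^ 2)
      (Filter.Eventually.of_forall fun ω => by
        rw [hYapp, Real.norm_eq_abs, abs_of_nonneg (gtr_nonneg t _)]; exact gtr_le_const t ht.le _)
  have hYER : ∀ i, (∫ ω, Y i ω ∂P) + (∫ ω, R i ω ∂P) = σ2 i := fun i => by
    rw [← integral_add (hYint i) (hRint i), ← hvar i]
    exact integral_congr_ae (Filter.Eventually.of_forall fun ω => gtr_add_rtr t (Z i ω))
  have hERnonneg : ∀ i, 0 ≤ ∫ ω, R i ω ∂P := fun i =>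
    integral_nonneg fun ω => rtr_nonneg t _
  set Λ := ∑ i ∈ Finset.range n, ∫ ω, R i ω ∂P with hΛdef
  have hΛ1 : Λ ≤ c / 4 * s :=
    hΛle.trans (mul_le_mul_of_nonneg_right (min_le_left _ _) hs.le)
  have hΛ2 : Λ ≤ ρ * c / 8 * s :=
    hΛle.trans (mul_le_mul_of_nonneg_right (min_le_right _ _) hs.le)
  set W : Ω → ℝ := ∑ i ∈ Finset.range k, Y i with hWdef
  have hWapp : ∀ ω, W ω = ∑ i ∈ Finset.range k, Y i ω := fun ω => by
    rw [hWdef]; simp [Finset.sum_apply]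
  have hWint : (∫ x, W x ∂P) = ∑ i ∈ Finset.range k, ∫ x, Y i x ∂P := by
    rw [integral_congr_ae (Filter.Eventually.of_forall hWapp)]
    exact integral_finset_sum _ fun i _ => hYint i
  -- inclusion of the event in the union of two events
  have hincl : {ω | c * s ≤ |∑ i ∈ Finset.range k, ((Z i ω) ^ 2 - σ2 i)|}
      ⊆ {ω | c * s / 2 ≤ |W ω - ∫ x, W x ∂P|}
        ∪ {ω | c * s / 4 ≤ ∑ i ∈ Finset.range n, R i ω} := by
    intro ω hω
    simp only [Set.mem_setOf_eq] at hω
    have hdecomp : ∑ i ∈ Finset.range k, ((Z i ω) ^ 2 - σ2 i)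
        = (W ω - ∫ x, W x ∂P)
          + ((∑ i ∈ Finset.range k, R i ω) - ∑ i ∈ Finset.range k, ∫ x, R i x ∂P) := by
      rw [hWapp, hWint, ← Finset.sum_sub_distrib, ← Finset.sum_sub_distrib,
        ← Finset.sum_add_distrib]
      refine Finset.sum_congr rfl fun i _ => ?_
      rw [← hYER i, hYapp, ← gtr_add_rtr t (Z i ω)]
      ring
    rcases le_or_gt (c * s / 2) |W ω - ∫ x, W x ∂P| with h | h
    · exact Or.inl h
    · right
      have htri : c * s / 2
          ≤ |(∑ i ∈ Finset.range k, R i ω) - ∑ i ∈ Finset.range k, ∫ x, R i x ∂P| := by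
        have := abs_add_le (W ω - ∫ x, W x ∂P)
          ((∑ i ∈ Finset.range k, R i ω) - ∑ i ∈ Finset.range k, ∫ x, R i x ∂P)
        rw [← hdecomp] at this
        linarith
      have hSRnonneg : 0 ≤ ∑ i ∈ Finset.range k, R i ω :=
        Finset.sum_nonneg fun i _ => rtr_nonneg t _
      have hESRle : (∑ i ∈ Finset.range k, ∫ x, R i x ∂P) ≤ Λ := by
        rw [hΛdef]
        exact Finset.sum_le_sum_of_subset_of_nonneg
          (Finset.range_subset_range.2 hk) (fun i _ _ => hERnonneg i)
      have hESRnonneg : 0 ≤ ∑ i ∈ Finset.range k, ∫ x, R i x ∂P :=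
        Finset.sum_nonneg fun i _ => hERnonneg i
      have hSR : c * s / 4 ≤ ∑ i ∈ Finset.range k, R i ω := by
        rcases le_abs.mp htri with h' | h'
        · linarith
        · linarith
      have hext : (∑ i ∈ Finset.range k, R i ω) ≤ ∑ i ∈ Finset.range n, R i ω :=
        Finset.sum_le_sum_of_subset_of_nonneg
          (Finset.range_subset_range.2 hk) (fun i _ _ => rtr_nonneg t _)
      exact le_trans hSR hext
  -- Chebyshev bound
  have hWmem : MemLp W 2 P := memLp_finset_sum' _ fun i _ => hY2 i
  have hvarW : variance W P ≤ δ ^ 2 * s ^ 2 := by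
    have hvs : variance W P = ∑ i ∈ Finset.range k, variance (Y i) P := by
      rw [hWdef]
      exact IndepFun.variance_sum (fun i _ => hY2 i)
        (fun i _ j _ hij => (hindep.indepFun hij).comp (gtr_meas t) (gtr_meas t))
    have hvi : ∀ i, variance (Y i) P ≤ t ^ 2 * σ2 i := by
      intro i
      have h1 : variance (Y i) P ≤ ∫ x, (Y i x) ^ 2 ∂P := by
        have := variance_le_expectation_sq (μ := P) (X := Y i)
          ((gtr_meas t).comp (hmeas i)).aestronglyMeasurable
        simpa [Pi.pow_apply] using this
      have h2 : (∫ x, (Y i x) ^ 2 ∂P) ≤ ∫ x, t ^ 2 * Y i x ∂P := by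
        refine integral_mono ((hY2 i).integrable_sq) ((hYint i).const_mul _) fun x => ?_
        rw [hYapp]
        exact gtr_sq_le t ht.le (Z i x)
      have h3 : (∫ x, t ^ 2 * Y i x ∂P) = t ^ 2 * ∫ x, Y i x ∂P := integral_const_mul _ _
      have h4 : (∫ x, Y i x ∂P) ≤ σ2 i := by
        rw [← hYER i]; linarith [hERnonneg i]
      have h5 : t ^ 2 * (∫ x, Y i x ∂P) ≤ t ^ 2 * σ2 i :=
        mul_le_mul_of_nonneg_left h4 (by positivity)
      linarith
    have hskle : (∑ i ∈ Finset.range k, σ2 i) ≤ s := by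
      rw [hsdef]
      exact Finset.sum_le_sum_of_subset_of_nonneg (Finset.range_subset_range.2 hk)
        (fun i _ _ => (hpos i).le)
    calc variance W P = ∑ i ∈ Finset.range k, variance (Y i) P := hvs
    _ ≤ ∑ i ∈ Finset.range k, t ^ 2 * σ2 i := Finset.sum_le_sum fun i _ => hvi i
    _ = t ^ 2 * ∑ i ∈ Finset.range k, σ2 i := (Finset.mul_sum _ _ _).symm
    _ ≤ t ^ 2 * s := mul_le_mul_of_nonneg_left hskle (by positivity)
    _ = δ ^ 2 * s ^ 2 := by rw [ht2]; ring
  have hPA : P {ω | c * s / 2 ≤ |W ω - ∫ x, W x ∂P|} ≤ ENNReal.ofReal (ρ / 2) := by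
    refine le_trans (meas_ge_le_variance_div_sq hWmem (by positivity))
      (ENNReal.ofReal_le_ofReal ?_)
    have h1 : variance W P / (c * s / 2) ^ 2 ≤ (δ ^ 2 * s ^ 2) / (c * s / 2) ^ 2 := by
      gcongr
    have h2 : (δ ^ 2 * s ^ 2) / (c * s / 2) ^ 2 = ρ / 2 := by
      rw [hδ2]; field_simp; ring
    linarith
  -- Markov bound
  have hPB : P {ω | c * s / 4 ≤ ∑ i ∈ Finset.range n, R i ω} ≤ ENNReal.ofReal (ρ / 2) := by
    have hint : Integrable (fun ω => ∑ i ∈ Finset.range n, R i ω) P :=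
      integrable_finset_sum _ fun i _ => hRint i
    have hmark := mul_meas_ge_le_integral_of_nonneg (μ := P)
      (f := fun ω => ∑ i ∈ Finset.range n, R i ω)
      (Filter.Eventually.of_forall fun ω => Finset.sum_nonneg fun i _ => rtr_nonneg t _)
      hint (c * s / 4)
    have hintsum : (∫ ω, ∑ i ∈ Finset.range n, R i ω ∂P) = Λ :=
      integral_finset_sum _ fun i _ => hRint i
    rw [hintsum] at hmark
    rw [measureReal_def] at hmark
    have htoReal : (P {ω | c * s / 4 ≤ ∑ i ∈ Finset.range n, R i ω}).toReal ≤ ρ / 2 := by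
      nlinarith [hmark, hΛ2, ENNReal.toReal_nonneg
        (a := P {ω | c * s / 4 ≤ ∑ i ∈ Finset.range n, R i ω}), hcs]
    calc P {ω | c * s / 4 ≤ ∑ i ∈ Finset.range n, R i ω}
        = ENNReal.ofReal (P {ω | c * s / 4 ≤ ∑ i ∈ Finset.range n, R i ω}).toReal :=
          (ENNReal.ofReal_toReal (measure_ne_top P _)).symm
    _ ≤ ENNReal.ofReal (ρ / 2) := ENNReal.ofReal_le_ofReal htoReal
  calc P {ω | c * s ≤ |∑ i ∈ Finset.range k, ((Z i ω) ^ 2 - σ2 i)|}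
      ≤ P ({ω | c * s / 2 ≤ |W ω - ∫ x, W x ∂P|}
          ∪ {ω | c * s / 4 ≤ ∑ i ∈ Finset.range n, R i ω}) := measure_mono hincl
  _ ≤ P {ω | c * s / 2 ≤ |W ω - ∫ x, W x ∂P|}
      + P {ω | c * s / 4 ≤ ∑ i ∈ Finset.range n, R i ω} := measure_union_le _ _
  _ ≤ ENNReal.ofReal (ρ / 2) + ENNReal.ofReal (ρ / 2) := add_le_add hPA hPB
  _ = ENNReal.ofReal ρ := by
      rw [← ENNReal.ofReal_add (by positivity) (by positivity)]
      norm_num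

lemma aux_smallvar
    {Ω : Type*} [MeasurableSpace Ω] (P : Measure Ω) [IsProbabilityMeasure P]
    (Z : ℕ → Ω → ℝ) (σ2 : ℕ → ℝ)
    (hmeas : ∀ i, Measurable (Z i))
    (hL2 : ∀ i, MemLp (Z i) 2 P)
    (hvar : ∀ i, ∫ ω, (Z i ω) ^ 2 ∂P = σ2 i)
    (hpos : ∀ i, 0 < σ2 i)
    (hLind : ∀ ε > (0 : ℝ), Tendsto (fun n =>
      (∑ i ∈ Finset.range n, σ2 i)⁻¹ *
        ∑ i ∈ Finset.range n,
          ∫ ω in {ω | ε * Real.sqrt (∑ j ∈ Finset.range n, σ2 j) ≤ |Z i ω|}, (Z i ω) ^ 2 ∂P)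
      atTop (nhds 0))
    (η : ℝ) (hη : 0 < η) :
    ∃ N, ∀ n ≥ N, ∀ i < n, σ2 i ≤ η * ∑ j ∈ Finset.range n, σ2 j := by
  set δ := Real.sqrt (η / 2) with hδdef
  have hδ : 0 < δ := Real.sqrt_pos.2 (by positivity)
  have hδ2 : δ ^ 2 = η / 2 := Real.sq_sqrt (by positivity)
  obtain ⟨N, hN⟩ := lindeberg_event P Z σ2 hmeas hpos hLind δ (η / 2) hδ (by positivity)
  refine ⟨N, fun n hn i hi => ?_⟩
  obtain ⟨hn1, hΛle⟩ := hN n hn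
  set s := ∑ j ∈ Finset.range n, σ2 j with hsdef
  have hs : 0 < s := Finset.sum_pos (fun j _ => hpos j) (by simp; omega)
  set t := δ * Real.sqrt s with htdef
  have ht : 0 < t := by positivity
  have ht2 : t ^ 2 = δ ^ 2 * s := by rw [mul_pow, Real.sq_sqrt hs.le]
  have hZint : Integrable (fun ω => (Z i ω) ^ 2) P := (hL2 i).integrable_sq
  have hRint : Integrable (fun ω => rtr t (Z i ω)) P :=
    hZint.mono' ((rtr_meas t).comp (hmeas i)).aestronglyMeasurable
      (Filter.Eventually.of_forall fun ω => by
        rw [Real.norm_eq_abs, abs_of_nonneg (rtr_nonneg t _)]; exact rtr_le_sq t _)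
  have hYint : Integrable (fun ω => gtr t (Z i ω)) P :=
    hZint.mono' ((gtr_meas t).comp (hmeas i)).aestronglyMeasurable
      (Filter.Eventually.of_forall fun ω => by
        rw [Real.norm_eq_abs, abs_of_nonneg (gtr_nonneg t _)]; exact gtr_le_sq t _)
  have hYER : (∫ ω, gtr t (Z i ω) ∂P) + (∫ ω, rtr t (Z i ω) ∂P) = σ2 i := by
    rw [← integral_add hYint hRint, ← hvar i]
    exact integral_congr_ae (Filter.Eventually.of_forall fun ω => gtr_add_rtr t (Z i ω))
  have hEY : (∫ ω, gtr t (Z i ω) ∂P) ≤ η / 2 * s := by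
    have h1 : (∫ ω, gtr t (Z i ω) ∂P) ≤ ∫ _, t ^ 2 ∂P :=
      integral_mono hYint (integrable_const _) fun ω => gtr_le_const t ht.le _
    have h2 : (∫ _ω, t ^ 2 ∂P) = t ^ 2 := by simp
    rw [h2] at h1
    rw [← hδ2, ← ht2]
    exact h1
  have hER : (∫ ω, rtr t (Z i ω) ∂P) ≤ η / 2 * s := by
    refine le_trans ?_ hΛle
    exact Finset.single_le_sum (f := fun j => ∫ ω, rtr t (Z j ω) ∂P)
      (fun j _ => integral_nonneg fun ω => rtr_nonneg t _) (Finset.mem_range.2 hi)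
  calc σ2 i = (∫ ω, gtr t (Z i ω) ∂P) + (∫ ω, rtr t (Z i ω) ∂P) := hYER.symm
  _ ≤ η / 2 * s + η / 2 * s := add_le_add hEY hER
  _ = η * s := by ring

/-- Under Lindeberg's condition,
`max_{0≤k≤n} |∑_{i=1}^k (Z_i² − σ_i²)| / s_n²` converges to 0 in probability. -/
theorem max_partial_sums_of_squares_negligible
    {Ω : Type*} [MeasurableSpace Ω] (P : Measure Ω) [IsProbabilityMeasure P]
    (Z : ℕ → Ω → ℝ) (σ2 : ℕ → ℝ)
    (hmeas : ∀ i, Measurable (Z i))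
    (hindep : iIndepFun Z P)
    (hL2 : ∀ i, MemLp (Z i) 2 P)
    (hmean : ∀ i, ∫ ω, Z i ω ∂P = 0)
    (hvar : ∀ i, ∫ ω, (Z i ω) ^ 2 ∂P = σ2 i)
    (hpos : ∀ i, 0 < σ2 i)
    (hLind : ∀ ε > (0 : ℝ), Tendsto (fun n =>
      (∑ i ∈ Finset.range n, σ2 i)⁻¹ *
        ∑ i ∈ Finset.range n,
          ∫ ω in {ω | ε * Real.sqrt (∑ j ∈ Finset.range n, σ2 j) ≤ |Z i ω|}, (Z i ω) ^ 2 ∂P)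
      atTop (nhds 0)) :
    ∀ ε > (0 : ℝ), Tendsto (fun n =>
      P {ω | ∃ k ∈ Finset.range (n+1),
        ε * ∑ i ∈ Finset.range n, σ2 i ≤ |∑ i ∈ Finset.range k, ((Z i ω) ^ 2 - σ2 i)|})
      atTop (nhds 0) := by
  intro ε hε
  rw [ENNReal.tendsto_atTop_zero]
  intro ρ hρ
  obtain ⟨r, hr0, hrρ⟩ : ∃ r : ℝ, 0 < r ∧ ENNReal.ofReal r ≤ ρ := by
    rcases eq_or_ne ρ ⊤ with h | h
    · exact ⟨1, one_pos, h ▸ le_top⟩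
    · exact ⟨ρ.toReal, ENNReal.toReal_pos hρ.ne' h, by rw [ENNReal.ofReal_toReal h]⟩
  set M := ⌈(8 : ℝ) / ε⌉₊ with hMdef
  have hM : (8 : ℝ) / ε ≤ M := Nat.le_ceil _
  set ρ₀ := r / (M + 2) with hρ₀def
  have hρ₀ : 0 < ρ₀ := by positivity
  obtain ⟨N₁, hN₁⟩ := aux_single P Z σ2 hmeas hindep hL2 hvar hpos hLind
    (3 * ε / 4) ρ₀ (by positivity) hρ₀
  obtain ⟨N₂, hN₂⟩ := aux_smallvar P Z σ2 hmeas hL2 hvar hpos hLind (ε / 8) (by positivity)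
  refine ⟨max (max N₁ N₂) 1, fun n hn => ?_⟩
  have hnN₁ : N₁ ≤ n := le_trans (le_trans (le_max_left _ _) (le_max_left _ _)) hn
  have hnN₂ : N₂ ≤ n := le_trans (le_trans (le_max_right _ _) (le_max_left _ _)) hn
  have hn1 : 1 ≤ n := le_trans (le_max_right _ _) hn
  set s := ∑ i ∈ Finset.range n, σ2 i with hsdef
  have hs : 0 < s := Finset.sum_pos (fun i _ => hpos i) (by simp; omega)
  set h := ε / 8 * s with hhdef
  have hh : 0 < h := by positivity
  have hσh : ∀ i < n, σ2 i ≤ h := by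
    intro i hi
    have := hN₂ n hnN₂ i hi
    rw [hhdef]
    linarith
  have hmono : ∀ a b : ℕ, a ≤ b →
      (∑ i ∈ Finset.range a, σ2 i) ≤ ∑ i ∈ Finset.range b, σ2 i := fun a b hab =>
    Finset.sum_le_sum_of_subset_of_nonneg (Finset.range_subset_range.2 hab) fun i _ _ => (hpos i).le
  have hsk_le : ∀ k, k ≤ n → (∑ i ∈ Finset.range k, σ2 i) ≤ s := fun k hk => hmono k n hk
  -- the grid
  have hQ : ∀ j : ℕ, ∃ m, ((j : ℝ) * h ≤ ∑ i ∈ Finset.range m, σ2 i ∨ n ≤ m) :=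
    fun j => ⟨n, Or.inr le_rfl⟩
  set G : ℕ → ℕ := fun j => Nat.find (hQ j) with hGdef
  have hGle : ∀ j, G j ≤ n := fun j => Nat.find_min' _ (Or.inr le_rfl)
  have hGle' : ∀ (j : ℕ) (k : ℕ), (j : ℝ) * h ≤ (∑ i ∈ Finset.range k, σ2 i) → G j ≤ k :=
    fun j k hjk => Nat.find_min' _ (Or.inl hjk)
  have hGlb : ∀ (j : ℕ), (j : ℝ) * h ≤ s → (j : ℝ) * h ≤ ∑ i ∈ Finset.range (G j), σ2 i := by
    intro j hj
    rcases Nat.find_spec (hQ j) with h1 | h1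
    · exact h1
    · have : G j = n := le_antisymm (hGle j) h1
      rw [this]
      exact hj
  have hGub : ∀ j, (∑ i ∈ Finset.range (G j), σ2 i) ≤ (j : ℝ) * h + h := by
    intro j
    rcases Nat.eq_zero_or_pos (G j) with h0 | h0
    · rw [h0]
      simp only [Finset.range_zero, Finset.sum_empty]
      positivity
    · obtain ⟨m, hm⟩ : ∃ m, G j = m + 1 := ⟨G j - 1, by omega⟩
      have hmin := Nat.find_min (hQ j) (show m < G j by omega)
      push_neg at hmin
      obtain ⟨hm1, hm2⟩ := hmin
      have hσ : σ2 m ≤ h := hσh m hm2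
      rw [hm, Finset.sum_range_succ]
      linarith
  have hMh : s ≤ (M : ℝ) * h := by
    have h1 : (8 / ε) * h ≤ (M : ℝ) * h := mul_le_mul_of_nonneg_right hM hh.le
    have h2 : (8 / ε) * h = s := by rw [hhdef]; field_simp
    linarith
  have hGM : G (M + 1) = n := by
    refine le_antisymm (hGle _) ?_
    by_contra hlt
    push_neg at hlt
    rcases Nat.find_spec (hQ (M + 1)) with h1 | h1
    · have hle' : (∑ i ∈ Finset.range (Nat.find (hQ (M + 1))), σ2 i) ≤ s :=
        hsk_le _ (hGle (M + 1))
      have h3 := le_trans h1 hle'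
      push_cast at h3
      nlinarith
    · exact absurd h1 (not_le.mpr hlt)
  -- key pointwise claim
  have hkey : ∀ ω k, k ≤ n → ε * s ≤ |∑ i ∈ Finset.range k, ((Z i ω) ^ 2 - σ2 i)| →
      ∃ j < M + 2,
        3 * ε / 4 * s ≤ |∑ i ∈ Finset.range (G j), ((Z i ω) ^ 2 - σ2 i)| := by
    intro ω k hk hTk
    set T : ℕ → ℝ := fun m => ∑ i ∈ Finset.range m, ((Z i ω) ^ 2 - σ2 i) with hTdef
    have hTdiff : ∀ a b : ℕ, a ≤ b →
        (∑ i ∈ Finset.range a, σ2 i) - (∑ i ∈ Finset.range b, σ2 i) ≤ T b - T a := by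
      intro a b hab
      have h1 : ∑ i ∈ Finset.Ico a b, ((Z i ω) ^ 2 - σ2 i) = T b - T a :=
        Finset.sum_Ico_eq_sub _ hab
      have h2 : ∑ i ∈ Finset.Ico a b, σ2 i
          = (∑ i ∈ Finset.range b, σ2 i) - ∑ i ∈ Finset.range a, σ2 i :=
        Finset.sum_Ico_eq_sub _ hab
      have h3 : ∑ i ∈ Finset.Ico a b, (-(σ2 i)) ≤ ∑ i ∈ Finset.Ico a b, ((Z i ω) ^ 2 - σ2 i) :=
        Finset.sum_le_sum fun i _ => by nlinarith [sq_nonneg (Z i ω)]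
      rw [Finset.sum_neg_distrib] at h3
      linarith
    set sk := ∑ i ∈ Finset.range k, σ2 i with hskdef
    have hsknn : 0 ≤ sk := Finset.sum_nonneg fun i _ => (hpos i).le
    set j := ⌊sk / h⌋₊ with hjdef
    have hj1 : (j : ℝ) * h ≤ sk := by
      have h1 : (j : ℝ) ≤ sk / h := Nat.floor_le (by positivity)
      calc (j : ℝ) * h ≤ sk / h * h := mul_le_mul_of_nonneg_right h1 hh.le
      _ = sk := by field_simp
    have hj2 : sk < ((j : ℝ) + 1) * h := by
      have h1 : sk / h < (j : ℝ) + 1 := Nat.lt_floor_add_one _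
      calc sk = sk / h * h := by field_simp
      _ < ((j : ℝ) + 1) * h := mul_lt_mul_of_pos_right h1 hh
    have hjM : j ≤ M := by
      have h1 : (j : ℝ) ≤ sk / h := Nat.floor_le (by positivity)
      have h2 : sk / h ≤ s / h := by
        gcongr
        exact hsk_le k hk
      have h3 : s / h = 8 / ε := by rw [hhdef]; field_simp
      have : (j : ℝ) ≤ (M : ℝ) := by linarith
      exact_mod_cast this
    have hεs : 0 ≤ ε * s := le_of_lt (mul_pos hε hs)
    rcases le_abs.mp hTk with hpos' | hneg'
    · rcases le_or_gt (((j : ℝ) + 1) * h) s with hle | hgt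
      · refine ⟨j + 1, by omega, ?_⟩
        have hg2lb : ((j : ℝ) + 1) * h ≤ ∑ i ∈ Finset.range (G (j + 1)), σ2 i := by
          have := hGlb (j + 1) (by push_cast; exact hle)
          push_cast at this
          exact this
        have hkg2 : k ≤ G (j + 1) := by
          by_contra hlt
          push_neg at hlt
          have := hmono _ _ hlt.le
          rw [← hskdef] at this
          linarith
        have hg2ub : (∑ i ∈ Finset.range (G (j + 1)), σ2 i) ≤ ((j : ℝ) + 1) * h + h := by
          have := hGub (j + 1)
          push_cast at this
          linarith
        have hd := hTdiff k (G (j + 1)) hkg2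
        rw [← hskdef] at hd
        have hfinal : 3 * ε / 4 * s ≤ T (G (j + 1)) := by
          have h2h : (2 : ℝ) * h = ε / 4 * s := by rw [hhdef]; ring
          linarith
        exact le_trans hfinal (le_abs_self _)
      · refine ⟨M + 1, by omega, ?_⟩
        rw [hGM]
        have hd := hTdiff k n hk
        rw [← hskdef, ← hsdef] at hd
        have h8 : h = ε / 8 * s := hhdef
        have hfinal : 3 * ε / 4 * s ≤ T n := by linarith
        exact le_trans hfinal (le_abs_self _)
    · refine ⟨j, by omega, ?_⟩
      have hg1k : G j ≤ k := hGle' j k hj1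
      have hg1lb : (j : ℝ) * h ≤ ∑ i ∈ Finset.range (G j), σ2 i :=
        hGlb j (le_trans hj1 (hsk_le k hk))
      have hd := hTdiff (G j) k hg1k
      rw [← hskdef] at hd
      have h8 : h = ε / 8 * s := hhdef
      have habs : 3 * ε / 4 * s ≤ -(T (G j)) := by linarith
      exact le_trans habs (neg_le_abs _)
  -- assembly
  have hincl : {ω | ∃ k ∈ Finset.range (n + 1),
        ε * s ≤ |∑ i ∈ Finset.range k, ((Z i ω) ^ 2 - σ2 i)|}
      ⊆ ⋃ j ∈ Finset.range (M + 2),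
          {ω | 3 * ε / 4 * s ≤ |∑ i ∈ Finset.range (G j), ((Z i ω) ^ 2 - σ2 i)|} := by
    intro ω hω
    obtain ⟨k, hkmem, hTk⟩ := hω
    have hk : k ≤ n := Nat.lt_succ_iff.mp (Finset.mem_range.mp hkmem)
    obtain ⟨j, hj, hTG⟩ := hkey ω k hk hTk
    exact Set.mem_biUnion (Finset.mem_range.2 hj) hTG
  calc P {ω | ∃ k ∈ Finset.range (n + 1),
        ε * s ≤ |∑ i ∈ Finset.range k, ((Z i ω) ^ 2 - σ2 i)|}
      ≤ P (⋃ j ∈ Finset.range (M + 2),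
          {ω | 3 * ε / 4 * s ≤ |∑ i ∈ Finset.range (G j), ((Z i ω) ^ 2 - σ2 i)|}) :=
        measure_mono hincl
  _ ≤ ∑ j ∈ Finset.range (M + 2),
        P {ω | 3 * ε / 4 * s ≤ |∑ i ∈ Finset.range (G j), ((Z i ω) ^ 2 - σ2 i)|} :=
        measure_biUnion_finset_le _ _
  _ ≤ ∑ _j ∈ Finset.range (M + 2), ENNReal.ofReal ρ₀ :=
        Finset.sum_le_sum fun j _ => hN₁ n hnN₁ (G j) (hGle j)
  _ = (M + 2 : ℕ) * ENNReal.ofReal ρ₀ := by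
        rw [Finset.sum_const, Finset.card_range, nsmul_eq_mul]
  _ ≤ ρ := by
        rw [← ENNReal.ofReal_natCast, ← ENNReal.ofReal_mul (by positivity)]
        refine le_trans (ENNReal.ofReal_le_ofReal ?_) hrρ
        rw [hρ₀def]
        have hM2 : ((M : ℝ) + 2) ≠ 0 := by positivity
        push_cast
        field_simp
        exact le_rfl
end

section
/- For each n and 1 ≤ i ≤ n let W_{n,i} := s_n^{−2} Z_i² 1{Z_i² ≤ s_n²}. Then, as n → ∞, max_{1 ≤ k ≤ n} | Σ_{i=1}^k (W_{n,i} − E W_{n,i}) | converges to 0 in probability; that is, for every ε > 0, P( max_{1 ≤ k ≤ n} | Σ_{i=1}^k (W_{n,i} − E W_{n,i}) | ≥ ε ) → 0. -/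
open MeasureTheory ProbabilityTheory Filter
open scoped Classical

/-- The truncated, normalized square `W_{n,i} = s_n^{-2} Z_i² 1{Z_i² ≤ s_n²}`. -/
noncomputable def Wtrunc {Ω : Type*} (Z : ℕ → Ω → ℝ) (σ2 : ℕ → ℝ) (n i : ℕ) (ω : Ω) : ℝ :=
  if (Z i ω) ^ 2 ≤ ∑ j ∈ Finset.range n, σ2 j then
    (Z i ω) ^ 2 / ∑ j ∈ Finset.range n, σ2 j else 0


section Wlem

variable {Ω : Type*} [MeasurableSpace Ω] {P : Measure Ω} [IsProbabilityMeasure P]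
  {Z : ℕ → Ω → ℝ} {σ2 : ℕ → ℝ}

lemma s2_nonneg (σ2 : ℕ → ℝ) (hpos : ∀ i, 0 < σ2 i) (n : ℕ) :
    0 ≤ ∑ j ∈ Finset.range n, σ2 j :=
  Finset.sum_nonneg fun i _ => (hpos i).le

lemma s2_pos (σ2 : ℕ → ℝ) (hpos : ∀ i, 0 < σ2 i) {n : ℕ} (hn : 1 ≤ n) :
    0 < ∑ j ∈ Finset.range n, σ2 j :=
  Finset.sum_pos (fun i _ => hpos i) ⟨0, Finset.mem_range.2 hn⟩

lemma Wtrunc_nonneg (hpos : ∀ i, 0 < σ2 i) (n i : ℕ) (ω : Ω) :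
    0 ≤ Wtrunc Z σ2 n i ω := by
  unfold Wtrunc; split_ifs
  · exact div_nonneg (sq_nonneg _) (s2_nonneg σ2 hpos n)
  · exact le_rfl

    
lemma Wtrunc_le_one (hpos : ∀ i, 0 < σ2 i) (n i : ℕ) (ω : Ω) :
    Wtrunc Z σ2 n i ω ≤ 1 := by
  unfold Wtrunc; split_ifs with h
  · exact div_le_one_of_le₀ h (s2_nonneg σ2 hpos n)
  · exact zero_le_one

lemma Wtrunc_le (hpos : ∀ i, 0 < σ2 i) (n i : ℕ) (ω : Ω) :
    Wtrunc Z σ2 n i ω ≤ (Z i ω) ^ 2 / ∑ j ∈ Finset.range n, σ2 j := by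
  unfold Wtrunc; split_ifs with h
  · exact le_rfl
  · exact div_nonneg (sq_nonneg _) (s2_nonneg σ2 hpos n)

lemma measurable_wtrunc (hmeas : ∀ i, Measurable (Z i)) (n i : ℕ) :
    Measurable (Wtrunc Z σ2 n i) := by
  have h : Measurable fun x : ℝ =>
      if x ^ 2 ≤ ∑ j ∈ Finset.range n, σ2 j then x ^ 2 / ∑ j ∈ Finset.range n, σ2 j else 0 :=
    Measurable.ite (measurableSet_le (measurable_id.pow_const 2) measurable_const)
      ((measurable_id.pow_const 2).div_const _) measurable_const
  exact h.comp (hmeas i)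

lemma memℒp_wtrunc (hmeas : ∀ i, Measurable (Z i)) (hpos : ∀ i, 0 < σ2 i) (n i : ℕ)
    (p : ENNReal) : MemLp (Wtrunc Z σ2 n i) p P :=
  memLp_of_bounded
    (Filter.Eventually.of_forall fun ω => ⟨Wtrunc_nonneg hpos n i ω, Wtrunc_le_one hpos n i ω⟩)
    (measurable_wtrunc hmeas n i).aestronglyMeasurable p

lemma integrable_wtrunc (hmeas : ∀ i, Measurable (Z i)) (hpos : ∀ i, 0 < σ2 i) (n i : ℕ) :
    Integrable (Wtrunc Z σ2 n i) P :=
  (memℒp_wtrunc hmeas hpos n i 2).integrable one_le_two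

lemma integral_wtrunc_nonneg (hpos : ∀ i, 0 < σ2 i) (n i : ℕ) :
    0 ≤ ∫ ω, Wtrunc Z σ2 n i ω ∂P :=
  integral_nonneg (Wtrunc_nonneg hpos n i)

lemma integral_wtrunc_le (hmeas : ∀ i, Measurable (Z i)) (hpos : ∀ i, 0 < σ2 i)
    (hL2 : ∀ i, MemLp (Z i) 2 P) (hvar : ∀ i, ∫ ω, (Z i ω) ^ 2 ∂P = σ2 i) (n i : ℕ) :
    ∫ ω, Wtrunc Z σ2 n i ω ∂P ≤ σ2 i / ∑ j ∈ Finset.range n, σ2 j := by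
  have hsq : Integrable (fun ω => (Z i ω) ^ 2) P := by
    simpa using (hL2 i).integrable_sq
  have h := integral_mono (integrable_wtrunc hmeas hpos n i)
    (hsq.div_const (∑ j ∈ Finset.range n, σ2 j)) (fun ω => Wtrunc_le hpos n i ω)
  rwa [integral_div, hvar i] at h

end Wlem

section Main

variable {Ω : Type*} [MeasurableSpace Ω] {P : Measure Ω} [IsProbabilityMeasure P]
  {Z : ℕ → Ω → ℝ} {σ2 : ℕ → ℝ}

lemma sumvar_le (hmeas : ∀ i, Measurable (Z i)) (hpos : ∀ i, 0 < σ2 i)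
    (hL2 : ∀ i, MemLp (Z i) 2 P) (hvar : ∀ i, ∫ ω, (Z i ω) ^ 2 ∂P = σ2 i)
    {η : ℝ} (hη : 0 < η) {n : ℕ} (hn : 1 ≤ n) :
    ∑ i ∈ Finset.range n, variance (Wtrunc Z σ2 n i) P ≤ η / 2 +
      (∑ j ∈ Finset.range n, σ2 j)⁻¹ * ∑ i ∈ Finset.range n,
        ∫ ω in {ω | Real.sqrt (η / 2) * Real.sqrt (∑ j ∈ Finset.range n, σ2 j) ≤ |Z i ω|},
          (Z i ω) ^ 2 ∂P := by
  set s := ∑ j ∈ Finset.range n, σ2 j with hs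
  have hs0 : 0 ≤ s := s2_nonneg σ2 hpos n
  have hsp : 0 < s := s2_pos σ2 hpos hn
  set e := Real.sqrt (η / 2) with he
  have he2 : e ^ 2 = η / 2 := Real.sq_sqrt (by linarith)
  have hsq : ∀ i : ℕ, Integrable (fun ω => (Z i ω) ^ 2) P := fun i => by
    simpa using (hL2 i).integrable_sq
  have hptw : ∀ i ω, (Wtrunc Z σ2 n i ω) ^ 2 ≤ (η / 2) * ((Z i ω) ^ 2 / s) +
      Set.indicator {ω' | e * Real.sqrt s ≤ |Z i ω'|} (fun ω' => (Z i ω') ^ 2 / s) ω := by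
    intro i ω
    have hd0 : (0:ℝ) ≤ (Z i ω) ^ 2 / s := div_nonneg (sq_nonneg _) hs0
    have hind0 : 0 ≤ Set.indicator {ω' | e * Real.sqrt s ≤ |Z i ω'|}
        (fun ω' => (Z i ω') ^ 2 / s) ω :=
      Set.indicator_nonneg (fun ω' _ => div_nonneg (sq_nonneg _) hs0) ω
    have h0 := Wtrunc_nonneg (Z := Z) hpos n i ω
    have h1 := Wtrunc_le_one (Z := Z) hpos n i ω
    have h2 := Wtrunc_le (Z := Z) hpos n i ω
    rw [← hs] at h2
    by_cases hc : (Z i ω) ^ 2 ≤ (η / 2) * s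
    · have h3 : (Z i ω) ^ 2 / s ≤ η / 2 := by rw [div_le_iff₀ hsp]; linarith
      have h4 : (Wtrunc Z σ2 n i ω) ^ 2 ≤ (η / 2) * ((Z i ω) ^ 2 / s) := by
        rw [sq]
        exact mul_le_mul (h2.trans h3) h2 h0 (by linarith)
      linarith
    · have hmem : ω ∈ {ω' | e * Real.sqrt s ≤ |Z i ω'|} := by
        have h3 : (e * Real.sqrt s) ^ 2 ≤ (Z i ω) ^ 2 := by
          rw [mul_pow, he2, Real.sq_sqrt hs0]; linarith
        have h4 := Real.sqrt_le_sqrt h3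
        rwa [Real.sqrt_sq (by positivity), Real.sqrt_sq_eq_abs] at h4
      rw [Set.indicator_of_mem hmem]
      nlinarith
  have hint : ∀ i, ∫ ω, (Wtrunc Z σ2 n i ω) ^ 2 ∂P ≤
      (η / 2) * (σ2 i / s) +
        (∫ ω in {ω' | e * Real.sqrt s ≤ |Z i ω'|}, (Z i ω) ^ 2 ∂P) / s := by
    intro i
    have hW2 : Integrable (fun ω => (Wtrunc Z σ2 n i ω) ^ 2) P := by
      simpa using (memℒp_wtrunc (P := P) hmeas hpos n i 2).integrable_sq
    have hmset : MeasurableSet {ω' | e * Real.sqrt s ≤ |Z i ω'|} :=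
      measurableSet_le measurable_const (hmeas i).abs
    have hint1 : Integrable (fun ω => (η / 2) * ((Z i ω) ^ 2 / s)) P :=
      ((hsq i).div_const s).const_mul _
    have hint2 : Integrable
        (Set.indicator {ω' | e * Real.sqrt s ≤ |Z i ω'|} (fun ω' => (Z i ω') ^ 2 / s)) P :=
      ((hsq i).div_const s).indicator hmset
    have h := integral_mono hW2 (hint1.add hint2) (hptw i)
    have heq : ∫ ω, ((η / 2) * ((Z i ω) ^ 2 / s) +
        Set.indicator {ω' | e * Real.sqrt s ≤ |Z i ω'|} (fun ω' => (Z i ω') ^ 2 / s) ω) ∂P =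
        (η / 2) * (σ2 i / s) +
          (∫ ω in {ω' | e * Real.sqrt s ≤ |Z i ω'|}, (Z i ω) ^ 2 ∂P) / s := by
      rw [integral_add hint1 hint2, integral_const_mul, integral_div, hvar i,
        integral_indicator hmset, integral_div]
    exact le_of_le_of_eq h heq
  calc ∑ i ∈ Finset.range n, variance (Wtrunc Z σ2 n i) P
      ≤ ∑ i ∈ Finset.range n, ∫ ω, (Wtrunc Z σ2 n i ω) ^ 2 ∂P := by
        refine Finset.sum_le_sum fun i _ => ?_
        simpa using variance_le_expectation_sq (μ := P)
          (measurable_wtrunc (σ2 := σ2) hmeas n i).aestronglyMeasurable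
    _ ≤ ∑ i ∈ Finset.range n, ((η / 2) * (σ2 i / s) +
          (∫ ω in {ω' | e * Real.sqrt s ≤ |Z i ω'|}, (Z i ω) ^ 2 ∂P) / s) :=
        Finset.sum_le_sum fun i _ => hint i
    _ = η / 2 + s⁻¹ *
          ∑ i ∈ Finset.range n, ∫ ω in {ω' | e * Real.sqrt s ≤ |Z i ω'|}, (Z i ω) ^ 2 ∂P := by
        rw [Finset.sum_add_distrib]
        congr 1
        · rw [← Finset.mul_sum, ← Finset.sum_div, ← hs, div_self hsp.ne', mul_one]
        · rw [← Finset.sum_div, div_eq_inv_mul]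

lemma sumvar_tendsto (hmeas : ∀ i, Measurable (Z i)) (hpos : ∀ i, 0 < σ2 i)
    (hL2 : ∀ i, MemLp (Z i) 2 P) (hvar : ∀ i, ∫ ω, (Z i ω) ^ 2 ∂P = σ2 i)
    (hLind : ∀ ε > (0 : ℝ), Tendsto (fun n =>
      (∑ i ∈ Finset.range n, σ2 i)⁻¹ *
        ∑ i ∈ Finset.range n,
          ∫ ω in {ω | ε * Real.sqrt (∑ j ∈ Finset.range n, σ2 j) ≤ |Z i ω|}, (Z i ω) ^ 2 ∂P)
      atTop (nhds 0)) :
    Tendsto (fun n => ∑ i ∈ Finset.range n, variance (Wtrunc Z σ2 n i) P) atTop (nhds 0) := by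
  rw [Metric.tendsto_atTop]
  intro η hη
  have he : 0 < Real.sqrt (η / 2) := Real.sqrt_pos.2 (by linarith)
  have hL := hLind (Real.sqrt (η / 2)) he
  rw [Metric.tendsto_atTop] at hL
  obtain ⟨N, hN⟩ := hL (η / 4) (by linarith)
  refine ⟨max N 1, fun n hn => ?_⟩
  have hn1 : 1 ≤ n := le_trans (le_max_right N 1) hn
  have hnN : N ≤ n := le_trans (le_max_left N 1) hn
  have h1 := sumvar_le (P := P) hmeas hpos hL2 hvar hη hn1
  have h2 := hN n hnN
  rw [Real.dist_eq, sub_zero] at h2 ⊢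
  have h3 : 0 ≤ ∑ i ∈ Finset.range n, variance (Wtrunc Z σ2 n i) P :=
    Finset.sum_nonneg fun i _ => variance_nonneg _ _
  rw [abs_of_nonneg h3]
  have h4 := le_abs_self ((∑ i ∈ Finset.range n, σ2 i)⁻¹ *
    ∑ i ∈ Finset.range n,
      ∫ ω in {ω | Real.sqrt (η / 2) * Real.sqrt (∑ j ∈ Finset.range n, σ2 j) ≤ |Z i ω|},
        (Z i ω) ^ 2 ∂P)
  linarith

lemma cheb (hmeas : ∀ i, Measurable (Z i)) (hpos : ∀ i, 0 < σ2 i)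
    (hindep : iIndepFun Z P)
    {ε : ℝ} (hε : 0 < ε) {n k : ℕ} (hk : k ≤ n) :
    P {ω | ε ≤ |∑ i ∈ Finset.range k,
        (Wtrunc Z σ2 n i ω - ∫ ω', Wtrunc Z σ2 n i ω' ∂P)|} ≤
      ENNReal.ofReal ((∑ i ∈ Finset.range n, variance (Wtrunc Z σ2 n i) P) / ε ^ 2) := by
  have hXmem : MemLp (fun ω => ∑ i ∈ Finset.range k, Wtrunc Z σ2 n i ω) 2 P :=
    memLp_finset_sum _ fun i _ => memℒp_wtrunc hmeas hpos n i 2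
  have hEX : ∫ ω, (∑ i ∈ Finset.range k, Wtrunc Z σ2 n i ω) ∂P
      = ∑ i ∈ Finset.range k, ∫ ω', Wtrunc Z σ2 n i ω' ∂P :=
    integral_finset_sum _ fun i _ => integrable_wtrunc hmeas hpos n i
  have hset : {ω | ε ≤ |∑ i ∈ Finset.range k,
        (Wtrunc Z σ2 n i ω - ∫ ω', Wtrunc Z σ2 n i ω' ∂P)|}
      = {ω | ε ≤ |(fun ω => ∑ i ∈ Finset.range k, Wtrunc Z σ2 n i ω) ω -
          ∫ ω', (fun ω => ∑ i ∈ Finset.range k, Wtrunc Z σ2 n i ω) ω' ∂P|} := by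
    ext ω
    simp only [Set.mem_setOf_eq, hEX, Finset.sum_sub_distrib]
  rw [hset]
  refine le_trans (meas_ge_le_variance_div_sq hXmem hε) (ENNReal.ofReal_le_ofReal ?_)
  have hvs : variance (fun ω => ∑ i ∈ Finset.range k, Wtrunc Z σ2 n i ω) P
      = ∑ i ∈ Finset.range k, variance (Wtrunc Z σ2 n i) P := by
    have hfe : (fun ω => ∑ i ∈ Finset.range k, Wtrunc Z σ2 n i ω)
        = ∑ i ∈ Finset.range k, Wtrunc Z σ2 n i := by ext ω; simp
    rw [hfe]
    refine IndepFun.variance_sum (fun i _ => memℒp_wtrunc hmeas hpos n i 2) ?_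
    intro i _ j _ hij
    have hcomp := hindep.comp
      (fun i x => if x ^ 2 ≤ ∑ j ∈ Finset.range n, σ2 j then
        x ^ 2 / ∑ j ∈ Finset.range n, σ2 j else 0)
      (fun i => Measurable.ite (measurableSet_le (measurable_id.pow_const 2) measurable_const)
        ((measurable_id.pow_const 2).div_const _) measurable_const)
    exact hcomp.indepFun hij
  rw [hvs]
  gcongr
  exact fun i _ _ => variance_nonneg _ _

end Main

/-- Bucket of indices `k ∈ [1,n]` whose `B k` lies in bucket `j` of width `ε/4`. -/
noncomputable def gridT (ε : ℝ) (B : ℕ → ℝ) (n j : ℕ) : Finset ℕ :=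
  (Finset.Icc 1 n).filter fun k => ⌊4 * B k / ε⌋₊ = j

noncomputable def gridMin (ε : ℝ) (B : ℕ → ℝ) (n j : ℕ) : ℕ :=
  if h : (gridT ε B n j).Nonempty then (gridT ε B n j).min' h else 0

noncomputable def gridMax (ε : ℝ) (B : ℕ → ℝ) (n j : ℕ) : ℕ :=
  if h : (gridT ε B n j).Nonempty then (gridT ε B n j).max' h else 0

/-- The distinguished grid indices. -/
noncomputable def gridD (ε : ℝ) (B : ℕ → ℝ) (n : ℕ) : Finset ℕ :=
  (Finset.range (⌊4 / ε⌋₊ + 1)).biUnion fun j => {gridMin ε B n j, gridMax ε B n j}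

lemma gridD_card (ε : ℝ) (B : ℕ → ℝ) (n : ℕ) :
    (gridD ε B n).card ≤ 2 * (⌊4 / ε⌋₊ + 1) := by
  refine le_trans Finset.card_biUnion_le ?_
  calc ∑ j ∈ Finset.range (⌊4 / ε⌋₊ + 1), ({gridMin ε B n j, gridMax ε B n j} : Finset ℕ).card
      ≤ ∑ _j ∈ Finset.range (⌊4 / ε⌋₊ + 1), 2 := by
        refine Finset.sum_le_sum fun j _ => ?_
        exact (Finset.card_insert_le _ _).trans (by simp)
    _ = 2 * (⌊4 / ε⌋₊ + 1) := by simp [mul_comm]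

lemma gridD_le (ε : ℝ) (B : ℕ → ℝ) (n : ℕ) : ∀ k ∈ gridD ε B n, k ≤ n := by
  intro k hk
  simp only [gridD, Finset.mem_biUnion, Finset.mem_insert, Finset.mem_singleton] at hk
  obtain ⟨j, -, hk⟩ := hk
  have h : ∀ m ∈ ({gridMin ε B n j, gridMax ε B n j} : Finset ℕ), m ≤ n := by
    intro m hm
    simp only [Finset.mem_insert, Finset.mem_singleton] at hm
    rcases hm with rfl | rfl
    · unfold gridMin
      split_ifs with h
      · exact (Finset.mem_Icc.1 (Finset.mem_filter.1 ((gridT ε B n j).min'_mem h)).1).2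
      · exact Nat.zero_le n
    · unfold gridMax
      split_ifs with h
      · exact (Finset.mem_Icc.1 (Finset.mem_filter.1 ((gridT ε B n j).max'_mem h)).1).2
      · exact Nat.zero_le n
  exact h k (by simp only [Finset.mem_insert, Finset.mem_singleton]; exact hk)

lemma grid_sandwich {ε : ℝ} (hε : 0 < ε) (n : ℕ) (A B : ℕ → ℝ)
    (hA : Monotone A) (hB : Monotone B) (hB0 : 0 ≤ B 0) (hBn : B n ≤ 1)
    (k : ℕ) (hk : k ∈ Finset.Icc 1 n) (h : ε ≤ |A k - B k|) :
    ∃ k' ∈ gridD ε B n, ε / 2 ≤ |A k' - B k'| := by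
  obtain ⟨hk1, hkn⟩ := Finset.mem_Icc.1 hk
  set j := ⌊4 * B k / ε⌋₊ with hj
  have hBk0 : 0 ≤ B k := hB0.trans (hB (Nat.zero_le k))
  have hBk1 : B k ≤ 1 := (hB hkn).trans hBn
  have hjJ : j < ⌊4 / ε⌋₊ + 1 := by
    have : (4 : ℝ) * B k / ε ≤ 4 / ε := by
      gcongr
      nlinarith
    exact Nat.lt_succ_of_le (Nat.floor_mono this)
  have hmem : k ∈ gridT ε B n j := Finset.mem_filter.2 ⟨hk, rfl⟩
  have hne : (gridT ε B n j).Nonempty := ⟨k, hmem⟩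
  have hamin : gridMin ε B n j = (gridT ε B n j).min' hne := dif_pos hne
  have hamax : gridMax ε B n j = (gridT ε B n j).max' hne := dif_pos hne
  set a := gridMin ε B n j with ha
  set c := gridMax ε B n j with hc
  have haT : a ∈ gridT ε B n j := hamin ▸ (gridT ε B n j).min'_mem hne
  have hcT : c ∈ gridT ε B n j := hamax ▸ (gridT ε B n j).max'_mem hne
  have hak : a ≤ k := hamin ▸ (gridT ε B n j).min'_le k hmem
  have hkc : k ≤ c := hamax ▸ (gridT ε B n j).le_max' k hmem
  have hfa : ⌊4 * B a / ε⌋₊ = j := (Finset.mem_filter.1 haT).2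
  have hfc : ⌊4 * B c / ε⌋₊ = j := (Finset.mem_filter.1 hcT).2
  have hBa0 : 0 ≤ B a := hB0.trans (hB (Nat.zero_le a))
  have h1 : (j : ℝ) ≤ 4 * B a / ε := by
    rw [← hfa]; exact Nat.floor_le (by positivity)
  have h2 : 4 * B c / ε < j + 1 := by
    rw [← hfc]; exact Nat.lt_floor_add_one _
  have hgap : B c - B a < ε / 4 := by
    have h3 : 4 * B c / ε - 4 * B a / ε < 1 := by linarith
    rw [div_sub_div_same, div_lt_one hε] at h3
    linarith
  have hmemD : ∀ m ∈ ({a, c} : Finset ℕ), m ∈ gridD ε B n := by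
    intro m hm
    exact Finset.mem_biUnion.2 ⟨j, Finset.mem_range.2 hjJ, hm⟩
  have hBak : B a ≤ B k := hB hak
  have hBkc : B k ≤ B c := hB hkc
  have hAak : A a ≤ A k := hA hak
  have hAkc : A k ≤ A c := hA hkc
  rcases le_abs.1 h with hpos | hneg
  · refine ⟨c, hmemD c (by simp), ?_⟩
    have : ε / 2 ≤ A c - B c := by linarith
    exact le_abs.2 (Or.inl this)
  · refine ⟨a, hmemD a (by simp), ?_⟩
    have : ε / 2 ≤ -(A a - B a) := by linarith
    exact le_abs.2 (Or.inr this)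

set_option maxHeartbeats 1000000 in
/-- Under Lindeberg's condition, `max_{1 ≤ k ≤ n} |∑_{i=1}^k (W_{n,i} - E W_{n,i})|`
converges to 0 in probability, where `W_{n,i} = s_n⁻² Z_i² 1{Z_i² ≤ s_n²}`. -/
theorem max_truncated_centered_partial_sums_negligible
    {Ω : Type*} [MeasurableSpace Ω] (P : Measure Ω) [IsProbabilityMeasure P]
    (Z : ℕ → Ω → ℝ) (σ2 : ℕ → ℝ)
    (hmeas : ∀ i, Measurable (Z i))
    (hindep : iIndepFun Z P)
    (hL2 : ∀ i, MemLp (Z i) 2 P)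
    (hmean : ∀ i, ∫ ω, Z i ω ∂P = 0)
    (hvar : ∀ i, ∫ ω, (Z i ω) ^ 2 ∂P = σ2 i)
    (hpos : ∀ i, 0 < σ2 i)
    (hLind : ∀ ε > (0 : ℝ), Tendsto (fun n =>
      (∑ i ∈ Finset.range n, σ2 i)⁻¹ *
        ∑ i ∈ Finset.range n,
          ∫ ω in {ω | ε * Real.sqrt (∑ j ∈ Finset.range n, σ2 j) ≤ |Z i ω|}, (Z i ω) ^ 2 ∂P)
      atTop (nhds 0)) :
    ∀ ε > (0 : ℝ), Tendsto (fun n =>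
      P {ω | ∃ k ∈ Finset.Icc 1 n,
        ε ≤ |∑ i ∈ Finset.range k, (Wtrunc Z σ2 n i ω - ∫ ω', Wtrunc Z σ2 n i ω' ∂P)|})
      atTop (nhds 0) := by
  intro ε hε
  have hδto := sumvar_tendsto (P := P) hmeas hpos hL2 hvar hLind
  have hub : ∀ n, 1 ≤ n →
      P {ω | ∃ k ∈ Finset.Icc 1 n,
        ε ≤ |∑ i ∈ Finset.range k, (Wtrunc Z σ2 n i ω - ∫ ω', Wtrunc Z σ2 n i ω' ∂P)|}
      ≤ (2 * (⌊4 / ε⌋₊ + 1) : ℕ) * ENNReal.ofReal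
          ((∑ i ∈ Finset.range n, variance (Wtrunc Z σ2 n i) P) / (ε / 2) ^ 2) := by
    intro n hn
    have hBmono : Monotone fun k => ∑ i ∈ Finset.range k, ∫ ω', Wtrunc Z σ2 n i ω' ∂P :=
      monotone_nat_of_le_succ fun k => by
        rw [Finset.sum_range_succ]
        exact le_add_of_nonneg_right (integral_wtrunc_nonneg hpos n k)
    have hB0 : (0 : ℝ) ≤ ∑ i ∈ Finset.range 0, ∫ ω', Wtrunc Z σ2 n i ω' ∂P := by simp
    have hBn : ∑ i ∈ Finset.range n, ∫ ω', Wtrunc Z σ2 n i ω' ∂P ≤ 1 := by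
      calc ∑ i ∈ Finset.range n, ∫ ω', Wtrunc Z σ2 n i ω' ∂P
          ≤ ∑ i ∈ Finset.range n, σ2 i / ∑ j ∈ Finset.range n, σ2 j :=
            Finset.sum_le_sum fun i _ => integral_wtrunc_le hmeas hpos hL2 hvar n i
        _ = (∑ i ∈ Finset.range n, σ2 i) / ∑ j ∈ Finset.range n, σ2 j :=
            (Finset.sum_div _ _ _).symm
        _ = 1 := div_self (s2_pos σ2 hpos hn).ne'
    have hsub : {ω | ∃ k ∈ Finset.Icc 1 n,
          ε ≤ |∑ i ∈ Finset.range k, (Wtrunc Z σ2 n i ω - ∫ ω', Wtrunc Z σ2 n i ω' ∂P)|}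
        ⊆ ⋃ k' ∈ gridD ε (fun k => ∑ i ∈ Finset.range k, ∫ ω', Wtrunc Z σ2 n i ω' ∂P) n,
            {ω | ε / 2 ≤ |∑ i ∈ Finset.range k',
              (Wtrunc Z σ2 n i ω - ∫ ω', Wtrunc Z σ2 n i ω' ∂P)|} := by
      intro ω hω
      obtain ⟨k, hk, hka⟩ := hω
      have hrw : ∀ m, ∑ i ∈ Finset.range m, (Wtrunc Z σ2 n i ω - ∫ ω', Wtrunc Z σ2 n i ω' ∂P)
          = (∑ i ∈ Finset.range m, Wtrunc Z σ2 n i ω)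
            - ∑ i ∈ Finset.range m, ∫ ω', Wtrunc Z σ2 n i ω' ∂P :=
        fun m => Finset.sum_sub_distrib _ _
      have hAmono : Monotone fun m => ∑ i ∈ Finset.range m, Wtrunc Z σ2 n i ω :=
        monotone_nat_of_le_succ fun m => by
          rw [Finset.sum_range_succ]
          exact le_add_of_nonneg_right (Wtrunc_nonneg hpos n m ω)
      obtain ⟨k', hk'D, hk'⟩ := grid_sandwich hε n
        (fun m => ∑ i ∈ Finset.range m, Wtrunc Z σ2 n i ω)
        (fun k => ∑ i ∈ Finset.range k, ∫ ω', Wtrunc Z σ2 n i ω' ∂P)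
        hAmono hBmono hB0 hBn k hk (by rw [← hrw k]; exact hka)
      exact Set.mem_biUnion hk'D (by rw [Set.mem_setOf_eq, hrw k']; exact hk')
    refine le_trans (measure_mono hsub) ?_
    refine le_trans (measure_biUnion_finset_le _ _) ?_
    have hterm : ∀ k' ∈ gridD ε
        (fun k => ∑ i ∈ Finset.range k, ∫ ω', Wtrunc Z σ2 n i ω' ∂P) n,
        P {ω | ε / 2 ≤ |∑ i ∈ Finset.range k',
            (Wtrunc Z σ2 n i ω - ∫ ω', Wtrunc Z σ2 n i ω' ∂P)|}
          ≤ ENNReal.ofReal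
            ((∑ i ∈ Finset.range n, variance (Wtrunc Z σ2 n i) P) / (ε / 2) ^ 2) :=
      fun k' hk' => cheb hmeas hpos hindep (by positivity) (gridD_le ε _ n k' hk')
    refine le_trans (Finset.sum_le_sum hterm) ?_
    rw [Finset.sum_const, nsmul_eq_mul]
    exact mul_le_mul_left (by exact_mod_cast gridD_card ε _ n) _
  have h1 : Tendsto (fun n =>
      (∑ i ∈ Finset.range n, variance (Wtrunc Z σ2 n i) P) / (ε / 2) ^ 2) atTop (nhds 0) := by
    simpa using hδto.div_const ((ε / 2) ^ 2)
  have h2 : Tendsto (fun n => ENNReal.ofReal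
      ((∑ i ∈ Finset.range n, variance (Wtrunc Z σ2 n i) P) / (ε / 2) ^ 2)) atTop (nhds 0) := by
    simpa using ENNReal.tendsto_ofReal h1
  have hg : Tendsto (fun n => ((2 * (⌊4 / ε⌋₊ + 1) : ℕ) : ENNReal) * ENNReal.ofReal
      ((∑ i ∈ Finset.range n, variance (Wtrunc Z σ2 n i) P) / (ε / 2) ^ 2)) atTop (nhds 0) := by
    simpa using ENNReal.Tendsto.const_mul (a := ((2 * (⌊4 / ε⌋₊ + 1) : ℕ) : ENNReal)) h2 (Or.inr (ENNReal.natCast_ne_top _))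
  refine tendsto_of_tendsto_of_tendsto_of_le_of_le' tendsto_const_nhds hg
    (Eventually.of_forall fun n => zero_le) ?_
  filter_upwards [eventually_ge_atTop 1] with n hn using hub n hn
end

section
/- For each n and 1 ≤ i ≤ n let W_{n,i} := s_n^{−2} Z_i² 1{Z_i² ≤ s_n²}. Then, as n → ∞, Σ_{i=1}^n (W_{n,i} − E W_{n,i}) converges to 0 in probability; that is, for every ε > 0, P( | Σ_{i=1}^n (W_{n,i} − E W_{n,i}) | ≥ ε ) → 0. -/
open MeasureTheory ProbabilityTheory Filter
open scoped Classical

/-- Under Lindeberg's condition, `∑_{i=1}^n (W_{n,i} - E W_{n,i})` converges to 0 in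
probability, where `W_{n,i} = s_n⁻² Z_i² 1{Z_i² ≤ s_n²}`. -/
theorem truncated_centered_sum_negligible
    {Ω : Type*} [MeasurableSpace Ω] (P : Measure Ω) [IsProbabilityMeasure P]
    (Z : ℕ → Ω → ℝ) (σ2 : ℕ → ℝ)
    (hmeas : ∀ i, Measurable (Z i))
    (hindep : iIndepFun Z P)
    (hL2 : ∀ i, MemLp (Z i) 2 P)
    (hmean : ∀ i, ∫ ω, Z i ω ∂P = 0)
    (hvar : ∀ i, ∫ ω, (Z i ω) ^ 2 ∂P = σ2 i)
    (hpos : ∀ i, 0 < σ2 i)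
    (hLind : ∀ ε > (0 : ℝ), Tendsto (fun n =>
      (∑ i ∈ Finset.range n, σ2 i)⁻¹ *
        ∑ i ∈ Finset.range n,
          ∫ ω in {ω | ε * Real.sqrt (∑ j ∈ Finset.range n, σ2 j) ≤ |Z i ω|}, (Z i ω) ^ 2 ∂P)
      atTop (nhds 0)) :
    ∀ ε > (0 : ℝ), Tendsto (fun n =>
      P {ω | ε ≤ |∑ i ∈ Finset.range n, (Wtrunc Z σ2 n i ω - ∫ ω', Wtrunc Z σ2 n i ω' ∂P)|})
      atTop (nhds 0) := by

  intro ε hε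
  suffices h : ∀ r : ℝ, 0 < r → ∀ᶠ n in atTop,
      P {ω | ε ≤ |∑ i ∈ Finset.range n, (Wtrunc Z σ2 n i ω - ∫ ω', Wtrunc Z σ2 n i ω' ∂P)|}
        ≤ ENNReal.ofReal r by
    rw [ENNReal.tendsto_nhds_zero]
    intro η hη
    have hη1 : (0:ℝ) < (min 1 η).toReal := by
      rw [ENNReal.toReal_pos_iff]
      constructor
      · simp [lt_min_iff, hη]
      · exact lt_of_le_of_lt (min_le_left _ _) (by norm_num)
    refine (h _ hη1).mono fun n hn => hn.trans ?_
    rw [ENNReal.ofReal_toReal (ne_top_of_le_ne_top (by norm_num) (min_le_left 1 η))]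
    exact min_le_right _ _
  intro r hr
  set δ : ℝ := ε * Real.sqrt (r / 2) with hδdef
  have hδ : 0 < δ := mul_pos hε (Real.sqrt_pos.2 (by linarith))
  have hδsq : δ ^ 2 = ε ^ 2 * (r / 2) := by
    rw [hδdef, mul_pow, Real.sq_sqrt (by linarith : (0:ℝ) ≤ r / 2)]
  have hLev : ∀ᶠ n in atTop,
      (∑ i ∈ Finset.range n, σ2 i)⁻¹ *
        ∑ i ∈ Finset.range n,
          ∫ ω in {ω | δ * Real.sqrt (∑ j ∈ Finset.range n, σ2 j) ≤ |Z i ω|}, (Z i ω) ^ 2 ∂P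
        < ε ^ 2 * (r / 2) :=
    (hLind δ hδ).eventually_lt_const (by positivity)
  filter_upwards [hLev, eventually_ge_atTop 1] with n hLn hn1
  set V : ℝ := ∑ j ∈ Finset.range n, σ2 j with hVdef
  have hV : 0 < V := Finset.sum_pos (fun i _ => hpos i) (Finset.nonempty_range_iff.2 (by omega))
  have hWmeas : ∀ i, Measurable (Wtrunc Z σ2 n i) := by
    intro i
    unfold Wtrunc
    exact Measurable.ite (measurableSet_le ((hmeas i).pow_const 2) measurable_const)
      (((hmeas i).pow_const 2).div_const _) measurable_const
  have hWnonneg : ∀ i ω, 0 ≤ Wtrunc Z σ2 n i ω := by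
    intro i ω
    unfold Wtrunc
    split
    · positivity
    · exact le_refl 0
  have hWle : ∀ i ω, Wtrunc Z σ2 n i ω ≤ 1 := by
    intro i ω
    unfold Wtrunc
    split
    · rename_i h
      rw [div_le_one hV]
      exact h
    · norm_num
  have hW2 : ∀ i, MemLp (Wtrunc Z σ2 n i) 2 P := by
    intro i
    refine MemLp.of_bound (hWmeas i).aestronglyMeasurable 1 (Eventually.of_forall fun ω => ?_)
    rw [Real.norm_eq_abs, abs_of_nonneg (hWnonneg i ω)]
    exact hWle i ω
  have hint : ∀ i, Integrable (Wtrunc Z σ2 n i) P := fun i => (hW2 i).integrable one_le_two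
  have hWindep : iIndepFun (fun i => Wtrunc Z σ2 n i) P := by
    have := hindep.comp (fun i (t : ℝ) => if t ^ 2 ≤ V then t ^ 2 / V else 0)
      (fun i => Measurable.ite (measurableSet_le (measurable_id.pow_const 2) measurable_const)
        ((measurable_id.pow_const 2).div_const _) measurable_const)
    exact this
  set S : Ω → ℝ := ∑ i ∈ Finset.range n, Wtrunc Z σ2 n i with hSdef
  have hS2 : MemLp S 2 P := memLp_finset_sum' _ fun i _ => hW2 i
  have hES : ∫ ω, S ω ∂P = ∑ i ∈ Finset.range n, ∫ ω, Wtrunc Z σ2 n i ω ∂P := by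
    simp only [hSdef, Finset.sum_apply]
    exact integral_finset_sum _ fun i _ => hint i
  have hsetEq : {ω | ε ≤ |∑ i ∈ Finset.range n, (Wtrunc Z σ2 n i ω - ∫ ω', Wtrunc Z σ2 n i ω' ∂P)|}
      = {ω | ε ≤ |S ω - ∫ ω', S ω' ∂P|} := by
    ext ω
    rw [Set.mem_setOf_eq, Set.mem_setOf_eq, hES, Finset.sum_sub_distrib, hSdef,
      Finset.sum_apply]
  have hcheb := meas_ge_le_variance_div_sq (μ := P) hS2 hε
  have hvarsum : variance S P = ∑ i ∈ Finset.range n, variance (Wtrunc Z σ2 n i) P :=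
    IndepFun.variance_sum (fun i _ => hW2 i) (fun i _ j _ hij => hWindep.indepFun hij)
  have hZsq_int : ∀ i, Integrable (fun ω => (Z i ω) ^ 2) P := fun i => (hL2 i).integrable_sq
  -- pointwise bound on `W²`
  have hptwise : ∀ i ω, (Wtrunc Z σ2 n i ω) ^ 2 ≤ δ ^ 2 * (Z i ω) ^ 2 / V +
      Set.indicator {ω | δ * Real.sqrt V ≤ |Z i ω|} (fun ω => (Z i ω) ^ 2 / V) ω := by
    intro i ω
    have hind_nonneg : 0 ≤ Set.indicator {ω | δ * Real.sqrt V ≤ |Z i ω|}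
        (fun ω => (Z i ω) ^ 2 / V) ω :=
      Set.indicator_nonneg (fun ω _ => by positivity) ω
    have hfirst : (0:ℝ) ≤ δ ^ 2 * (Z i ω) ^ 2 / V := by positivity
    unfold Wtrunc
    split
    · rename_i h1
      rw [← hVdef] at h1
      rw [div_pow, ← hVdef]
      by_cases h2 : δ * Real.sqrt V ≤ |Z i ω|
      · rw [Set.indicator_of_mem (show ω ∈ {ω | δ * Real.sqrt V ≤ |Z i ω|} from h2)]
        have key : ((Z i ω) ^ 2) ^ 2 / V ^ 2 ≤ (Z i ω) ^ 2 / V := by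
          rw [div_le_div_iff₀ (by positivity) hV]
          nlinarith [mul_le_mul_of_nonneg_right h1 (mul_nonneg (sq_nonneg (Z i ω)) hV.le)]
        linarith
      · rw [Set.indicator_of_notMem (show ω ∉ {ω | δ * Real.sqrt V ≤ |Z i ω|} from h2)]
        have h2' : (Z i ω) ^ 2 < δ ^ 2 * V := by
          have hlt := not_le.1 h2
          nlinarith [Real.sq_sqrt hV.le, sq_abs (Z i ω), abs_nonneg (Z i ω),
            Real.sqrt_nonneg V]
        have key : ((Z i ω) ^ 2) ^ 2 / V ^ 2 ≤ δ ^ 2 * (Z i ω) ^ 2 / V := by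
          rw [div_le_div_iff₀ (by positivity) hV]
          nlinarith [mul_le_mul_of_nonneg_right h2'.le
            (mul_nonneg (sq_nonneg (Z i ω)) hV.le)]
        linarith
    · have h0 : ((0:ℝ)) ^ 2 = 0 := by norm_num
      rw [h0]
      exact add_nonneg hfirst hind_nonneg
  -- integral bound per index
  have hEWsq : ∀ i ∈ Finset.range n, ∫ ω, (Wtrunc Z σ2 n i ω) ^ 2 ∂P ≤
      δ ^ 2 * σ2 i / V + (∫ ω in {ω | δ * Real.sqrt V ≤ |Z i ω|}, (Z i ω) ^ 2 ∂P) / V := by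
    intro i _
    have hA : MeasurableSet {ω | δ * Real.sqrt V ≤ |Z i ω|} :=
      measurableSet_le measurable_const (hmeas i).abs
    have hint1 : Integrable (fun ω => δ ^ 2 * (Z i ω) ^ 2 / V) P := by
      simpa [mul_div_assoc] using ((hZsq_int i).div_const V).const_mul (δ ^ 2)
    have hint2 : Integrable
        (Set.indicator {ω | δ * Real.sqrt V ≤ |Z i ω|} (fun ω => (Z i ω) ^ 2 / V)) P :=
      ((hZsq_int i).div_const V).indicator hA
    calc ∫ ω, (Wtrunc Z σ2 n i ω) ^ 2 ∂P
        ≤ ∫ ω, (δ ^ 2 * (Z i ω) ^ 2 / V +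
            Set.indicator {ω | δ * Real.sqrt V ≤ |Z i ω|} (fun ω => (Z i ω) ^ 2 / V) ω) ∂P :=
          integral_mono (hW2 i).integrable_sq (hint1.add hint2) (fun ω => hptwise i ω)
      _ = δ ^ 2 * σ2 i / V +
          (∫ ω in {ω | δ * Real.sqrt V ≤ |Z i ω|}, (Z i ω) ^ 2 ∂P) / V := by
          rw [integral_add hint1 hint2, integral_indicator hA, integral_div, integral_div,
            integral_const_mul, hvar i]
  have hVarW : ∀ i ∈ Finset.range n, variance (Wtrunc Z σ2 n i) P ≤
      δ ^ 2 * σ2 i / V + (∫ ω in {ω | δ * Real.sqrt V ≤ |Z i ω|}, (Z i ω) ^ 2 ∂P) / V := by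
    intro i hi
    refine le_trans ?_ (hEWsq i hi)
    exact variance_le_expectation_sq (hWmeas i).aestronglyMeasurable
  have hsum : variance S P ≤ ε ^ 2 * r := by
    rw [hvarsum]
    calc ∑ i ∈ Finset.range n, variance (Wtrunc Z σ2 n i) P
        ≤ ∑ i ∈ Finset.range n, (δ ^ 2 * σ2 i / V +
            (∫ ω in {ω | δ * Real.sqrt V ≤ |Z i ω|}, (Z i ω) ^ 2 ∂P) / V) :=
          Finset.sum_le_sum hVarW
      _ = δ ^ 2 * (∑ i ∈ Finset.range n, σ2 i) / V +
          (∑ i ∈ Finset.range n,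
            ∫ ω in {ω | δ * Real.sqrt V ≤ |Z i ω|}, (Z i ω) ^ 2 ∂P) / V := by
          rw [Finset.sum_add_distrib, ← Finset.sum_div, ← Finset.sum_div, ← Finset.mul_sum]
      _ = δ ^ 2 + V⁻¹ * ∑ i ∈ Finset.range n,
            ∫ ω in {ω | δ * Real.sqrt V ≤ |Z i ω|}, (Z i ω) ^ 2 ∂P := by
          rw [← hVdef, mul_div_assoc, div_self hV.ne', mul_one, div_eq_inv_mul]
      _ ≤ ε ^ 2 * (r / 2) + ε ^ 2 * (r / 2) := by
          rw [hδsq]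
          have := hLn.le
          linarith
      _ = ε ^ 2 * r := by ring
  calc P {ω | ε ≤ |∑ i ∈ Finset.range n, (Wtrunc Z σ2 n i ω - ∫ ω', Wtrunc Z σ2 n i ω' ∂P)|}
      = P {ω | ε ≤ |S ω - ∫ ω', S ω' ∂P|} := by rw [hsetEq]
    _ ≤ ENNReal.ofReal (variance S P / ε ^ 2) := hcheb
    _ ≤ ENNReal.ofReal r := by
        apply ENNReal.ofReal_le_ofReal
        rw [div_le_iff₀ (by positivity)]
        linarith
end

section
/- For each n and 1 ≤ i ≤ n let W_{n,i} := s_n^{−2} Z_i² 1{Z_i² ≤ s_n²}. Then for every a > 0 there exists N such that for all n ≥ N, max_{1 ≤ k ≤ n} P( | Σ_{i=1}^k (W_{n,i} − E W_{n,i}) | > a ) ≤ 1/2. -/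
open MeasureTheory ProbabilityTheory Filter
open scoped Classical

lemma wtrunc_nonneg {Ω : Type*} (Z : ℕ → Ω → ℝ) (σ2 : ℕ → ℝ) (n i : ℕ)
    (hc : 0 < ∑ j ∈ Finset.range n, σ2 j) (ω : Ω) : 0 ≤ Wtrunc Z σ2 n i ω := by
  unfold Wtrunc; split
  · positivity
  · exact le_rfl

lemma wtrunc_le_one {Ω : Type*} (Z : ℕ → Ω → ℝ) (σ2 : ℕ → ℝ) (n i : ℕ)
    (hc : 0 < ∑ j ∈ Finset.range n, σ2 j) (ω : Ω) : Wtrunc Z σ2 n i ω ≤ 1 := by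
  unfold Wtrunc; split
  · rename_i h
    exact (div_le_one hc).2 h
  · norm_num

lemma wtrunc_sq_le {Ω : Type*} (Z : ℕ → Ω → ℝ) (σ2 : ℕ → ℝ) (n i : ℕ) (ε : ℝ)
    (hc : 0 < ∑ j ∈ Finset.range n, σ2 j) (ω : Ω) :
    (Wtrunc Z σ2 n i ω) ^ 2 ≤ ε ^ 2 * ((Z i ω) ^ 2 / ∑ j ∈ Finset.range n, σ2 j) +
      Set.indicator {ω | ε * Real.sqrt (∑ j ∈ Finset.range n, σ2 j) ≤ |Z i ω|}
        (fun ω => (Z i ω) ^ 2 / ∑ j ∈ Finset.range n, σ2 j) ω := by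
  set c := ∑ j ∈ Finset.range n, σ2 j with hcdef
  set z := Z i ω with hzdef
  by_cases hind : ε * Real.sqrt c ≤ |z|
  · have hmem : ω ∈ {ω | ε * Real.sqrt c ≤ |Z i ω|} := hind
    rw [Set.indicator_of_mem hmem]
    have hW0 := wtrunc_nonneg Z σ2 n i hc ω
    have hW1 := wtrunc_le_one Z σ2 n i hc ω
    have hWle : Wtrunc Z σ2 n i ω ≤ z ^ 2 / c := by
      unfold Wtrunc
      rw [← hcdef, ← hzdef]
      split
      · exact le_rfl
      · positivity
    have h1 : 0 ≤ ε ^ 2 * (z ^ 2 / c) := by positivity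
    nlinarith
  · have hmem : ω ∉ {ω | ε * Real.sqrt c ≤ |Z i ω|} := hind
    rw [Set.indicator_of_notMem hmem, add_zero]
    push_neg at hind
    have habs : |z| * |z| < (ε * Real.sqrt c) * (ε * Real.sqrt c) :=
      mul_self_lt_mul_self (abs_nonneg z) hind
    have hsq : Real.sqrt c * Real.sqrt c = c := Real.mul_self_sqrt hc.le
    have hzb : z ^ 2 < ε ^ 2 * c := by
      have : z ^ 2 = |z| * |z| := by rw [sq, ← abs_mul_abs_self]
      nlinarith
    unfold Wtrunc
    rw [← hcdef, ← hzdef]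
    split
    · have hx0 : 0 ≤ z ^ 2 / c := by positivity
      have hx1 : z ^ 2 / c < ε ^ 2 := (div_lt_iff₀ hc).2 (by linarith)
      nlinarith
    · norm_num
      positivity

/-- Under Lindeberg's condition, for every `a > 0`, eventually in `n`,
`max_{1≤k≤n} P(|∑_{i=1}^k (W_{n,i} − E W_{n,i})| > a) ≤ 1/2`. -/
theorem truncated_centered_partial_sums_uniformly_small_tails
    {Ω : Type*} [MeasurableSpace Ω] (P : Measure Ω) [IsProbabilityMeasure P]
    (Z : ℕ → Ω → ℝ) (σ2 : ℕ → ℝ)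
    (hmeas : ∀ i, Measurable (Z i))
    (hindep : iIndepFun Z P)
    (hL2 : ∀ i, MemLp (Z i) 2 P)
    (hmean : ∀ i, ∫ ω, Z i ω ∂P = 0)
    (hvar : ∀ i, ∫ ω, (Z i ω) ^ 2 ∂P = σ2 i)
    (hpos : ∀ i, 0 < σ2 i)
    (hLind : ∀ ε > (0 : ℝ), Tendsto (fun n =>
      (∑ i ∈ Finset.range n, σ2 i)⁻¹ *
        ∑ i ∈ Finset.range n,
          ∫ ω in {ω | ε * Real.sqrt (∑ j ∈ Finset.range n, σ2 j) ≤ |Z i ω|}, (Z i ω) ^ 2 ∂P)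
      atTop (nhds 0)) :
    ∀ a > (0 : ℝ), ∃ N : ℕ, ∀ n ≥ N, ∀ k, 1 ≤ k → k ≤ n →
      P {ω | a < |∑ i ∈ Finset.range k, (Wtrunc Z σ2 n i ω - ∫ ω', Wtrunc Z σ2 n i ω' ∂P)|}
        ≤ 1 / 2 := by
  intro a ha
  have hspos : ∀ n : ℕ, 1 ≤ n → 0 < ∑ j ∈ Finset.range n, σ2 j := by
    intro n hn
    exact Finset.sum_pos (fun j _ => hpos j) ⟨0, Finset.mem_range.2 hn⟩
  have hWmeas : ∀ n i, Measurable (Wtrunc Z σ2 n i) := by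
    intro n i
    unfold Wtrunc
    exact Measurable.ite
      (measurableSet_le ((hmeas i).pow_const 2) measurable_const)
      (((hmeas i).pow_const 2).div_const _) measurable_const
  have hε : (0 : ℝ) < a / 2 := by linarith
  have hev : ∀ᶠ n in atTop,
      (∑ i ∈ Finset.range n, σ2 i)⁻¹ *
        ∑ i ∈ Finset.range n,
          ∫ ω in {ω | (a / 2) * Real.sqrt (∑ j ∈ Finset.range n, σ2 j) ≤ |Z i ω|},
            (Z i ω) ^ 2 ∂P < a ^ 2 / 4 :=
    (hLind (a / 2) hε).eventually_lt_const (by positivity)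
  obtain ⟨N₀, hN₀⟩ := eventually_atTop.1 hev
  refine ⟨max N₀ 1, fun n hn k hk1 hkn => ?_⟩
  have hn1 : 1 ≤ n := le_trans (le_max_right _ _) hn
  have hsn : 0 < ∑ j ∈ Finset.range n, σ2 j := hspos n hn1
  have hWL2 : ∀ i, MemLp (Wtrunc Z σ2 n i) 2 P := by
    intro i
    refine MemLp.of_bound (hWmeas n i).aestronglyMeasurable 1 (Eventually.of_forall fun ω => ?_)
    rw [Real.norm_eq_abs, abs_of_nonneg (wtrunc_nonneg Z σ2 n i hsn ω)]
    exact wtrunc_le_one Z σ2 n i hsn ω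
  -- second moment bound
  have hSset : ∀ i, MeasurableSet {ω | (a / 2) * Real.sqrt (∑ j ∈ Finset.range n, σ2 j) ≤ |Z i ω|} :=
    fun i => measurableSet_le measurable_const (hmeas i).abs
  have hmom : ∀ i, ∫ ω, (Wtrunc Z σ2 n i ω) ^ 2 ∂P ≤
      (a / 2) ^ 2 * (σ2 i / ∑ j ∈ Finset.range n, σ2 j) +
      (∫ ω in {ω | (a / 2) * Real.sqrt (∑ j ∈ Finset.range n, σ2 j) ≤ |Z i ω|},
        (Z i ω) ^ 2 ∂P) / ∑ j ∈ Finset.range n, σ2 j := by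
    intro i
    have hint1 : Integrable (fun ω => (a / 2) ^ 2 * ((Z i ω) ^ 2 / ∑ j ∈ Finset.range n, σ2 j)) P :=
      (((hL2 i).integrable_sq).div_const _).const_mul _
    have hint2 : Integrable (Set.indicator
        {ω | (a / 2) * Real.sqrt (∑ j ∈ Finset.range n, σ2 j) ≤ |Z i ω|}
        (fun ω => (Z i ω) ^ 2 / ∑ j ∈ Finset.range n, σ2 j)) P :=
      (((hL2 i).integrable_sq).div_const _).indicator (hSset i)
    calc ∫ ω, (Wtrunc Z σ2 n i ω) ^ 2 ∂P
        ≤ ∫ ω, ((a / 2) ^ 2 * ((Z i ω) ^ 2 / ∑ j ∈ Finset.range n, σ2 j) +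
            Set.indicator {ω | (a / 2) * Real.sqrt (∑ j ∈ Finset.range n, σ2 j) ≤ |Z i ω|}
              (fun ω => (Z i ω) ^ 2 / ∑ j ∈ Finset.range n, σ2 j) ω) ∂P := by
          refine integral_mono ((hWL2 i).integrable_sq) (hint1.add hint2) ?_
          intro ω
          exact wtrunc_sq_le Z σ2 n i (a / 2) hsn ω
      _ = (a / 2) ^ 2 * (σ2 i / ∑ j ∈ Finset.range n, σ2 j) +
          (∫ ω in {ω | (a / 2) * Real.sqrt (∑ j ∈ Finset.range n, σ2 j) ≤ |Z i ω|},
            (Z i ω) ^ 2 ∂P) / ∑ j ∈ Finset.range n, σ2 j := by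
          rw [integral_add hint1 hint2, integral_const_mul, integral_div,
            integral_indicator (hSset i), hvar i, integral_div]
  -- sum of second moments is small
  have hsum : ∑ i ∈ Finset.range n, ∫ ω, (Wtrunc Z σ2 n i ω) ^ 2 ∂P ≤ a ^ 2 / 2 := by
    have h1 : ∑ i ∈ Finset.range n, ∫ ω, (Wtrunc Z σ2 n i ω) ^ 2 ∂P ≤
        ∑ i ∈ Finset.range n, ((a / 2) ^ 2 * (σ2 i / ∑ j ∈ Finset.range n, σ2 j) +
          (∫ ω in {ω | (a / 2) * Real.sqrt (∑ j ∈ Finset.range n, σ2 j) ≤ |Z i ω|},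
            (Z i ω) ^ 2 ∂P) / ∑ j ∈ Finset.range n, σ2 j) :=
      Finset.sum_le_sum fun i _ => hmom i
    have h2 : ∑ i ∈ Finset.range n, ((a / 2) ^ 2 * (σ2 i / ∑ j ∈ Finset.range n, σ2 j) +
          (∫ ω in {ω | (a / 2) * Real.sqrt (∑ j ∈ Finset.range n, σ2 j) ≤ |Z i ω|},
            (Z i ω) ^ 2 ∂P) / ∑ j ∈ Finset.range n, σ2 j)
        = (a / 2) ^ 2 + (∑ j ∈ Finset.range n, σ2 j)⁻¹ *
            ∑ i ∈ Finset.range n,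
              ∫ ω in {ω | (a / 2) * Real.sqrt (∑ j ∈ Finset.range n, σ2 j) ≤ |Z i ω|},
                (Z i ω) ^ 2 ∂P := by
      rw [Finset.sum_add_distrib, ← Finset.sum_div]
      simp only [div_eq_mul_inv, ← Finset.mul_sum]
      rw [← Finset.sum_mul, mul_inv_cancel₀ hsn.ne', mul_one]
      ring
    have h3 := hN₀ n (le_trans (le_max_left _ _) hn)
    rw [h2] at h1
    nlinarith
  -- independence of the truncated variables
  have hWindep : iIndepFun (fun i => Wtrunc Z σ2 n i) P := by
    have hg : ∀ i : ℕ, Measurable (fun x : ℝ =>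
        if x ^ 2 ≤ ∑ j ∈ Finset.range n, σ2 j then x ^ 2 / ∑ j ∈ Finset.range n, σ2 j else 0) :=
      fun i => Measurable.ite
        (measurableSet_le (measurable_id.pow_const 2) measurable_const)
        ((measurable_id.pow_const 2).div_const _) measurable_const
    exact hindep.comp _ hg
  -- variance of partial sum
  have hvarsum : variance (∑ i ∈ Finset.range k, Wtrunc Z σ2 n i) P
      = ∑ i ∈ Finset.range k, variance (Wtrunc Z σ2 n i) P :=
    IndepFun.variance_sum (fun i _ => hWL2 i)
      (fun i _ j _ hij => hWindep.indepFun hij)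
  have hvarle : variance (∑ i ∈ Finset.range k, Wtrunc Z σ2 n i) P ≤ a ^ 2 / 2 := by
    rw [hvarsum]
    calc ∑ i ∈ Finset.range k, variance (Wtrunc Z σ2 n i) P
        ≤ ∑ i ∈ Finset.range k, ∫ ω, (Wtrunc Z σ2 n i ω) ^ 2 ∂P := by
          refine Finset.sum_le_sum fun i _ => ?_
          have := variance_le_expectation_sq (μ := P) (hWmeas n i).aestronglyMeasurable
          simpa using this
      _ ≤ ∑ i ∈ Finset.range n, ∫ ω, (Wtrunc Z σ2 n i ω) ^ 2 ∂P := by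
          refine Finset.sum_le_sum_of_subset_of_nonneg
            (Finset.range_subset_range.2 hkn) fun i _ _ => ?_
          exact integral_nonneg fun ω => sq_nonneg _
      _ ≤ a ^ 2 / 2 := hsum
  -- Chebyshev
  have hSmem : MemLp (∑ i ∈ Finset.range k, Wtrunc Z σ2 n i) 2 P :=
    memLp_finset_sum' _ fun i _ => hWL2 i
  have hcheb := meas_ge_le_variance_div_sq (μ := P) hSmem ha
  have hsub : {ω | a < |∑ i ∈ Finset.range k,
        (Wtrunc Z σ2 n i ω - ∫ ω', Wtrunc Z σ2 n i ω' ∂P)|} ⊆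
      {ω | a ≤ |(∑ i ∈ Finset.range k, Wtrunc Z σ2 n i) ω -
        ∫ ω', (∑ i ∈ Finset.range k, Wtrunc Z σ2 n i) ω' ∂P|} := by
    intro ω hω
    have hE : ∫ ω', (∑ i ∈ Finset.range k, Wtrunc Z σ2 n i) ω' ∂P
        = ∑ i ∈ Finset.range k, ∫ ω', Wtrunc Z σ2 n i ω' ∂P := by
      simp only [Finset.sum_apply]
      exact integral_finset_sum _ fun i _ => (hWL2 i).integrable one_le_two
    simp only [Set.mem_setOf_eq] at hω ⊢
    rw [hE, Finset.sum_apply, ← Finset.sum_sub_distrib]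
    exact hω.le
  calc P {ω | a < |∑ i ∈ Finset.range k,
        (Wtrunc Z σ2 n i ω - ∫ ω', Wtrunc Z σ2 n i ω' ∂P)|}
      ≤ P {ω | a ≤ |(∑ i ∈ Finset.range k, Wtrunc Z σ2 n i) ω -
          ∫ ω', (∑ i ∈ Finset.range k, Wtrunc Z σ2 n i) ω' ∂P|} := measure_mono hsub
    _ ≤ ENNReal.ofReal (variance (∑ i ∈ Finset.range k, Wtrunc Z σ2 n i) P / a ^ 2) := hcheb
    _ ≤ 1 / 2 := by
        have hle : variance (∑ i ∈ Finset.range k, Wtrunc Z σ2 n i) P / a ^ 2 ≤ 1 / 2 := by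
          rw [div_le_div_iff₀ (by positivity) (by norm_num)]
          nlinarith
        calc ENNReal.ofReal (variance (∑ i ∈ Finset.range k, Wtrunc Z σ2 n i) P / a ^ 2)
            ≤ ENNReal.ofReal (1 / 2) := ENNReal.ofReal_le_ofReal hle
          _ = 1 / 2 := by
              rw [ENNReal.ofReal_div_of_pos (by norm_num), ENNReal.ofReal_one,
                ENNReal.ofReal_ofNat]
end

section
/- Suppose that (i) max_{1 ≤ i ≤ n} (Z_i − μ)² / Σ_{i=1}^n (Z_i − μ)² converges to 0 in probability as n → ∞, and (ii) the self-normalized sums V_n := Σ_{i=1}^n (Z_i − μ) / (Σ_{i=1}^n (Z_i − μ)²)^{1/2} are bounded in probability, i.e., for every δ > 0 there exists C > 0 such that P(|V_n| > C) ≤ δ for all n. Then max_{1 ≤ i ≤ n} (Z_i − Z̄_n)² / Σ_{i=1}^n (Z_i − Z̄_n)² converges to 0 in probability as n → ∞, where Z̄_n := n^{−1} Σ_{i=1}^n Z_i. -/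
open MeasureTheory Filter
open scoped ENNReal

set_option maxHeartbeats 1000000 in

/-- If `max_{1≤i≤n} (Z_i − μ)² / ∑ (Z_i − μ)²` tends to 0 in probability and the
self-normalized sums `V_n = ∑ (Z_i − μ) / (∑ (Z_i − μ)²)^{1/2}` are bounded in
probability, then `max_{1≤i≤n} (Z_i − Z̄_n)² / ∑ (Z_i − Z̄_n)²` tends to 0 in
probability. -/
theorem max_centered_ratio_of_max_mu_ratio
    {Ω : Type*} [MeasurableSpace Ω] (P : Measure Ω) [IsProbabilityMeasure P]
    (Z : ℕ → Ω → ℝ) (μ : ℝ)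
    (hmeas : ∀ i, Measurable (Z i))
    (h1 : ∀ ε > (0 : ℝ), Tendsto (fun n =>
      P {ω | ∃ i ∈ Finset.range n,
        ε ≤ (Z i ω - μ) ^ 2 / ∑ j ∈ Finset.range n, (Z j ω - μ) ^ 2})
      atTop (nhds 0))
    (h2 : ∀ δ : ℝ≥0∞, 0 < δ → ∃ C : ℝ, 0 < C ∧ ∀ n : ℕ,
      P {ω | C < |(∑ i ∈ Finset.range n, (Z i ω - μ)) /
        Real.sqrt (∑ i ∈ Finset.range n, (Z i ω - μ) ^ 2)|} ≤ δ) :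
    ∀ ε > (0 : ℝ), Tendsto (fun n =>
      P {ω | ∃ i ∈ Finset.range n,
        ε ≤ (Z i ω - (∑ j ∈ Finset.range n, Z j ω) / n) ^ 2 /
          ∑ j ∈ Finset.range n, (Z j ω - (∑ l ∈ Finset.range n, Z l ω) / n) ^ 2})
      atTop (nhds 0) := by
  intro ε hε
  rw [ENNReal.tendsto_atTop_zero]
  intro δ hδ
  obtain ⟨C, hC, hCbound⟩ := h2 (δ / 2) (ENNReal.half_pos hδ.ne')
  obtain ⟨N1, hN1⟩ := (ENNReal.tendsto_atTop_zero.mp (h1 (ε / 8) (by positivity)))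
    (δ / 2) (ENNReal.half_pos hδ.ne')
  obtain ⟨N2, hN2⟩ := exists_nat_gt (max (2 * C ^ 2) (8 * C ^ 2 / ε))
  refine ⟨max (max N1 N2) 1, fun n hn => ?_⟩
  have hn1 : N1 ≤ n := le_trans (le_trans (le_max_left _ _) (le_max_left _ _)) hn
  have hn2 : N2 ≤ n := le_trans (le_trans (le_max_right _ _) (le_max_left _ _)) hn
  have hnpos : 0 < n := lt_of_lt_of_le Nat.one_pos (le_trans (le_max_right _ _) hn)
  have hn0 : (0 : ℝ) < n := by exact_mod_cast hnpos
  have hnR : (1 : ℝ) ≤ n := by exact_mod_cast hnpos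
  have hN2n : (N2 : ℝ) ≤ n := by exact_mod_cast hn2
  have hnC : 2 * C ^ 2 < (n : ℝ) :=
    lt_of_le_of_lt (le_max_left _ _) (lt_of_lt_of_le hN2 hN2n)
  have hnE : 8 * C ^ 2 / ε < (n : ℝ) :=
    lt_of_le_of_lt (le_max_right _ _) (lt_of_lt_of_le hN2 hN2n)
  have hnE' : 8 * C ^ 2 < (n : ℝ) * ε := by
    have := (div_lt_iff₀ hε).mp hnE
    linarith
  -- the set inclusion
  have hsub : {ω | ∃ i ∈ Finset.range n,
        ε ≤ (Z i ω - (∑ j ∈ Finset.range n, Z j ω) / n) ^ 2 /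
          ∑ j ∈ Finset.range n, (Z j ω - (∑ l ∈ Finset.range n, Z l ω) / n) ^ 2}
      ⊆ {ω | ∃ i ∈ Finset.range n,
        ε / 8 ≤ (Z i ω - μ) ^ 2 / ∑ j ∈ Finset.range n, (Z j ω - μ) ^ 2}
      ∪ {ω | C < |(∑ i ∈ Finset.range n, (Z i ω - μ)) /
        Real.sqrt (∑ i ∈ Finset.range n, (Z i ω - μ) ^ 2)|} := by
    intro ω hω
    by_cases hV : C < |(∑ i ∈ Finset.range n, (Z i ω - μ)) /
        Real.sqrt (∑ i ∈ Finset.range n, (Z i ω - μ) ^ 2)|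
    · exact Or.inr hV
    left
    by_contra hBc
    push_neg at hV
    simp only [Set.mem_setOf_eq, not_exists, not_le, not_and] at hBc
    obtain ⟨i, hi, hεi⟩ := hω
    set S := ∑ j ∈ Finset.range n, (Z j ω - μ) with hS
    set T := ∑ j ∈ Finset.range n, (Z j ω - μ) ^ 2 with hT
    have hTnn : 0 ≤ T := Finset.sum_nonneg fun j _ => sq_nonneg _
    have hsumZ : ∑ j ∈ Finset.range n, Z j ω = S + n * μ := by
      rw [hS, Finset.sum_sub_distrib, Finset.sum_const, Finset.card_range, nsmul_eq_mul]
      ring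
    have hmean : (∑ j ∈ Finset.range n, Z j ω) / n = μ + S / n := by
      rw [hsumZ]; field_simp; ring
    rcases eq_or_lt_of_le hTnn with hT0 | hT0
    · -- T = 0 : all Z j ω = μ on range n
      have hzero : ∀ j ∈ Finset.range n, (Z j ω - μ) ^ 2 = 0 := by
        intro j hj
        exact (Finset.sum_eq_zero_iff_of_nonneg fun j _ => sq_nonneg _).mp hT0.symm j hj
      have hZj : ∀ j ∈ Finset.range n, Z j ω = μ := by
        intro j hj
        have := hzero j hj
        nlinarith [this]
      have hS0 : S = 0 := Finset.sum_eq_zero fun j hj => by rw [hZj j hj]; ring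
      have : Z i ω - (∑ j ∈ Finset.range n, Z j ω) / n = 0 := by
        rw [hmean, hS0, hZj i hi]; ring
      rw [this] at hεi
      simp at hεi
      linarith
    -- T > 0
    have hsq : S ^ 2 ≤ C ^ 2 * T := by
      have hsqrt : (0 : ℝ) < Real.sqrt T := Real.sqrt_pos.mpr hT0
      have h1' : (|S / Real.sqrt T|) ^ 2 ≤ C ^ 2 :=
        pow_le_pow_left₀ (abs_nonneg _) hV 2
      rw [sq_abs, div_pow, Real.sq_sqrt hTnn] at h1'
      have := (div_le_iff₀ hT0).mp h1'
      linarith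
    -- bounds
    have hYi : (Z i ω - μ) ^ 2 < ε / 8 * T := by
      have := hBc i hi
      calc (Z i ω - μ) ^ 2 = (Z i ω - μ) ^ 2 / T * T := by field_simp
        _ < ε / 8 * T := by exact mul_lt_mul_of_pos_right this hT0
    have hSn2 : (S / n) ^ 2 ≤ ε / 8 * T := by
      have step1 : S ^ 2 / (n : ℝ) ^ 2 ≤ S ^ 2 / n := by
        apply div_le_div_of_nonneg_left (sq_nonneg _) hn0
        nlinarith
      have step2 : S ^ 2 / (n : ℝ) ≤ ε / 8 * T := by
        rw [div_le_iff₀ hn0]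
        nlinarith [mul_nonneg (sub_nonneg.mpr hnE'.le) hTnn]
      calc (S / n) ^ 2 = S ^ 2 / (n : ℝ) ^ 2 := by rw [div_pow]
        _ ≤ S ^ 2 / n := step1
        _ ≤ ε / 8 * T := step2
    have hDen : ∑ j ∈ Finset.range n, (Z j ω - (∑ l ∈ Finset.range n, Z l ω) / n) ^ 2
        = T - S ^ 2 / n := by
      have hterm : ∀ j, (Z j ω - (∑ l ∈ Finset.range n, Z l ω) / n) ^ 2
          = (Z j ω - μ) ^ 2 - 2 * S / n * (Z j ω - μ) + (S / n) ^ 2 := fun j => by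
        rw [hmean]; ring
      rw [Finset.sum_congr rfl fun j _ => hterm j, Finset.sum_add_distrib,
        Finset.sum_sub_distrib, ← Finset.mul_sum, ← hS, ← hT, Finset.sum_const,
        Finset.card_range, nsmul_eq_mul]
      field_simp
      ring
    have hDge : T / 2 ≤ T - S ^ 2 / n := by
      have : S ^ 2 / (n : ℝ) ≤ T / 2 := by
        rw [div_le_iff₀ hn0]
        nlinarith [mul_nonneg (sub_nonneg.mpr hnC.le) hTnn]
      linarith
    have hNum : (Z i ω - (∑ j ∈ Finset.range n, Z j ω) / n) ^ 2 < ε * (T / 2) := by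
      have hrw : Z i ω - (∑ j ∈ Finset.range n, Z j ω) / n = (Z i ω - μ) - S / n := by
        rw [hmean]; ring
      rw [hrw]
      nlinarith [sq_nonneg ((Z i ω - μ) + S / n)]
    have hfinal : (Z i ω - (∑ j ∈ Finset.range n, Z j ω) / n) ^ 2 /
        ∑ j ∈ Finset.range n, (Z j ω - (∑ l ∈ Finset.range n, Z l ω) / n) ^ 2 < ε := by
      rw [hDen]
      calc (Z i ω - (∑ j ∈ Finset.range n, Z j ω) / n) ^ 2 / (T - S ^ 2 / n)
          ≤ (Z i ω - (∑ j ∈ Finset.range n, Z j ω) / n) ^ 2 / (T / 2) := by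
            apply div_le_div_of_nonneg_left (sq_nonneg _) (by linarith) hDge
        _ < ε := by
            rw [div_lt_iff₀ (by linarith : (0:ℝ) < T / 2)]
            exact hNum
    exact absurd hεi (not_le.mpr hfinal)
  calc P {ω | ∃ i ∈ Finset.range n,
        ε ≤ (Z i ω - (∑ j ∈ Finset.range n, Z j ω) / n) ^ 2 /
          ∑ j ∈ Finset.range n, (Z j ω - (∑ l ∈ Finset.range n, Z l ω) / n) ^ 2}
      ≤ P ({ω | ∃ i ∈ Finset.range n,
        ε / 8 ≤ (Z i ω - μ) ^ 2 / ∑ j ∈ Finset.range n, (Z j ω - μ) ^ 2}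
      ∪ {ω | C < |(∑ i ∈ Finset.range n, (Z i ω - μ)) /
        Real.sqrt (∑ i ∈ Finset.range n, (Z i ω - μ) ^ 2)|}) := measure_mono hsub
    _ ≤ P {ω | ∃ i ∈ Finset.range n,
        ε / 8 ≤ (Z i ω - μ) ^ 2 / ∑ j ∈ Finset.range n, (Z j ω - μ) ^ 2}
      + P {ω | C < |(∑ i ∈ Finset.range n, (Z i ω - μ)) /
        Real.sqrt (∑ i ∈ Finset.range n, (Z i ω - μ) ^ 2)|} := measure_union_le _ _
    _ ≤ δ / 2 + δ / 2 := add_le_add (hN1 n hn1) (hCbound n)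
    _ = δ := ENNReal.add_halves δ
end
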